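/- arXiv:1708.01305 — 7 statements merged into one kernel-verified Lean document; each statement's English description precedes it below -/
import Mathlib

section
/- Let G be the direct product of complete graphs K_{n₁} × ⋯ × K_{n_t} with 2 ≤ n₁ ≤ n₂ ≤ ⋯ ≤ n_t and t ≥ 3. If m is a nonnegative integer such that (t+m)/(m+1) < n₁ and t + m < n₂, then the total domination number of G is at most t + m + 1. Moreover, the set {y_0, y_1, ..., y_{t+m}}, where y_r is the vertex whose i-th coordinate is r mod n_i, is a total dominating set. -/
/-- `D` is a dominating set of `G`. -/
def IsDomSet {V : Type*} (G : SimpleGraph V) (D : Set V) : Prop :=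
  ∀ v, v ∈ D ∨ ∃ d ∈ D, G.Adj v d

/-- `D` is a total dominating set of `G`. -/
def IsTotalDomSet {V : Type*} (G : SimpleGraph V) (D : Set V) : Prop :=
  ∀ v, ∃ d ∈ D, G.Adj v d

/-- `D` is a minimal dominating set of `G`. -/
def IsMinimalDomSet {V : Type*} (G : SimpleGraph V) (D : Set V) : Prop :=
  IsDomSet G D ∧ ∀ D' ⊂ D, ¬ IsDomSet G D'

/-- The domination number of `G`. -/
noncomputable def domNum {V : Type*} (G : SimpleGraph V) : ℕ :=
  sInf {k | ∃ D : Set V, IsDomSet G D ∧ D.ncard = k}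

/-- The total domination number of `G`. -/
noncomputable def totalDomNum {V : Type*} (G : SimpleGraph V) : ℕ :=
  sInf {k | ∃ D : Set V, IsTotalDomSet G D ∧ D.ncard = k}

/-- The upper domination number of `G`. -/
noncomputable def upperDomNum {V : Type*} (G : SimpleGraph V) : ℕ :=
  sSup {k | ∃ D : Set V, IsMinimalDomSet G D ∧ D.ncard = k}

/-- Jacobsthal's function. -/
noncomputable def jacobsthal (n : ℕ) : ℕ :=
  sInf {m | 0 < m ∧ ∀ x : ℤ, ∃ i : ℕ, i < m ∧ Int.gcd (x + i) n = 1}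

/-- The unitary Cayley graph of `ℤ/nℤ`. -/
def unitaryCayley (n : ℕ) : SimpleGraph (ZMod n) where
  Adj x y := x ≠ y ∧ IsUnit (x - y)
  symm := by
    constructor
    rintro x y ⟨h1, h2⟩
    exact ⟨h1.symm, by simpa [neg_sub] using h2.neg⟩
  loopless := by constructor; rintro x ⟨h, _⟩; exact h rfl

/-- The direct product of complete graphs `K_{n 0} × ⋯ × K_{n (t-1)}`. -/
def completeProd (t : ℕ) (n : Fin t → ℕ) : SimpleGraph (∀ i, ZMod (n i)) where
  Adj x y := x ≠ y ∧ ∀ i, x i ≠ y i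
  symm := by constructor; rintro x y ⟨h1, h2⟩; exact ⟨h1.symm, fun i => (h2 i).symm⟩
  loopless := by constructor; rintro x ⟨h, _⟩; exact h rfl

/-- The direct product of balanced complete multipartite graphs
`K[a 0, b 0] × ⋯ × K[a (t-1), b (t-1)]`, where `K[a,b]` has vertex set `ZMod (a*b)`
with `x ~ y` iff `x ≢ y (mod b)`. -/
def multipartiteProd (t : ℕ) (a b : Fin t → ℕ) :
    SimpleGraph (∀ i, ZMod (a i * b i)) where
  Adj x y := x ≠ y ∧ ∀ i, (x i).val % b i ≠ (y i).val % b i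
  symm := by constructor; rintro x y ⟨h1, h2⟩; exact ⟨h1.symm, fun i => (h2 i).symm⟩
  loopless := by constructor; rintro x ⟨h, _⟩; exact h rfl

/-- The direct (tensor) product of two graphs. -/
def directProd {V W : Type*} (G : SimpleGraph V) (H : SimpleGraph W) :
    SimpleGraph (V × W) where
  Adj x y := G.Adj x.1 y.1 ∧ H.Adj x.2 y.2
  symm := by constructor; rintro x y ⟨h1, h2⟩; exact ⟨h1.symm, h2.symm⟩
  loopless := by constructor; rintro x ⟨h, _⟩; exact G.loopless.irrefl _ h
set_option maxHeartbeats 1000000 in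
theorem stmt2 (t : ℕ) (ht : 3 ≤ t) (n : Fin t → ℕ) (hmono : Monotone n)
    (h1 : 2 ≤ n ⟨0, by omega⟩) (m : ℕ)
    (hm1 : t + m < n ⟨0, by omega⟩ * (m + 1))
    (hm2 : t + m < n ⟨1, by omega⟩) :
    IsTotalDomSet (completeProd t n)
      {y | ∃ r : ℕ, r ≤ t + m ∧ y = fun i => (r : ZMod (n i))} ∧
    totalDomNum (completeProd t n) ≤ t + m + 1 := by
  have ht0 : (0:ℕ) < t := by omega
  have h1t : (1:ℕ) < t := by omega
  let i0 : Fin t := ⟨0, ht0⟩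
  let i1 : Fin t := ⟨1, h1t⟩
  have hn0 : 2 ≤ n i0 := h1
  have hm1' : t + m < n i0 * (m + 1) := hm1
  have hm2' : t + m < n i1 := hm2
  have hnpos : ∀ i, 0 < n i := fun i =>
    lt_of_lt_of_le (by omega) (hmono (show i0 ≤ i by simp [i0, Fin.le_def]))
  have key : IsTotalDomSet (completeProd t n)
      {y | ∃ r : ℕ, r ≤ t + m ∧ y = fun i => (r : ZMod (n i))} := by
    intro v
    set N := t + m + 1 with hN
    set B : Finset ℕ :=
      (Finset.range N).filter (fun r => ∃ i, ((r : ZMod (n i)) = v i)) with hB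
    have hBcard : B.card < N := by
      have hsub : B ⊆ Finset.univ.biUnion
          (fun i : Fin t => (Finset.range N).filter (fun r : ℕ => (r : ZMod (n i)) = v i)) := by
        intro r hr
        simp only [hB, Finset.mem_filter, Finset.mem_range] at hr
        obtain ⟨hrN, i, hi⟩ := hr
        exact Finset.mem_biUnion.2 ⟨i, Finset.mem_univ _,
          Finset.mem_filter.2 ⟨Finset.mem_range.2 hrN, hi⟩⟩
      calc B.card
          ≤ ∑ i, ((Finset.range N).filter (fun r : ℕ => (r : ZMod (n i)) = v i)).card :=
            (Finset.card_le_card hsub).trans Finset.card_biUnion_le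
        _ ≤ ∑ i : Fin t, ((if i = i0 then m else 0) + 1) := by
            apply Finset.sum_le_sum
            intro i _
            by_cases hi : i = i0
            · subst hi
              simp only [if_pos rfl]
              have : ((Finset.range N).filter
                  (fun r : ℕ => (r : ZMod (n i0)) = v i0)).card ≤ (Finset.range (m+1)).card := by
                apply Finset.card_le_card_of_injOn (fun r => r / n i0)
                · intro r hr
                  simp only [Finset.mem_coe, Finset.mem_filter, Finset.mem_range] at hr ⊢
                  have hrlt : r < n i0 * (m + 1) := by omega
                  exact Nat.div_lt_of_lt_mul hrlt
                · intro r1 hr1 r2 hr2 hdiv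
                  simp only [Finset.coe_filter, Set.mem_setOf_eq, Finset.mem_range] at hr1 hr2
                  have hmod : r1 % n i0 = r2 % n i0 := by
                    have := hr1.2.trans hr2.2.symm
                    rwa [ZMod.natCast_eq_natCast_iff', ] at this
                  have e1 := Nat.div_add_mod r1 (n i0)
                  have e2 := Nat.div_add_mod r2 (n i0)
                  simp only at hdiv
                  have hmm : n i0 * (r1 / n i0) = n i0 * (r2 / n i0) := by rw [hdiv]
                  omega
              simpa using this
            · simp only [if_neg hi, Nat.zero_add]
              apply Finset.card_le_one.2
              intro r1 hr1 r2 hr2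
              simp only [Finset.mem_filter, Finset.mem_range] at hr1 hr2
              have hni : t + m < n i := by
                have : i1 ≤ i := by
                  have : i.val ≠ 0 := fun h => hi (Fin.ext (by simp [i0, h]))
                  simp [i1, Fin.le_def]; omega
                exact lt_of_lt_of_le hm2' (hmono this)
              have hmod : r1 % n i = r2 % n i := by
                have := hr1.2.trans hr2.2.symm
                rwa [ZMod.natCast_eq_natCast_iff'] at this
              rw [Nat.mod_eq_of_lt (by omega), Nat.mod_eq_of_lt (by omega)] at hmod
              exact hmod
        _ = m + t := by
            rw [Finset.sum_add_distrib]
            simp [Finset.sum_ite_eq', Finset.card_univ]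
        _ < N := by omega
    obtain ⟨r, hrN, hrB⟩ : ∃ r ∈ Finset.range N, r ∉ B := by
      by_contra hcon
      push_neg at hcon
      have hs2 : Finset.range N ⊆ B := fun r hr => hcon r hr
      have := Finset.card_le_card hs2
      rw [Finset.card_range] at this
      omega
    rw [Finset.mem_range] at hrN
    have hne : ∀ i, v i ≠ (r : ZMod (n i)) := by
      intro i hvi
      exact hrB (Finset.mem_filter.2 ⟨Finset.mem_range.2 hrN, ⟨i, hvi.symm⟩⟩)
    refine ⟨fun i => (r : ZMod (n i)), ⟨r, by omega, rfl⟩, ?_, hne⟩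
    intro h
    exact hne i0 (congrFun h i0)
  refine ⟨key, ?_⟩
  have hDcard : ({y | ∃ r : ℕ, r ≤ t + m ∧ y = fun i => (r : ZMod (n i))} :
      Set (∀ i, ZMod (n i))).ncard ≤ t + m + 1 := by
    have heq : ({y | ∃ r : ℕ, r ≤ t + m ∧ y = fun i => (r : ZMod (n i))} :
        Set (∀ i, ZMod (n i))) =
        (fun r : ℕ => fun i => (r : ZMod (n i))) '' ↑(Finset.range (t + m + 1)) := by
      ext y
      constructor
      · rintro ⟨r, hr, rfl⟩
        exact ⟨r, by simp; omega, rfl⟩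
      · rintro ⟨r, hr, rfl⟩
        simp only [Finset.coe_range, Set.mem_Iio] at hr
        exact ⟨r, by omega, rfl⟩
    rw [heq]
    calc ((fun r : ℕ => fun i => (r : ZMod (n i))) '' ↑(Finset.range (t + m + 1))).ncard
        ≤ (↑(Finset.range (t + m + 1)) : Set ℕ).ncard :=
          Set.ncard_image_le (Finset.range (t + m + 1)).finite_toSet
      _ = t + m + 1 := by rw [Set.ncard_coe_finset]; simp
  exact le_trans (Nat.sInf_le ⟨_, key, rfl⟩) hDcard
end

section
/- Let n = p₁^{α₁} p₂^{α₂} p₃^{α₃} where p₁ < p₂ < p₃ are primes and α₁, α₂, α₃ are positive integers with α_j ≥ 2 for some j. Then the domination number of the unitary Cayley graph X_n satisfies γ(X_n) ≥ 3p₁/(p₁-1). -/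
lemma key_bound (p₁ p₂ p₃ α₁ α₂ α₃ n : ℕ)
    (hp₁ : p₁.Prime) (hp₂ : p₂.Prime) (hp₃ : p₃.Prime)
    (h12 : p₁ < p₂) (h23 : p₂ < p₃)
    (hα₁ : 0 < α₁) (hα₂ : 0 < α₂) (hα₃ : 0 < α₃)
    (hα : 2 ≤ α₁ ∨ 2 ≤ α₂ ∨ 2 ≤ α₃)
    (hn : n = p₁ ^ α₁ * p₂ ^ α₂ * p₃ ^ α₃)
    (D : Set (ZMod n)) (hD : IsDomSet (unitaryCayley n) D) :
    3 * p₁ ≤ D.ncard * (p₁ - 1) := by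
  classical
  have hn0 : 0 < n := by
    rw [hn]
    exact Nat.mul_pos (Nat.mul_pos (pow_pos hp₁.pos _) (pow_pos hp₂.pos _)) (pow_pos hp₃.pos _)
  haveI : NeZero n := ⟨hn0.ne'⟩
  haveI : NeZero p₁ := ⟨hp₁.pos.ne'⟩
  haveI : Fact (1 < p₁) := ⟨hp₁.one_lt⟩
  haveI : Fact (1 < p₂) := ⟨hp₂.one_lt⟩
  haveI : Fact (1 < p₃) := ⟨hp₃.one_lt⟩
  set M := p₁ * (p₂ * p₃) with hM
  set m := p₁ ^ (α₁ - 1) * (p₂ ^ (α₂ - 1) * p₃ ^ (α₃ - 1)) with hm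
  have e₁ : p₁ ^ (α₁ - 1) * p₁ = p₁ ^ α₁ := by
    rw [← pow_succ, Nat.sub_add_cancel hα₁]
  have e₂ : p₂ ^ (α₂ - 1) * p₂ = p₂ ^ α₂ := by
    rw [← pow_succ, Nat.sub_add_cancel hα₂]
  have e₃ : p₃ ^ (α₃ - 1) * p₃ = p₃ ^ α₃ := by
    rw [← pow_succ, Nat.sub_add_cancel hα₃]
  have hnMm : n = M * m := by
    rw [hn, ← e₁, ← e₂, ← e₃, hM, hm]; ring
  have hmp : p₁ ≤ m := by
    rcases hα with h | h | h
    · calc p₁ = p₁ ^ 1 := (pow_one _).symm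
        _ ≤ p₁ ^ (α₁ - 1) := Nat.pow_le_pow_right hp₁.pos (by omega)
        _ ≤ m := Nat.le_mul_of_pos_right _ (Nat.mul_pos (pow_pos hp₂.pos _) (pow_pos hp₃.pos _))
    · calc p₁ ≤ p₂ := h12.le
        _ = p₂ ^ 1 := (pow_one _).symm
        _ ≤ p₂ ^ (α₂ - 1) := Nat.pow_le_pow_right hp₂.pos (by omega)
        _ ≤ p₂ ^ (α₂ - 1) * p₃ ^ (α₃ - 1) := Nat.le_mul_of_pos_right _ (pow_pos hp₃.pos _)
        _ ≤ m := Nat.le_mul_of_pos_left _ (pow_pos hp₁.pos _)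
    · calc p₁ ≤ p₃ := by omega
        _ = p₃ ^ 1 := (pow_one _).symm
        _ ≤ p₃ ^ (α₃ - 1) := Nat.pow_le_pow_right hp₃.pos (by omega)
        _ ≤ p₂ ^ (α₂ - 1) * p₃ ^ (α₃ - 1) := Nat.le_mul_of_pos_left _ (pow_pos hp₂.pos _)
        _ ≤ m := Nat.le_mul_of_pos_left _ (pow_pos hp₁.pos _)
  have h2p₁ : 2 ≤ p₁ := hp₁.two_le
  have hm2 : 2 ≤ m := le_trans hp₁.two_le hmp
  have hMn : M ∣ n := ⟨m, hnMm⟩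
  have c23 : Nat.Coprime p₂ p₃ := (Nat.coprime_primes hp₂ hp₃).mpr (by omega)
  have c1 : Nat.Coprime p₁ (p₂ * p₃) :=
    Nat.Coprime.mul_right ((Nat.coprime_primes hp₁ hp₂).mpr (by omega))
      ((Nat.coprime_primes hp₁ hp₃).mpr (by omega))
  set e : ZMod M ≃+* ZMod p₁ × (ZMod p₂ × ZMod p₃) :=
    (ZMod.chineseRemainder c1).trans
      (RingEquiv.prodCongr (RingEquiv.refl (ZMod p₁)) (ZMod.chineseRemainder c23)) with he
  set π : ZMod n →+* ZMod p₁ × (ZMod p₂ × ZMod p₃) :=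
    e.toRingHom.comp (ZMod.castHom hMn (ZMod M)) with hπ
  -- blocking lemma
  have hblock : ∀ x y : ZMod n,
      ((π x).1 = (π y).1 ∨ (π x).2.1 = (π y).2.1 ∨ (π x).2.2 = (π y).2.2) →
      ¬ IsUnit (x - y) := by
    intro x y hxy hu
    have hu' : IsUnit (π x - π y) := by
      have := hu.map π
      rwa [map_sub] at this
    rcases hxy with h | h | h
    · have h1 : IsUnit ((π x - π y).1) := hu'.map (RingHom.fst _ _)
      rw [Prod.fst_sub, h, sub_self] at h1
      exact not_isUnit_zero h1
    · have h1 : IsUnit ((π x - π y).2.1) :=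
        (hu'.map (RingHom.snd _ _)).map (RingHom.fst _ _)
      rw [Prod.snd_sub, Prod.fst_sub, h, sub_self] at h1
      exact not_isUnit_zero h1
    · have h1 : IsUnit ((π x - π y).2.2) :=
        (hu'.map (RingHom.snd _ _)).map (RingHom.snd _ _)
      rw [Prod.snd_sub, Prod.snd_sub, h, sub_self] at h1
      exact not_isUnit_zero h1
  have hMpos : 0 < M := Nat.mul_pos hp₁.pos (Nat.mul_pos hp₂.pos hp₃.pos)
  haveI : NeZero M := ⟨hMpos.ne'⟩
  -- fiber lemma
  have hfiber : ∀ t : ZMod p₁ × (ZMod p₂ × ZMod p₃),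
      m ≤ (Finset.univ.filter (fun x : ZMod n => π x = t)).card := by
    intro t
    set c : ZMod M := e.symm t with hc
    have hec : e c = t := e.apply_symm_apply t
    set x₀ : ZMod n := ((c.val : ℕ) : ZMod n) with hx₀
    have hcastx₀ : (ZMod.castHom hMn (ZMod M)) x₀ = c := by
      rw [hx₀, map_natCast]
      exact ZMod.natCast_rightInverse c
    have hkey : ∀ j : ℕ, π (x₀ + ((M * j : ℕ) : ZMod n)) = t := by
      intro j
      have hz : (ZMod.castHom hMn (ZMod M)) (((M * j : ℕ) : ZMod n)) = 0 := by
        rw [map_natCast]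
        push_cast
        rw [ZMod.natCast_self]
        ring
      rw [hπ]
      simp only [RingHom.comp_apply, map_add, hcastx₀, hz, map_zero, add_zero]
      exact hec
    have hinj : Set.InjOn (fun j : Fin m => x₀ + ((M * (j : ℕ) : ℕ) : ZMod n))
        ↑(Finset.univ : Finset (Fin m)) := by
      intro j₁ _ j₂ _ hj
      simp only at hj
      have h1 : ((M * (j₁ : ℕ) : ℕ) : ZMod n) = ((M * (j₂ : ℕ) : ℕ) : ZMod n) :=
        add_left_cancel hj
      have h2 := congrArg ZMod.val h1
      rw [ZMod.val_natCast_of_lt, ZMod.val_natCast_of_lt] at h2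
      · exact Fin.ext (Nat.eq_of_mul_eq_mul_left hMpos h2)
      · rw [hnMm]; exact (Nat.mul_lt_mul_left hMpos).mpr j₂.isLt
      · rw [hnMm]; exact (Nat.mul_lt_mul_left hMpos).mpr j₁.isLt
    have hsub : ∀ j : Fin m, x₀ + ((M * (j : ℕ) : ℕ) : ZMod n) ∈
        Finset.univ.filter (fun x : ZMod n => π x = t) :=
      fun j => Finset.mem_filter.mpr ⟨Finset.mem_univ _, hkey (j : ℕ)⟩
    have hcard := Finset.card_le_card_of_injOn
      (t := Finset.univ.filter (fun x : ZMod n => π x = t))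
      (fun j : Fin m => x₀ + ((M * (j : ℕ) : ℕ) : ZMod n)) (fun j _ => hsub j) hinj
    simpa using hcard
  -- main argument
  by_contra hcon
  push_neg at hcon
  set F : Finset (ZMod n) := Set.Finite.toFinset (Set.toFinite D) with hF
  have hmemF : ∀ x, x ∈ F ↔ x ∈ D := fun x => Set.Finite.mem_toFinset _
  set k := F.card with hkdef
  have hkD : D.ncard = k := Set.ncard_eq_toFinset_card D (Set.toFinite D)
  rw [hkD] at hcon
  -- k ≤ 2 * m + 1
  have hk2p : k ≤ 2 * p₁ + 1 := by
    by_contra h'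
    push_neg at h'
    obtain ⟨u, hu⟩ : ∃ u, p₁ = u + 2 := ⟨p₁ - 2, by have := hp₁.two_le; omega⟩
    have h1 : p₁ - 1 = u + 1 := by omega
    rw [h1, hu] at hcon
    rw [hu] at h'
    have h2 : (2 * (u + 2) + 2) * (u + 1) ≤ k * (u + 1) := Nat.mul_le_mul_right _ (by omega)
    nlinarith
  have hkm : k ≤ 2 * m + 1 := by omega
  -- pigeonhole
  have hpigeon : ∃ r : ZMod p₁, (F.filter (fun a => ¬ (π a).1 = r)).card ≤ 2 := by
    by_contra hno
    push_neg at hno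
    have hsum : k = ∑ r : ZMod p₁, (F.filter (fun a => (π a).1 = r)).card :=
      Finset.card_eq_sum_card_fiberwise (fun x _ => Finset.mem_univ _)
    have heach : ∀ r : ZMod p₁, (F.filter (fun a => (π a).1 = r)).card + 3 ≤ k := by
      intro r
      have hsp := Finset.card_filter_add_card_filter_not
        (s := F) (p := fun a => (π a).1 = r)
      have h3 : 2 < (F.filter (fun a => ¬ (π a).1 = r)).card := hno r
      omega
    have hle : k + 3 * p₁ ≤ p₁ * k := by
      calc k + 3 * p₁ = (∑ r : ZMod p₁, (F.filter (fun a => (π a).1 = r)).card) + 3 * p₁ := by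
            rw [← hsum]
        _ = ∑ r : ZMod p₁, ((F.filter (fun a => (π a).1 = r)).card + 3) := by
            rw [Finset.sum_add_distrib, Finset.sum_const, Finset.card_univ, ZMod.card,
              smul_eq_mul, mul_comm]
        _ ≤ ∑ _r : ZMod p₁, k := Finset.sum_le_sum (fun r _ => heach r)
        _ = p₁ * k := by rw [Finset.sum_const, Finset.card_univ, ZMod.card, smul_eq_mul]
    have hsplit : k * (p₁ - 1) + k = k * p₁ := by
      have : p₁ - 1 + 1 = p₁ := by have := hp₁.one_lt; omega
      calc k * (p₁ - 1) + k = k * ((p₁ - 1) + 1) := by ring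
        _ = k * p₁ := by rw [this]
    have hc : k * p₁ = p₁ * k := mul_comm _ _
    linarith
  obtain ⟨r, hLcard⟩ := hpigeon
  set L : Finset (ZMod n) := F.filter (fun a => ¬ (π a).1 = r) with hLdef
  set Fr : Finset (ZMod n) := F.filter (fun a => (π a).1 = r) with hFrdef
  have hsplitF : Fr.card + L.card = k :=
    Finset.card_filter_add_card_filter_not (s := F) (p := fun a => (π a).1 = r)
  -- embeddings of Fin 3
  have emblem : ∀ q : ℕ, 3 ≤ q → ∃ f : Fin 3 → ZMod q, Function.Injective f := by
    intro q hq
    haveI : NeZero q := ⟨by omega⟩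
    refine ⟨fun i => ((i : ℕ) : ZMod q), fun i j hij => ?_⟩
    have h2 := congrArg ZMod.val hij
    rw [ZMod.val_natCast_of_lt (lt_of_lt_of_le i.isLt hq),
      ZMod.val_natCast_of_lt (lt_of_lt_of_le j.isLt hq)] at h2
    exact Fin.ext h2
  obtain ⟨f₂, hf₂⟩ := emblem p₂ (by omega)
  obtain ⟨f₃, hf₃⟩ := emblem p₃ (by omega)
  -- construct the finset S of admissible targets
  obtain ⟨S, hSmem, hScard⟩ : ∃ S : Finset (ZMod p₁ × (ZMod p₂ × ZMod p₃)),
      (∀ t ∈ S, t.1 = r ∧ ∀ d ∈ L, (π d).2.1 = t.2.1 ∨ (π d).2.2 = t.2.2) ∧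
      Fr.card < S.card * m := by
    have h012 : L.card = 0 ∨ L.card = 1 ∨ L.card = 2 := by omega
    rcases h012 with h0 | h1 | h2
    · refine ⟨(Finset.univ : Finset (Fin 3)).image (fun i => (r, f₂ i, 0)), ?_, ?_⟩
      · intro t ht
        simp only [Finset.mem_image] at ht
        obtain ⟨i, _, rfl⟩ := ht
        refine ⟨rfl, fun d hd => ?_⟩
        rw [Finset.card_eq_zero] at h0
        rw [h0] at hd
        exact absurd hd (Finset.notMem_empty d)
      · rw [Finset.card_image_of_injective _ (fun i j hij => hf₂ (by
          simpa [Prod.ext_iff] using hij))]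
        simp only [Finset.card_univ, Fintype.card_fin]
        omega
    · obtain ⟨d, hLd⟩ := Finset.card_eq_one.mp h1
      refine ⟨(Finset.univ : Finset (Fin 3)).image (fun i => (r, (π d).2.1, f₃ i)), ?_, ?_⟩
      · intro t ht
        simp only [Finset.mem_image] at ht
        obtain ⟨i, _, rfl⟩ := ht
        refine ⟨rfl, fun d' hd' => ?_⟩
        rw [hLd, Finset.mem_singleton] at hd'
        subst hd'
        exact Or.inl rfl
      · rw [Finset.card_image_of_injective _ (fun i j hij => hf₃ (by
          simpa [Prod.ext_iff] using hij))]
        simp only [Finset.card_univ, Fintype.card_fin]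
        omega
    · obtain ⟨d₁, d₂, hd12, hLd⟩ := Finset.card_eq_two.mp h2
      by_cases hc2 : (π d₁).2.1 = (π d₂).2.1
      · refine ⟨(Finset.univ : Finset (Fin 3)).image (fun i => (r, (π d₁).2.1, f₃ i)), ?_, ?_⟩
        · intro t ht
          simp only [Finset.mem_image] at ht
          obtain ⟨i, _, rfl⟩ := ht
          refine ⟨rfl, fun d' hd' => ?_⟩
          rw [hLd, Finset.mem_insert, Finset.mem_singleton] at hd'
          rcases hd' with rfl | rfl
          · exact Or.inl rfl
          · exact Or.inl hc2.symm
        · rw [Finset.card_image_of_injective _ (fun i j hij => hf₃ (by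
            simpa [Prod.ext_iff] using hij))]
          simp only [Finset.card_univ, Fintype.card_fin]
          omega
      · by_cases hc3 : (π d₁).2.2 = (π d₂).2.2
        · refine ⟨(Finset.univ : Finset (Fin 3)).image (fun i => (r, f₂ i, (π d₁).2.2)), ?_, ?_⟩
          · intro t ht
            simp only [Finset.mem_image] at ht
            obtain ⟨i, _, rfl⟩ := ht
            refine ⟨rfl, fun d' hd' => ?_⟩
            rw [hLd, Finset.mem_insert, Finset.mem_singleton] at hd'
            rcases hd' with rfl | rfl
            · exact Or.inr rfl
            · exact Or.inr hc3.symm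
          · rw [Finset.card_image_of_injective _ (fun i j hij => hf₂ (by
              simpa [Prod.ext_iff] using hij))]
            simp only [Finset.card_univ, Fintype.card_fin]
            omega
        · refine ⟨{(r, (π d₁).2.1, (π d₂).2.2), (r, (π d₂).2.1, (π d₁).2.2)}, ?_, ?_⟩
          · intro t ht
            rw [Finset.mem_insert, Finset.mem_singleton] at ht
            rcases ht with rfl | rfl
            · refine ⟨rfl, fun d' hd' => ?_⟩
              rw [hLd, Finset.mem_insert, Finset.mem_singleton] at hd'
              rcases hd' with rfl | rfl
              · exact Or.inl rfl
              · exact Or.inr rfl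
            · refine ⟨rfl, fun d' hd' => ?_⟩
              rw [hLd, Finset.mem_insert, Finset.mem_singleton] at hd'
              rcases hd' with rfl | rfl
              · exact Or.inr rfl
              · exact Or.inl rfl
          · rw [Finset.card_insert_of_notMem (by
              simp only [Finset.mem_singleton, Prod.ext_iff]
              intro hh
              exact hc2 hh.2.1), Finset.card_singleton]
            omega
  -- find undominated vertex
  have hexv : ∃ t ∈ S, ∃ v : ZMod n, π v = t ∧ v ∉ F := by
    by_contra hno
    push_neg at hno
    set B : Finset (ZMod n) := Fr.filter (fun v => π v ∈ S) with hB
    have hBcard : B.card = ∑ t ∈ S, (B.filter (fun v => π v = t)).card :=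
      Finset.card_eq_sum_card_fiberwise (fun x hx => (Finset.mem_filter.mp hx).2)
    have hfibsub : ∀ t ∈ S,
        (Finset.univ.filter (fun x : ZMod n => π x = t)) ⊆ B.filter (fun v => π v = t) := by
      intro t ht x hx
      rw [Finset.mem_filter] at hx
      have hπx : π x = t := hx.2
      have hxF : x ∈ F := hno t ht x hπx
      have hxr : (π x).1 = r := by rw [hπx]; exact (hSmem t ht).1
      refine Finset.mem_filter.mpr ⟨Finset.mem_filter.mpr ⟨Finset.mem_filter.mpr ⟨hxF, hxr⟩, ?_⟩, hπx⟩
      rw [hπx]; exact ht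
    have hge : S.card * m ≤ B.card := by
      rw [hBcard]
      calc S.card * m = ∑ _t ∈ S, m := by rw [Finset.sum_const, smul_eq_mul, mul_comm]
        _ ≤ ∑ t ∈ S, (B.filter (fun v => π v = t)).card :=
          Finset.sum_le_sum (fun t ht =>
            le_trans (hfiber t) (Finset.card_le_card (hfibsub t ht)))
    have hBle : B.card ≤ Fr.card := Finset.card_le_card (Finset.filter_subset _ _)
    exact lt_irrefl _ (lt_of_le_of_lt (le_trans hge hBle) hScard)
  obtain ⟨t, htS, v, hπv, hvF⟩ := hexv
  obtain ⟨htr, htblock⟩ := hSmem t htS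
  rcases hD v with hvD | ⟨d, hdD, hadj⟩
  · exact hvF ((hmemF v).mpr hvD)
  · have hdF : d ∈ F := (hmemF d).mpr hdD
    have hnadj : ¬ IsUnit (v - d) := by
      by_cases hdr : (π d).1 = r
      · exact hblock v d (Or.inl (by rw [hπv, htr, hdr]))
      · have hdL : d ∈ L := Finset.mem_filter.mpr ⟨hdF, hdr⟩
        rcases htblock d hdL with h | h
        · exact hblock v d (Or.inr (Or.inl (by rw [hπv, ← h])))
        · exact hblock v d (Or.inr (Or.inr (by rw [hπv, ← h])))
    exact hnadj hadj.2

theorem stmt8 (p₁ p₂ p₃ α₁ α₂ α₃ n : ℕ)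
    (hp₁ : p₁.Prime) (hp₂ : p₂.Prime) (hp₃ : p₃.Prime)
    (h12 : p₁ < p₂) (h23 : p₂ < p₃)
    (hα₁ : 0 < α₁) (hα₂ : 0 < α₂) (hα₃ : 0 < α₃)
    (hα : 2 ≤ α₁ ∨ 2 ≤ α₂ ∨ 2 ≤ α₃)
    (hn : n = p₁ ^ α₁ * p₂ ^ α₂ * p₃ ^ α₃) :
    (3 * p₁ : ℝ) / (p₁ - 1) ≤ (domNum (unitaryCayley n) : ℝ) := by
  have hmem : domNum (unitaryCayley n) ∈
      {k | ∃ D : Set (ZMod n), IsDomSet (unitaryCayley n) D ∧ D.ncard = k} := by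
    apply Nat.sInf_mem
    exact ⟨(Set.univ : Set (ZMod n)).ncard, Set.univ, fun v => Or.inl trivial, rfl⟩
  obtain ⟨D, hD, hcard⟩ := hmem
  have key : 3 * p₁ ≤ domNum (unitaryCayley n) * (p₁ - 1) := by
    rw [← hcard]
    exact key_bound p₁ p₂ p₃ α₁ α₂ α₃ n hp₁ hp₂ hp₃ h12 h23 hα₁ hα₂ hα₃ hα hn D hD
  have hp2 : (2 : ℝ) ≤ (p₁ : ℝ) := by exact_mod_cast hp₁.two_le
  rw [div_le_iff₀ (by linarith)]
  calc (3 * (p₁ : ℝ)) = ((3 * p₁ : ℕ) : ℝ) := by push_cast; ring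
    _ ≤ ((domNum (unitaryCayley n) * (p₁ - 1) : ℕ) : ℝ) := Nat.cast_le.mpr key
    _ = (domNum (unitaryCayley n) : ℝ) * ((p₁ : ℝ) - 1) := by
        rw [Nat.cast_mul, Nat.cast_sub hp₁.one_le, Nat.cast_one]
end

section
/- If n has at most 3 distinct prime factors and n is not squarefree, then γ(X_n) = g(n), where X_n is the unitary Cayley graph of ℤ/nℤ and g is Jacobsthal's function. -/
namespace UCG
open Finset

open Finset

lemma not_isUnit_cast {n p : ℕ} (hn : 1 < n) (hp : p.Prime) (hpn : p ∣ n) :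
    ¬ IsUnit ((p : ℕ) : ZMod n) := by
  haveI : NeZero n := ⟨by omega⟩
  rw [ZMod.isUnit_iff_coprime]
  intro h
  have hd : p ∣ Nat.gcd p n := Nat.dvd_gcd dvd_rfl hpn
  rw [Nat.Coprime] at h
  rw [h] at hd
  exact hp.one_lt.ne' (Nat.dvd_one.mp hd)

lemma mem_of_blocked {n R : ℕ} (hn : 1 < n) (hR : R = ∏ p ∈ n.primeFactors, p)
    {D : Set (ZMod n)}
    (hD : IsDomSet (unitaryCayley n) D) (w : ℤ)
    (hw : ∀ d ∈ D, ∃ p ∈ n.primeFactors, (p : ℤ) ∣ (w - ((d.val : ℕ) : ℤ)))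
    (j : ℕ) : (((w + (R : ℤ) * j : ℤ)) : ZMod n) ∈ D := by
  haveI : NeZero n := ⟨by omega⟩
  subst hR
  rcases hD ((w + ((∏ p ∈ n.primeFactors, p : ℕ) : ℤ) * j : ℤ) : ZMod n) with h | ⟨d, hdD, hadj⟩
  · exact h
  obtain ⟨hne, hu⟩ := hadj
  obtain ⟨p, hpP, hpd⟩ := hw d hdD
  obtain ⟨hp, hpn, -⟩ := Nat.mem_primeFactors.mp hpP
  have hpR : (p:ℤ) ∣ ((∏ p ∈ n.primeFactors, p : ℕ):ℤ) := Int.natCast_dvd_natCast.mpr (Finset.dvd_prod_of_mem _ hpP)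
  have h2 : (p:ℤ) ∣ (w + ((∏ p ∈ n.primeFactors, p : ℕ):ℤ)*j - (d.val:ℤ)) := by
    have h3 := dvd_add hpd (hpR.mul_right (j:ℤ))
    convert h3 using 1; rfl; ring
  obtain ⟨c, hc⟩ := h2
  have hveq : ((w + ((∏ p ∈ n.primeFactors, p : ℕ):ℤ)*j : ℤ) : ZMod n) - d = ((p:ℕ) : ZMod n) * ((c:ℤ) : ZMod n) := by
    have h4 : (((w + ((∏ p ∈ n.primeFactors, p : ℕ):ℤ)*j - (d.val:ℤ)) : ℤ) : ZMod n) = ((w + ((∏ p ∈ n.primeFactors, p : ℕ):ℤ)*j : ℤ) : ZMod n) - d := by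
      push_cast [ZMod.natCast_val, ZMod.cast_id]
      ring
    rw [← h4, hc]; push_cast; ring
  rw [hveq] at hu
  exact absurd (isUnit_of_mul_isUnit_left hu) (not_isUnit_cast hn hp hpn)

lemma cast_ne {n p : ℕ} (hpn : p ∣ n) {u u' : ℤ}
    (h : ¬ (p:ℤ) ∣ (u - u')) : ((u : ℤ) : ZMod n) ≠ ((u' : ℤ) : ZMod n) := by
  intro he
  exact h (dvd_trans (Int.natCast_dvd_natCast.mpr hpn)
    ((ZMod.intCast_eq_intCast_iff _ _ _).mp he).symm.dvd)

lemma cast_inj_fiber {n R F : ℕ} (hRF : R * F = n) (hR : 0 < R)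
    (w : ℤ) {j j' : ℕ} (hj : j < F) (hj' : j' < F)
    (h : ((w + (R:ℤ) * j : ℤ) : ZMod n) = ((w + (R:ℤ) * j' : ℤ) : ZMod n)) : j = j' := by
  have hd : (n:ℤ) ∣ (R:ℤ) * ((j':ℤ) - j) := by
    have h1 := ((ZMod.intCast_eq_intCast_iff _ _ _).mp h).dvd
    convert h1 using 1; ring
  rw [← hRF] at hd
  push_cast at hd
  have h2 : (F:ℤ) ∣ ((j':ℤ) - j) := (mul_dvd_mul_iff_left (by exact_mod_cast hR.ne' : (R:ℤ) ≠ 0)).mp hd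
  have h3 : (j':ℤ) - j = 0 := Int.eq_zero_of_abs_lt_dvd h2 (by rw [abs_lt]; constructor <;> [push_cast; push_cast] <;> omega)
  omega

lemma ne_fiber {n p R : ℕ} (hpn : p ∣ n) (hpR : p ∣ R) {w w' : ℤ}
    (h : ¬ (p:ℤ) ∣ (w - w')) (j j' : ℕ) :
    ((w + (R:ℤ) * j : ℤ) : ZMod n) ≠ ((w' + (R:ℤ) * j' : ℤ) : ZMod n) := by
  apply cast_ne hpn
  intro hd
  apply h
  have h1 : (p:ℤ) ∣ ((R:ℤ)*j - (R:ℤ)*j') := by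
    have := (Int.natCast_dvd_natCast.mpr hpR)
    exact dvd_sub (this.mul_right _) (this.mul_right _)
  have h2 := dvd_sub hd h1
  convert h2 using 1; rfl; ring

lemma res_of_eq {n p R : ℕ} (hn : 1 < n) (hpn : p ∣ n) (hpR : p ∣ R) {w : ℤ} {j : ℕ} {x : ZMod n}
    (h : ((w + (R:ℤ) * j : ℤ) : ZMod n) = x) : (p:ℤ) ∣ (w - ((x.val : ℕ) : ℤ)) := by
  haveI : NeZero n := ⟨by omega⟩
  have hx : x = (((x.val : ℕ) : ℤ) : ZMod n) := by
    push_cast; rw [ZMod.natCast_val, ZMod.cast_id]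
  rw [hx] at h
  have h1 : (n:ℤ) ∣ ((x.val:ℤ) - (w + (R:ℤ)*j)) := ((ZMod.intCast_eq_intCast_iff _ _ _).mp h).dvd
  have hpZ := Int.natCast_dvd_natCast.mpr hpn
  have hpRZ := Int.natCast_dvd_natCast.mpr hpR
  have h2 : (p:ℤ) ∣ ((x.val:ℤ) - (w + (R:ℤ)*j)) := dvd_trans hpZ h1
  have h3 := dvd_add h2 (hpRZ.mul_right (j:ℤ))
  have h4 : (p:ℤ) ∣ -(w - (x.val:ℤ)) := by convert h3 using 1; rfl; ring
  exact (dvd_neg).mp h4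


open Finset

lemma length_le_ncard {α : Type*} {D : Set α} (hfin : D.Finite) {l : List α}
    (hl : l.Nodup) (hmem : ∀ x ∈ l, x ∈ D) : l.length ≤ D.ncard := by
  classical
  have h1 : (l.toFinset : Set α) ⊆ D := by intro x hx; exact hmem x (by simpa using hx)
  have h2 := Set.ncard_le_ncard h1 hfin
  rwa [Set.ncard_coe_finset, List.toFinset_card_of_nodup hl] at h2

lemma exists_enum {α : Type*} {D : Set α} (hfin : D.Finite) {k : ℕ} (h : D.ncard = k) :
    ∃ d : Fin k → α, Function.Injective d ∧ ∀ x, x ∈ D ↔ ∃ i, d i = x := by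
  haveI := hfin.fintype
  have hc : Fintype.card D = k := by
    rw [← Nat.card_eq_fintype_card, Nat.card_coe_set_eq, h]
  have e := Fintype.equivFinOfCardEq hc
  refine ⟨fun i => (e.symm i : α), ?_, ?_⟩
  · intro i j hij
    exact e.symm.injective (Subtype.coe_injective hij)
  · intro x
    constructor
    · intro hx; exact ⟨e ⟨x, hx⟩, by simp⟩
    · rintro ⟨i, rfl⟩; exact (e.symm i).2

lemma crt2 {p q : ℤ} (h : IsCoprime p q) (a b : ℤ) :
    ∃ w : ℤ, p ∣ w - a ∧ q ∣ w - b := by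
  obtain ⟨u, v, huv⟩ := h
  refine ⟨a*v*q + b*u*p, ⟨(b - a)*u, by linear_combination a*huv⟩,
    ⟨(a - b)*v, by linear_combination b*huv⟩⟩

lemma crt3 {p q r : ℤ} (hpq : IsCoprime p q) (hpr : IsCoprime p r) (hqr : IsCoprime q r)
    (a b c : ℤ) : ∃ w : ℤ, p ∣ w - a ∧ q ∣ w - b ∧ r ∣ w - c := by
  obtain ⟨w0, h1, h2⟩ := crt2 hpq a b
  obtain ⟨w, h3, h4⟩ := crt2 (IsCoprime.mul_left hpr hqr) w0 c
  have hp : p ∣ w - a := by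
    have := dvd_add (dvd_trans (dvd_mul_right p q) h3) h1
    rwa [sub_add_sub_cancel] at this
  have hq : q ∣ w - b := by
    have := dvd_add (dvd_trans (dvd_mul_left q p) h3) h2
    rwa [sub_add_sub_cancel] at this
  exact ⟨w, hp, hq, h4⟩

lemma coprime_of_primes {p q : ℕ} (hp : p.Prime) (hq : q.Prime) (h : p ≠ q) :
    IsCoprime (p:ℤ) (q:ℤ) := by
  rw [Int.isCoprime_iff_gcd_eq_one, Int.gcd_natCast_natCast]
  exact (Nat.coprime_primes hp hq).mpr h

lemma f_two_le {n : ℕ} (hn : 0 < n) (hsq : ¬ Squarefree n) :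
    2 ≤ n / (∏ p ∈ n.primeFactors, p) := by
  set R := ∏ p ∈ n.primeFactors, p with hR
  have hdvd : R ∣ n := Nat.prod_primeFactors_dvd n
  have hR0 : 0 < R :=
    Finset.prod_pos (fun p hp => (Nat.prime_of_mem_primeFactors hp).pos)
  by_contra hlt
  push_neg at hlt
  have h1 : n / R = 1 := by
    have h0 : 0 < n / R := Nat.div_pos (Nat.le_of_dvd hn hdvd) hR0
    omega
  have hnR : n = R := by
    have h2 := Nat.mul_div_cancel' hdvd
    rw [h1, mul_one] at h2
    omega
  apply hsq
  rw [hnR, Nat.squarefree_iff_factorization_le_one (by omega)]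
  intro p
  rw [hR, Nat.factorization_prod (fun q hq => (Nat.prime_of_mem_primeFactors hq).pos.ne')]
  rw [Finsupp.finset_sum_apply]
  have hcong : ∀ x ∈ n.primeFactors, x.factorization p = if x = p then 1 else 0 := by
    intro x hx
    rw [(Nat.prime_of_mem_primeFactors hx).factorization, Finsupp.single_apply]
  rw [Finset.sum_congr rfl hcong, Finset.sum_ite_eq' n.primeFactors p (fun _ => 1)]
  split <;> omega

lemma f_ge {n m : ℕ} (hn : 0 < n) (hf2 : 2 ≤ n / (∏ p ∈ n.primeFactors, p))
    (hmin : ∀ p ∈ n.primeFactors, m ≤ p) :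
    m ≤ n / (∏ p ∈ n.primeFactors, p) := by
  set F := n / (∏ p ∈ n.primeFactors, p) with hF
  have hFdvd : F ∣ n := Nat.div_dvd_of_dvd (Nat.prod_primeFactors_dvd n)
  have hp := Nat.minFac_prime (show F ≠ 1 by omega)
  have hmem : F.minFac ∈ n.primeFactors :=
    Nat.mem_primeFactors.mpr ⟨hp, (Nat.minFac_dvd F).trans hFdvd, by omega⟩
  exact le_trans (hmin _ hmem) (Nat.minFac_le (by omega))

lemma gcd_eq_one_of {n : ℕ} (hn : 0 < n) {y : ℤ}
    (h : ∀ p ∈ n.primeFactors, ¬ (p:ℤ) ∣ y) : Int.gcd y n = 1 := by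
  by_contra hg
  set g := Int.gcd y (n:ℤ) with hgdef
  have hgn : (g:ℤ) ∣ (n:ℤ) := Int.gcd_dvd_right _ _
  have hgy : (g:ℤ) ∣ y := Int.gcd_dvd_left _ _
  have hg0 : g ≠ 0 := by
    intro h0
    have := Int.gcd_eq_zero_iff.mp (hgdef ▸ h0)
    simp at this
    omega
  have hp := Nat.minFac_prime hg
  refine h g.minFac (Nat.mem_primeFactors.mpr ⟨hp, ?_, by omega⟩) ?_
  · exact Nat.dvd_trans (Nat.minFac_dvd g) (Int.natCast_dvd_natCast.mp hgn)
  · exact dvd_trans (Int.natCast_dvd_natCast.mpr (Nat.minFac_dvd g)) hgy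

lemma not_both {p : ℕ} {x : ℤ} {i j : ℕ} (hij : i < j)
    (h1 : (p:ℤ) ∣ x + i) (h2 : (p:ℤ) ∣ x + j) (hnd : ¬ p ∣ (j - i)) : False := by
  apply hnd
  have h3 : (p:ℤ) ∣ ((j - i : ℕ) : ℤ) := by
    have h4 := dvd_sub h2 h1
    have h5 : (x + j) - (x + i) = ((j - i : ℕ) : ℤ) := by push_cast [Nat.cast_sub hij.le]; ring
    rwa [h5] at h4
  exact_mod_cast h3

lemma prime_ge_five {p : ℕ} (hp : p.Prime) (h2 : p ≠ 2) (h3 : p ≠ 3) : 5 ≤ p := by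
  by_contra h
  push_neg at h
  have := hp.two_le
  interval_cases p
  · exact h2 rfl
  · exact h3 rfl
  · norm_num at hp

lemma not_dvd_two {q : ℕ} (hq : q.Prime) (h2 : q ≠ 2) : ¬ q ∣ 2 := by
  intro h
  have := Nat.le_of_dvd (by norm_num) h
  have := hq.two_le
  omega

lemma not_dvd_four {q : ℕ} (hq : q.Prime) (h2 : q ≠ 2) : ¬ q ∣ 4 := by
  intro h
  have h4 : q ∣ 2 * 2 := by norm_num at h ⊢; exact h
  rcases (Nat.Prime.dvd_mul hq).mp h4 with h' | h' <;> exact not_dvd_two hq h2 h'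


lemma nodup2 {α : Type*} {a b : α} (h : a ≠ b) : [a, b].Nodup := by simp [h]
lemma nodup3 {α : Type*} {a b c : α} (h1 : a ≠ b) (h2 : a ≠ c) (h3 : b ≠ c) :
    [a, b, c].Nodup := by simp [h1, h2, h3]
lemma nodup4 {α : Type*} {a b c d : α} (h1 : a ≠ b) (h2 : a ≠ c) (h3 : a ≠ d)
    (h4 : b ≠ c) (h5 : b ≠ d) (h6 : c ≠ d) : [a, b, c, d].Nodup := by
  simp [h1, h2, h3, h4, h5, h6]
lemma nodup6 {α : Type*} {a b c d e f : α} (h1 : a ≠ b) (h2 : a ≠ c) (h3 : a ≠ d)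
    (h4 : a ≠ e) (h5 : a ≠ f) (h6 : b ≠ c) (h7 : b ≠ d) (h8 : b ≠ e) (h9 : b ≠ f)
    (h10 : c ≠ d) (h11 : c ≠ e) (h12 : c ≠ f) (h13 : d ≠ e) (h14 : d ≠ f) (h15 : e ≠ f) :
    [a, b, c, d, e, f].Nodup := by
  simp [h1, h2, h3, h4, h5, h6, h7, h8, h9, h10, h11, h12, h13, h14, h15]
lemma dvd_of_res_eq {p a b : ℕ} (h : (a : ZMod p) = (b : ZMod p)) :
    (p:ℤ) ∣ (b:ℤ) - (a:ℤ) :=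
  (Nat.modEq_iff_dvd).mp ((ZMod.natCast_eq_natCast_iff a b p).mp h)

lemma res_eq_of_dvd {p a b : ℕ} (h : (p:ℤ) ∣ (b:ℤ) - (a:ℤ)) :
    (a : ZMod p) = (b : ZMod p) :=
  (ZMod.natCast_eq_natCast_iff a b p).mpr ((Nat.modEq_iff_dvd).mpr h)

lemma cross_ne {r : ℕ} {w w' c c' : ℤ} (h1 : (r:ℤ) ∣ w - c) (h2 : (r:ℤ) ∣ w' - c')
    (hcc : c ≠ c') (hsmall : |c - c'| < (r:ℤ)) : ¬ (r:ℤ) ∣ (w - w') := by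
  intro h
  have h3 : (r:ℤ) ∣ (c - c') := by
    have h4 := dvd_sub h (dvd_sub h1 h2)
    have h5 : w - w' - (w - c - (w' - c')) = c - c' := by ring
    rwa [h5] at h4
  have := Int.eq_zero_of_abs_lt_dvd h3 hsmall
  exact hcc (by omega)
-- window lemmas
lemma key_of_not {n : ℕ} (hn : 0 < n) {x : ℤ} {V : ℕ}
    (h : ∀ i : ℕ, i < V → ¬ Int.gcd (x + i) n = 1) :
    ∀ i : ℕ, i < V → ∃ p' ∈ n.primeFactors, (p':ℤ) ∣ x + i := by
  intro i hi
  by_contra hno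
  push_neg at hno
  exact h i hi (gcd_eq_one_of hn hno)

lemma window1 {n p : ℕ} (hn : 0 < n) (hPF : n.primeFactors = {p}) (hp : p.Prime) (x : ℤ) :
    ∃ i : ℕ, i < 2 ∧ Int.gcd (x + i) n = 1 := by
  by_contra hc
  push_neg at hc
  have key := key_of_not hn (fun i hi => hc i hi)
  obtain ⟨p0, hm0, hd0⟩ := key 0 (by norm_num)
  obtain ⟨p1, hm1, hd1⟩ := key 1 (by norm_num)
  simp [hPF] at hm0 hm1
  subst hm0; subst hm1
  exact not_both (by norm_num) hd0 hd1 (by simpa [Nat.dvd_one] using hp.ne_one)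

lemma window2odd {n p q : ℕ} (hn : 0 < n) (hPF : n.primeFactors = {p, q})
    (hp : p.Prime) (hq : q.Prime) (hp3 : 3 ≤ p) (hq3 : 3 ≤ q) (x : ℤ) :
    ∃ i : ℕ, i < 3 ∧ Int.gcd (x + i) n = 1 := by
  by_contra hc
  push_neg at hc
  have key := key_of_not hn (fun i hi => hc i hi)
  have hpd1 : ¬ p ∣ 1 := by simpa [Nat.dvd_one] using hp.ne_one
  have hqd1 : ¬ q ∣ 1 := by simpa [Nat.dvd_one] using hq.ne_one
  have hpd2 : ¬ p ∣ 2 := fun h => by have := Nat.le_of_dvd (by norm_num) h; omega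
  have hqd2 : ¬ q ∣ 2 := fun h => by have := Nat.le_of_dvd (by norm_num) h; omega
  obtain ⟨p0, hm0, hd0⟩ := key 0 (by norm_num)
  obtain ⟨p1, hm1, hd1⟩ := key 1 (by norm_num)
  obtain ⟨p2, hm2, hd2⟩ := key 2 (by norm_num)
  simp [hPF, Finset.mem_insert] at hm0 hm1 hm2
  rcases hm0 with rfl | rfl <;> rcases hm1 with rfl | rfl <;> rcases hm2 with rfl | rfl
  · exact not_both (show (0:ℕ) < 1 by norm_num) hd0 hd1 hpd1
  · exact not_both (show (0:ℕ) < 1 by norm_num) hd0 hd1 hpd1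
  · exact not_both (show (0:ℕ) < 2 by norm_num) hd0 hd2 hpd2
  · exact not_both (show (1:ℕ) < 2 by norm_num) hd1 hd2 hqd1
  · exact not_both (show (1:ℕ) < 2 by norm_num) hd1 hd2 hpd1
  · exact not_both (show (0:ℕ) < 2 by norm_num) hd0 hd2 hqd2
  · exact not_both (show (0:ℕ) < 1 by norm_num) hd0 hd1 hqd1
  · exact not_both (show (0:ℕ) < 1 by norm_num) hd0 hd1 hqd1

lemma window2even {n q : ℕ} (hn : 0 < n) (hPF : n.primeFactors = {2, q})
    (hq : q.Prime) (hq2 : q ≠ 2) (x : ℤ) :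
    ∃ i : ℕ, i < 4 ∧ Int.gcd (x + i) n = 1 := by
  by_contra hc
  push_neg at hc
  have key := key_of_not hn (fun i hi => hc i hi)
  have hqd2 : ¬ q ∣ 2 := not_dvd_two hq hq2
  rcases Int.even_or_odd x with ⟨k, hk⟩ | ⟨k, hk⟩
  · have h2x : (2:ℤ) ∣ x := ⟨k, by omega⟩
    obtain ⟨p1, hm1, hd1⟩ := key 1 (by norm_num)
    obtain ⟨p3, hm3, hd3⟩ := key 3 (by norm_num)
    simp [hPF, Finset.mem_insert] at hm1 hm3
    rcases hm1 with rfl | rfl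
    · have h := dvd_sub hd1 h2x
      norm_num at h
    · rcases hm3 with rfl | rfl
      · have h := dvd_sub hd3 h2x
        norm_num at h
      · exact not_both (show (1:ℕ) < 3 by norm_num) hd1 hd3 hqd2
  · have h2x : (2:ℤ) ∣ x + 1 := ⟨k + 1, by omega⟩
    obtain ⟨p0, hm0, hd0⟩ := key 0 (by norm_num)
    obtain ⟨p2, hm2, hd2⟩ := key 2 (by norm_num)
    simp [hPF, Finset.mem_insert] at hm0 hm2
    rcases hm0 with rfl | rfl
    · have h := dvd_sub h2x hd0
      norm_num at h
    · rcases hm2 with rfl | rfl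
      · have h := dvd_sub hd2 h2x
        norm_num at h
      · exact not_both (show (0:ℕ) < 2 by norm_num) hd0 hd2 hqd2
lemma window3big {n p q r : ℕ} (hn : 0 < n) (hPF : n.primeFactors = {p, q, r})
    (hp5 : 5 ≤ p) (hq5 : 5 ≤ q) (hr5 : 5 ≤ r) (x : ℤ) :
    ∃ i : ℕ, i < 4 ∧ Int.gcd (x + i) n = 1 := by
  by_contra hc
  push_neg at hc
  have key := key_of_not hn (fun i hi => hc i hi)
  have F : ∀ i : Fin 4, ∃ p', p' ∈ ({p, q, r} : Finset ℕ) ∧ (p':ℤ) ∣ x + (i:ℕ) := by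
    intro i
    obtain ⟨p', hm, hd⟩ := key i.val i.isLt
    exact ⟨p', hPF ▸ hm, hd⟩
  have hcard : ({p, q, r} : Finset ℕ).card < (Finset.univ : Finset (Fin 4)).card := by
    have h1 : ({p, q, r} : Finset ℕ).card ≤ 3 := by
      apply le_trans (Finset.card_insert_le _ _)
      have := Finset.card_insert_le q ({r} : Finset ℕ)
      simp at this ⊢
      omega
    simp
    omega
  choose f hf1 hf2 using F
  obtain ⟨i, -, j, -, hij, hfeq⟩ := Finset.exists_ne_map_eq_of_card_lt_of_maps_to hcard
    (fun i _ => hf1 i)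
  have hdi := hf2 i
  have hdj := hf2 j
  rw [hfeq] at hdi
  have hmem := hf1 j
  have h5 : 5 ≤ f j := by
    simp [Finset.mem_insert] at hmem
    rcases hmem with h | h | h <;> rw [h] <;> assumption
  have hij' : i.val ≠ j.val := fun h => hij (Fin.ext h)
  have hlt4 : i.val < 4 := i.isLt
  have hlt4' : j.val < 4 := j.isLt
  rcases Nat.lt_or_ge i.val j.val with hlt | hge
  · exact not_both hlt hdi hdj (fun h => by have := Nat.le_of_dvd (by omega) h; omega)
  · have hlt : j.val < i.val := by omega
    exact not_both hlt hdj hdi (fun h => by have := Nat.le_of_dvd (by omega) h; omega)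

lemma window3mid {n q r : ℕ} (hn : 0 < n) (hPF : n.primeFactors = {3, q, r})
    (hq5 : 5 ≤ q) (hr5 : 5 ≤ r) (x : ℤ) :
    ∃ i : ℕ, i < 5 ∧ Int.gcd (x + i) n = 1 := by
  classical
  by_contra hc
  push_neg at hc
  have key := key_of_not hn (fun i hi => hc i hi)
  set B3 := (Finset.range 5).filter (fun i : ℕ => (3:ℤ) ∣ x + (i:ℤ)) with hB3def
  set Bq := (Finset.range 5).filter (fun i : ℕ => (q:ℤ) ∣ x + (i:ℤ)) with hBqdef
  set Br := (Finset.range 5).filter (fun i : ℕ => (r:ℤ) ∣ x + (i:ℤ)) with hBrdef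
  have cover : Finset.range 5 ⊆ B3 ∪ Bq ∪ Br := by
    intro i hi
    obtain ⟨p', hm, hd⟩ := key i (Finset.mem_range.mp hi)
    rw [hPF] at hm
    simp [Finset.mem_insert] at hm
    rcases hm with rfl | rfl | rfl
    · exact Finset.mem_union_left _ (Finset.mem_union_left _ (Finset.mem_filter.mpr ⟨hi, hd⟩))
    · exact Finset.mem_union_left _ (Finset.mem_union_right _ (Finset.mem_filter.mpr ⟨hi, hd⟩))
    · exact Finset.mem_union_right _ (Finset.mem_filter.mpr ⟨hi, hd⟩)
  have small : ∀ s : ℕ, 5 ≤ s → ∀ (B : Finset ℕ), B = (Finset.range 5).filter (fun i : ℕ => (s:ℤ) ∣ x + (i:ℤ)) → B.card ≤ 1 := by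
    intro s hs B hB
    rw [Finset.card_le_one]
    intro i hi j hj
    rw [hB, Finset.mem_filter, Finset.mem_range] at hi hj
    have hd : (s:ℤ) ∣ ((j:ℤ) - i) := by
      have h := dvd_sub hj.2 hi.2
      rwa [add_sub_add_left_eq_sub] at h
    have hd2 : s ∣ ((j:ℤ) - i).natAbs := by
      have := Int.natAbs_dvd_natAbs.mpr hd
      rwa [Int.natAbs_natCast] at this
    have : ((j:ℤ) - i).natAbs = 0 ∨ s ≤ ((j:ℤ) - i).natAbs := by
      rcases Nat.eq_zero_or_pos (((j:ℤ) - i).natAbs) with h0 | hpos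
      · exact Or.inl h0
      · exact Or.inr (Nat.le_of_dvd hpos hd2)
    omega
  have hBq : Bq.card ≤ 1 := small q hq5 Bq hBqdef
  have hBr : Br.card ≤ 1 := small r hr5 Br hBrdef
  have hB3 : B3.card ≤ 2 := by
    by_contra h
    push_neg at h
    obtain ⟨s, hs, hcard3⟩ := Finset.exists_subset_card_eq (show 3 ≤ B3.card by omega)
    obtain ⟨i, j, k, hij, hik, hjk, rfl⟩ := Finset.card_eq_three.mp hcard3
    have hi := hs (Finset.mem_insert_self i {j, k})
    have hj := hs (Finset.mem_insert_of_mem (Finset.mem_insert_self j {k}))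
    have hk := hs (Finset.mem_insert_of_mem (Finset.mem_insert_of_mem (Finset.mem_singleton_self k)))
    rw [hB3def, Finset.mem_filter, Finset.mem_range] at hi hj hk
    have d1 : (3:ℤ) ∣ ((j:ℤ) - i) := by
      have h' := dvd_sub hj.2 hi.2; rwa [add_sub_add_left_eq_sub] at h'
    have d2 : (3:ℤ) ∣ ((k:ℤ) - i) := by
      have h' := dvd_sub hk.2 hi.2; rwa [add_sub_add_left_eq_sub] at h'
    have hi5 := hi.1; have hj5 := hj.1; have hk5 := hk.1
    omega
  have hfinal := Finset.card_le_card cover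
  have hu1 := Finset.card_union_le B3 (Bq ∪ Br)
  have hu2 := Finset.card_union_le Bq Br
  simp [Finset.card_range] at hfinal
  omega

lemma window3even {n q r : ℕ} (hn : 0 < n) (hPF : n.primeFactors = {2, q, r})
    (hq : q.Prime) (hr : r.Prime) (hq2 : q ≠ 2) (hr2 : r ≠ 2) (x : ℤ) :
    ∃ i : ℕ, i < 6 ∧ Int.gcd (x + i) n = 1 := by
  by_contra hc
  push_neg at hc
  have key := key_of_not hn (fun i hi => hc i hi)
  have hqd2 : ¬ q ∣ 2 := not_dvd_two hq hq2
  have hrd2 : ¬ r ∣ 2 := not_dvd_two hr hr2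
  have hqd4 : ¬ q ∣ 4 := not_dvd_four hq hq2
  have hrd4 : ¬ r ∣ 4 := not_dvd_four hr hr2
  rcases Int.even_or_odd x with ⟨k, hk⟩ | ⟨k, hk⟩
  · have h2x : (2:ℤ) ∣ x := ⟨k, by omega⟩
    obtain ⟨p1, hm1, hd1⟩ := key 1 (by norm_num)
    obtain ⟨p3, hm3, hd3⟩ := key 3 (by norm_num)
    obtain ⟨p5, hm5, hd5⟩ := key 5 (by norm_num)
    simp [hPF, Finset.mem_insert] at hm1 hm3 hm5
    rcases hm1 with rfl | rfl | rfl
    · have h := dvd_sub hd1 h2x; norm_num at h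
    · rcases hm3 with rfl | rfl | rfl
      · have h := dvd_sub hd3 h2x; norm_num at h
      · exact not_both (show (1:ℕ) < 3 by norm_num) hd1 hd3 hqd2
      · rcases hm5 with rfl | rfl | rfl
        · have h := dvd_sub hd5 h2x; norm_num at h
        · exact not_both (show (1:ℕ) < 5 by norm_num) hd1 hd5 hqd4
        · exact not_both (show (3:ℕ) < 5 by norm_num) hd3 hd5 hrd2
    · rcases hm3 with rfl | rfl | rfl
      · have h := dvd_sub hd3 h2x; norm_num at h
      · rcases hm5 with rfl | rfl | rfl
        · have h := dvd_sub hd5 h2x; norm_num at h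
        · exact not_both (show (3:ℕ) < 5 by norm_num) hd3 hd5 hqd2
        · exact not_both (show (1:ℕ) < 5 by norm_num) hd1 hd5 hrd4
      · exact not_both (show (1:ℕ) < 3 by norm_num) hd1 hd3 hrd2
  · have h2x : (2:ℤ) ∣ x + 1 := ⟨k + 1, by omega⟩
    obtain ⟨p0, hm0, hd0⟩ := key 0 (by norm_num)
    obtain ⟨p2, hm2, hd2⟩ := key 2 (by norm_num)
    obtain ⟨p4, hm4, hd4⟩ := key 4 (by norm_num)
    simp [hPF, Finset.mem_insert] at hm0 hm2 hm4
    rcases hm0 with rfl | rfl | rfl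
    · have h := dvd_sub h2x hd0; norm_num at h
    · rcases hm2 with rfl | rfl | rfl
      · have h := dvd_sub hd2 h2x; norm_num at h
      · exact not_both (show (0:ℕ) < 2 by norm_num) hd0 hd2 hqd2
      · rcases hm4 with rfl | rfl | rfl
        · have h := dvd_sub hd4 h2x; norm_num at h
        · exact not_both (show (0:ℕ) < 4 by norm_num) hd0 hd4 hqd4
        · exact not_both (show (2:ℕ) < 4 by norm_num) hd2 hd4 hrd2
    · rcases hm2 with rfl | rfl | rfl
      · have h := dvd_sub hd2 h2x; norm_num at h
      · rcases hm4 with rfl | rfl | rfl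
        · have h := dvd_sub hd4 h2x; norm_num at h
        · exact not_both (show (2:ℕ) < 4 by norm_num) hd2 hd4 hqd2
        · exact not_both (show (0:ℕ) < 4 by norm_num) hd0 hd4 hrd4
      · exact not_both (show (0:ℕ) < 2 by norm_num) hd0 hd2 hrd2
-- core lemmas : no small dominating sets
lemma core1 {n p : ℕ} (hn : 1 < n) (hPF : n.primeFactors = {p})
    (hf2 : 2 ≤ n / (∏ p ∈ n.primeFactors, p))
    {D : Set (ZMod n)} (hD : IsDomSet (unitaryCayley n) D) (hcard : D.ncard = 1) : False := by
  haveI : NeZero n := ⟨by omega⟩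
  obtain ⟨R, hRdef⟩ : ∃ R', R' = ∏ p ∈ n.primeFactors, p := ⟨_, rfl⟩
  obtain ⟨F, hFdef⟩ : ∃ F', F' = n / R := ⟨_, rfl⟩
  have hRdvd : R ∣ n := hRdef ▸ Nat.prod_primeFactors_dvd n
  have hR0 : 0 < R := hRdef ▸ Finset.prod_pos (fun s hs => (Nat.prime_of_mem_primeFactors hs).pos)
  have hRF : R * F = n := by rw [hFdef]; exact Nat.mul_div_cancel' hRdvd
  have hF2 : 2 ≤ F := by rw [hFdef, hRdef]; exact hf2
  obtain ⟨d, hdinj, hdmem⟩ := exists_enum (Set.toFinite D) hcard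
  obtain ⟨w, hwdef⟩ : ∃ w' : ℤ, w' = ((d 0).val : ℤ) := ⟨_, rfl⟩
  have hpmem : p ∈ n.primeFactors := by rw [hPF]; exact Finset.mem_singleton_self p
  have hw : ∀ x ∈ D, ∃ p' ∈ n.primeFactors, (p':ℤ) ∣ (w - ((x.val : ℕ) : ℤ)) := by
    intro x hx
    obtain ⟨i, rfl⟩ := (hdmem x).mp hx
    have hi0 : i = 0 := Subsingleton.elim i 0
    subst hi0
    exact ⟨p, hpmem, by rw [hwdef, sub_self]; exact dvd_zero _⟩
  obtain ⟨v, hvdef⟩ : ∃ v' : ℕ → ZMod n, v' = fun j : ℕ => ((w + (R:ℤ) * j : ℤ) : ZMod n) :=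
    ⟨_, rfl⟩
  have hv : ∀ j : ℕ, v j ∈ D := by
    intro j; rw [hvdef]; exact mem_of_blocked hn hRdef hD w hw j
  have hne : ∀ j j' : ℕ, j < F → j' < F → j ≠ j' → v j ≠ v j' := by
    intro j j' hj hj' hjj h
    rw [hvdef] at h
    exact hjj (cast_inj_fiber hRF hR0 w hj hj' h)
  have hlen := length_le_ncard (Set.toFinite D) (l := [v 0, v 1])
    (nodup2 (hne 0 1 (by omega) (by omega) (by omega)))
    (by intro x hx; simp at hx; rcases hx with rfl | rfl <;> exact hv _)
  rw [hcard] at hlen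
  simp at hlen

lemma core2odd {n p q : ℕ} (hn : 1 < n) (hPF : n.primeFactors = {p, q})
    (hp : p.Prime) (hq : q.Prime) (hpq : p ≠ q) (hp3 : 3 ≤ p) (hq3 : 3 ≤ q)
    (hf2 : 2 ≤ n / (∏ p ∈ n.primeFactors, p))
    {D : Set (ZMod n)} (hD : IsDomSet (unitaryCayley n) D) (hcard : D.ncard = 2) : False := by
  haveI : NeZero n := ⟨by omega⟩
  obtain ⟨R, hRdef⟩ : ∃ R', R' = ∏ p ∈ n.primeFactors, p := ⟨_, rfl⟩
  obtain ⟨F, hFdef⟩ : ∃ F', F' = n / R := ⟨_, rfl⟩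
  have hRdvd : R ∣ n := hRdef ▸ Nat.prod_primeFactors_dvd n
  have hR0 : 0 < R := hRdef ▸ Finset.prod_pos (fun s hs => (Nat.prime_of_mem_primeFactors hs).pos)
  have hRF : R * F = n := by rw [hFdef]; exact Nat.mul_div_cancel' hRdvd
  have hF3 : 3 ≤ F := by
    rw [hFdef, hRdef]
    refine f_ge (by omega) hf2 ?_
    intro s hs
    rw [hPF] at hs
    simp [Finset.mem_insert] at hs
    rcases hs with rfl | rfl <;> assumption
  obtain ⟨d, hdinj, hdmem⟩ := exists_enum (Set.toFinite D) hcard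
  obtain ⟨w, hw0, hw1⟩ := crt2 (coprime_of_primes hp hq hpq) ((d 0).val : ℤ) ((d 1).val : ℤ)
  have hpmem : p ∈ n.primeFactors := by rw [hPF]; simp
  have hqmem : q ∈ n.primeFactors := by rw [hPF]; simp
  have hw : ∀ x ∈ D, ∃ p' ∈ n.primeFactors, (p':ℤ) ∣ (w - ((x.val : ℕ) : ℤ)) := by
    intro x hx
    obtain ⟨i, rfl⟩ := (hdmem x).mp hx
    fin_cases i
    · exact ⟨p, hpmem, hw0⟩
    · exact ⟨q, hqmem, hw1⟩
  obtain ⟨v, hvdef⟩ : ∃ v' : ℕ → ZMod n, v' = fun j : ℕ => ((w + (R:ℤ) * j : ℤ) : ZMod n) :=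
    ⟨_, rfl⟩
  have hv : ∀ j : ℕ, v j ∈ D := by
    intro j; rw [hvdef]; exact mem_of_blocked hn hRdef hD w hw j
  have hne : ∀ j j' : ℕ, j < F → j' < F → j ≠ j' → v j ≠ v j' := by
    intro j j' hj hj' hjj h
    rw [hvdef] at h
    exact hjj (cast_inj_fiber hRF hR0 w hj hj' h)
  have hlen := length_le_ncard (Set.toFinite D) (l := [v 0, v 1, v 2])
    (nodup3 (hne 0 1 (by omega) (by omega) (by omega))
      (hne 0 2 (by omega) (by omega) (by omega))
      (hne 1 2 (by omega) (by omega) (by omega)))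
    (by intro x hx; simp at hx; rcases hx with rfl | rfl | rfl <;> exact hv _)
  rw [hcard] at hlen
  simp at hlen

lemma core3big {n p q r : ℕ} (hn : 1 < n) (hPF : n.primeFactors = {p, q, r})
    (hp : p.Prime) (hq : q.Prime) (hr : r.Prime)
    (hpq : p ≠ q) (hpr : p ≠ r) (hqr : q ≠ r)
    (hp5 : 5 ≤ p) (hq5 : 5 ≤ q) (hr5 : 5 ≤ r)
    (hf2 : 2 ≤ n / (∏ p ∈ n.primeFactors, p))
    {D : Set (ZMod n)} (hD : IsDomSet (unitaryCayley n) D) (hcard : D.ncard = 3) : False := by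
  haveI : NeZero n := ⟨by omega⟩
  obtain ⟨R, hRdef⟩ : ∃ R', R' = ∏ p ∈ n.primeFactors, p := ⟨_, rfl⟩
  obtain ⟨F, hFdef⟩ : ∃ F', F' = n / R := ⟨_, rfl⟩
  have hRdvd : R ∣ n := hRdef ▸ Nat.prod_primeFactors_dvd n
  have hR0 : 0 < R := hRdef ▸ Finset.prod_pos (fun s hs => (Nat.prime_of_mem_primeFactors hs).pos)
  have hRF : R * F = n := by rw [hFdef]; exact Nat.mul_div_cancel' hRdvd
  have hF5 : 5 ≤ F := by
    rw [hFdef, hRdef]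
    refine f_ge (by omega) hf2 ?_
    intro s hs
    rw [hPF] at hs
    simp [Finset.mem_insert] at hs
    rcases hs with rfl | rfl | rfl <;> assumption
  obtain ⟨d, hdinj, hdmem⟩ := exists_enum (Set.toFinite D) hcard
  obtain ⟨w, hw0, hw1, hw2⟩ := crt3 (coprime_of_primes hp hq hpq) (coprime_of_primes hp hr hpr)
    (coprime_of_primes hq hr hqr) ((d 0).val : ℤ) ((d 1).val : ℤ) ((d 2).val : ℤ)
  have hpmem : p ∈ n.primeFactors := by rw [hPF]; simp
  have hqmem : q ∈ n.primeFactors := by rw [hPF]; simp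
  have hrmem : r ∈ n.primeFactors := by rw [hPF]; simp
  have hw : ∀ x ∈ D, ∃ p' ∈ n.primeFactors, (p':ℤ) ∣ (w - ((x.val : ℕ) : ℤ)) := by
    intro x hx
    obtain ⟨i, rfl⟩ := (hdmem x).mp hx
    fin_cases i
    · exact ⟨p, hpmem, hw0⟩
    · exact ⟨q, hqmem, hw1⟩
    · exact ⟨r, hrmem, hw2⟩
  obtain ⟨v, hvdef⟩ : ∃ v' : ℕ → ZMod n, v' = fun j : ℕ => ((w + (R:ℤ) * j : ℤ) : ZMod n) :=
    ⟨_, rfl⟩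
  have hv : ∀ j : ℕ, v j ∈ D := by
    intro j; rw [hvdef]; exact mem_of_blocked hn hRdef hD w hw j
  have hne : ∀ j j' : ℕ, j < F → j' < F → j ≠ j' → v j ≠ v j' := by
    intro j j' hj hj' hjj h
    rw [hvdef] at h
    exact hjj (cast_inj_fiber hRF hR0 w hj hj' h)
  have hlen := length_le_ncard (Set.toFinite D) (l := [v 0, v 1, v 2, v 3])
    (nodup4 (hne 0 1 (by omega) (by omega) (by omega))
      (hne 0 2 (by omega) (by omega) (by omega))
      (hne 0 3 (by omega) (by omega) (by omega))
      (hne 1 2 (by omega) (by omega) (by omega))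
      (hne 1 3 (by omega) (by omega) (by omega))
      (hne 2 3 (by omega) (by omega) (by omega)))
    (by intro x hx; simp at hx; rcases hx with rfl | rfl | rfl | rfl <;> exact hv _)
  rw [hcard] at hlen
  simp at hlen
lemma core2even {n q : ℕ} (hn : 1 < n) (hPF : n.primeFactors = {2, q})
    (hq : q.Prime) (hq2 : q ≠ 2)
    (hf2 : 2 ≤ n / (∏ p ∈ n.primeFactors, p))
    {D : Set (ZMod n)} (hD : IsDomSet (unitaryCayley n) D) (hcard : D.ncard = 3) : False := by
  classical
  haveI : NeZero n := ⟨by omega⟩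
  obtain ⟨R, hRdef⟩ : ∃ R', R' = ∏ p ∈ n.primeFactors, p := ⟨_, rfl⟩
  obtain ⟨F, hFdef⟩ : ∃ F', F' = n / R := ⟨_, rfl⟩
  have hRdvd : R ∣ n := hRdef ▸ Nat.prod_primeFactors_dvd n
  have hR0 : 0 < R := hRdef ▸ Finset.prod_pos (fun s hs => (Nat.prime_of_mem_primeFactors hs).pos)
  have hRF : R * F = n := by rw [hFdef]; exact Nat.mul_div_cancel' hRdvd
  have hF2 : 2 ≤ F := by rw [hFdef, hRdef]; exact hf2
  have h2mem : 2 ∈ n.primeFactors := by rw [hPF]; simp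
  have hqmem : q ∈ n.primeFactors := by rw [hPF]; simp
  have h2n : 2 ∣ n := Nat.dvd_of_mem_primeFactors h2mem
  have hqn : q ∣ n := Nat.dvd_of_mem_primeFactors hqmem
  have h2R : 2 ∣ R := hRdef ▸ Finset.dvd_prod_of_mem _ h2mem
  have hqR : q ∣ R := hRdef ▸ Finset.dvd_prod_of_mem _ hqmem
  have hq3 : 3 ≤ q := by have := hq.two_le; omega
  have hcop : IsCoprime ((2:ℕ):ℤ) ((q:ℕ):ℤ) := coprime_of_primes Nat.prime_two hq (Ne.symm hq2)
  obtain ⟨d, hdinj, hdmem⟩ := exists_enum (Set.toFinite D) hcard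
  obtain ⟨ψ, hψdef⟩ : ∃ ψ' : Fin 3 → ZMod 2, ψ' = fun i => (((d i).val : ℕ) : ZMod 2) := ⟨_, rfl⟩
  have hpar : ∀ i j, ψ i = ψ j → (2:ℤ) ∣ (((d i).val : ℕ) : ℤ) - (((d j).val : ℕ) : ℤ) := by
    intro i j h
    rw [hψdef] at h
    exact dvd_sub_comm.mp (dvd_of_res_eq h)
  have hpar' : ∀ i j, (2:ℤ) ∣ (((d i).val : ℕ) : ℤ) - (((d j).val : ℕ) : ℤ) → ψ i = ψ j := by
    intro i j h
    have h' : (((d i).val : ℕ) : ZMod 2) = (((d j).val : ℕ) : ZMod 2) :=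
      res_eq_of_dvd (dvd_sub_comm.mp h)
    rw [hψdef]
    exact h'
  -- pigeonhole: two indices with equal parity
  have hcard2 : (Finset.univ : Finset (ZMod 2)).card < (Finset.univ : Finset (Fin 3)).card := by
    simp [ZMod.card]
  obtain ⟨x1, -, x2, -, hx12, hψeq⟩ := Finset.exists_ne_map_eq_of_card_lt_of_maps_to hcard2
    (fun i _ => Finset.mem_univ (ψ i))
  -- the third index
  have hYcard : ((Finset.univ : Finset (Fin 3)) \ {x1, x2}).card = 1 := by
    rw [Finset.card_sdiff_of_subset (Finset.subset_univ _)]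
    rw [Finset.card_pair hx12]
    simp
  obtain ⟨y, hy⟩ := Finset.card_eq_one.mp hYcard
  have hyx1 : y ≠ x1 := by
    have : y ∈ (Finset.univ : Finset (Fin 3)) \ {x1, x2} := by rw [hy]; simp
    simp at this
    exact this.1
  have hyx2 : y ≠ x2 := by
    have : y ∈ (Finset.univ : Finset (Fin 3)) \ {x1, x2} := by rw [hy]; simp
    simp at this
    exact this.2
  have htri : ∀ i : Fin 3, i = x1 ∨ i = x2 ∨ i = y := by
    intro i
    by_cases h1 : i = x1
    · exact Or.inl h1
    by_cases h2 : i = x2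
    · exact Or.inr (Or.inl h2)
    have : i ∈ (Finset.univ : Finset (Fin 3)) \ {x1, x2} := by simp [h1, h2]
    rw [hy] at this
    simp at this
    exact Or.inr (Or.inr this)
  obtain ⟨V, hVdef⟩ : ∃ V' : ℤ → ℕ → ZMod n, V' = fun (w : ℤ) (j : ℕ) => ((w + (R:ℤ) * (j:ℕ) : ℤ) : ZMod n) :=
    ⟨_, rfl⟩
  have hVmem : ∀ w : ℤ, (∀ x ∈ D, ∃ p' ∈ n.primeFactors, (p':ℤ) ∣ (w - ((x.val : ℕ) : ℤ))) →
      ∀ j : ℕ, V w j ∈ D := by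
    intro w hw j; rw [hVdef]; exact mem_of_blocked hn hRdef hD w hw j
  have hVnes : ∀ (w : ℤ) (j j' : ℕ), j < F → j' < F → j ≠ j' → V w j ≠ V w j' := by
    intro w j j' hj hj' hjj h
    rw [hVdef] at h
    exact hjj (cast_inj_fiber hRF hR0 w hj hj' h)
  have hVnec : ∀ (p' : ℕ), p' ∣ n → p' ∣ R → ∀ (w w' : ℤ), ¬ (p':ℤ) ∣ (w - w') →
      ∀ j j', V w j ≠ V w' j' := by
    intro p' hp'n hp'R w w' hnd j j'
    rw [hVdef]
    exact ne_fiber hp'n hp'R hnd j j'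
  have hVres : ∀ (p' : ℕ), p' ∣ n → p' ∣ R → ∀ (w : ℤ) (j : ℕ) (x : ZMod n), V w j = x →
      (p':ℤ) ∣ (w - ((x.val : ℕ) : ℤ)) := by
    intro p' hp'n hp'R w j x h
    rw [hVdef] at h
    exact res_of_eq hn hp'n hp'R h
  by_cases hA : ψ y = ψ x1
  · -- all three have the same parity
    have hall : ∀ i, ψ i = ψ x1 := by
      intro i
      rcases htri i with rfl | rfl | rfl
      · rfl
      · exact hψeq.symm
      · exact hA
    obtain ⟨w0, hw02, hw0q⟩ := crt2 hcop (((d x1).val : ℕ) : ℤ) 0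
    obtain ⟨w1, hw12, hw1q⟩ := crt2 hcop (((d x1).val : ℕ) : ℤ) 1
    have hblocked : ∀ w : ℤ, (2:ℤ) ∣ (w - (((d x1).val : ℕ) : ℤ)) →
        ∀ x ∈ D, ∃ p' ∈ n.primeFactors, (p':ℤ) ∣ (w - ((x.val : ℕ) : ℤ)) := by
      intro w hw2 x hx
      obtain ⟨i, rfl⟩ := (hdmem x).mp hx
      refine ⟨2, h2mem, ?_⟩
      have h5 := dvd_add hw2 (hpar x1 i (hall i).symm)
      have h6 : w - (((d x1).val : ℕ) : ℤ) + ((((d x1).val : ℕ) : ℤ) - (((d i).val : ℕ) : ℤ))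
          = w - (((d i).val : ℕ) : ℤ) := by ring
      rwa [h6] at h5
    have hm0 := hVmem w0 (hblocked w0 hw02)
    have hm1 := hVmem w1 (hblocked w1 hw12)
    have hqnot : ¬ (q:ℤ) ∣ (w0 - w1) := by
      apply cross_ne hw0q hw1q (by norm_num)
      rw [show (0:ℤ) - 1 = -1 by ring, abs_neg, abs_one]
      exact_mod_cast (by omega : 1 < q)
    have hlen := length_le_ncard (Set.toFinite D) (l := [V w0 0, V w0 1, V w1 0, V w1 1])
      (nodup4 (hVnes w0 0 1 (by omega) (by omega) (by omega))
        (hVnec q hqn hqR w0 w1 hqnot 0 0) (hVnec q hqn hqR w0 w1 hqnot 0 1)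
        (hVnec q hqn hqR w0 w1 hqnot 1 0) (hVnec q hqn hqR w0 w1 hqnot 1 1)
        (hVnes w1 0 1 (by omega) (by omega) (by omega)))
      (by intro x hx; simp at hx; rcases hx with rfl | rfl | rfl | rfl <;> [exact hm0 0;
          exact hm0 1; exact hm1 0; exact hm1 1])
    rw [hcard] at hlen
    simp at hlen
  · -- y has different parity from x1 (and x2)
    have hBy2 : ¬ (2:ℤ) ∣ (((d x1).val : ℕ) : ℤ) - (((d y).val : ℕ) : ℤ) := by
      intro h
      exact hA ((hpar' y x1 (dvd_sub_comm.mp h)).symm).symm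
    obtain ⟨w1, hw12, hw1q⟩ := crt2 hcop (((d x1).val : ℕ) : ℤ) (((d y).val : ℕ) : ℤ)
    have hblocked1 : ∀ x ∈ D, ∃ p' ∈ n.primeFactors, (p':ℤ) ∣ (w1 - ((x.val : ℕ) : ℤ)) := by
      intro x hx
      obtain ⟨i, rfl⟩ := (hdmem x).mp hx
      rcases htri i with hi | hi | hi <;> rw [hi]
      · exact ⟨2, h2mem, hw12⟩
      · refine ⟨2, h2mem, ?_⟩
        have h5 := dvd_add hw12 (hpar x1 x2 hψeq)
        have h6 : w1 - (((d x1).val : ℕ) : ℤ) +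
            ((((d x1).val : ℕ) : ℤ) - (((d x2).val : ℕ) : ℤ)) = w1 - (((d x2).val : ℕ) : ℤ) := by
          ring
        rwa [h6] at h5
      · exact ⟨q, hqmem, hw1q⟩
    have hm1 := hVmem w1 hblocked1
    have hV01 : V w1 0 ≠ V w1 1 := hVnes w1 0 1 (by omega) (by omega) (by omega)
    obtain ⟨i0, hi0⟩ := (hdmem (V w1 0)).mp (hm1 0)
    obtain ⟨i1, hi1⟩ := (hdmem (V w1 1)).mp (hm1 1)
    have hres0 := hVres 2 h2n h2R w1 0 _ hi0.symm
    have hres1 := hVres 2 h2n h2R w1 1 _ hi1.symm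
    have hq0 := hVres q hqn hqR w1 0 _ hi0.symm
    have hq1 := hVres q hqn hqR w1 1 _ hi1.symm
    have hnoty : ∀ i : Fin 3, (2:ℤ) ∣ (w1 - (((d i).val : ℕ) : ℤ)) → i ≠ y := by
      intro i h2i hiy
      subst hiy
      apply hBy2
      have h5 := dvd_sub hw12 h2i
      have h6 : w1 - (((d x1).val : ℕ) : ℤ) - (w1 - (((d i).val : ℕ) : ℤ))
          = (((d i).val : ℕ) : ℤ) - (((d x1).val : ℕ) : ℤ) := by ring
      rw [h6] at h5
      exact dvd_sub_comm.mp h5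
    have hi0y := hnoty i0 hres0
    have hi1y := hnoty i1 hres1
    have hi01 : i0 ≠ i1 := by
      intro h
      rw [h, hi1] at hi0
      exact hV01 hi0.symm
    -- hence {i0, i1} = {x1, x2} and q divides w1 - a x1 and w1 - a x2
    have hqx : (q:ℤ) ∣ (w1 - (((d x1).val : ℕ) : ℤ)) ∧
        (q:ℤ) ∣ (w1 - (((d x2).val : ℕ) : ℤ)) := by
      rcases htri i0 with h0 | h0 | h0
      · rcases htri i1 with h1 | h1 | h1
        · exact absurd (h0.trans h1.symm) hi01
        · rw [h0] at hq0; rw [h1] at hq1; exact ⟨hq0, hq1⟩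
        · exact absurd h1 hi1y
      · rcases htri i1 with h1 | h1 | h1
        · rw [h1] at hq1; rw [h0] at hq0; exact ⟨hq1, hq0⟩
        · exact absurd (h0.trans h1.symm) hi01
        · exact absurd h1 hi1y
      · exact absurd h0 hi0y
    -- second blocked vertex
    obtain ⟨w2, hw22, hw2q⟩ := crt2 hcop (((d y).val : ℕ) : ℤ) (((d x1).val : ℕ) : ℤ)
    have hblocked2 : ∀ x ∈ D, ∃ p' ∈ n.primeFactors, (p':ℤ) ∣ (w2 - ((x.val : ℕ) : ℤ)) := by
      intro x hx
      obtain ⟨i, rfl⟩ := (hdmem x).mp hx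
      rcases htri i with hi | hi | hi <;> rw [hi]
      · exact ⟨q, hqmem, hw2q⟩
      · refine ⟨q, hqmem, ?_⟩
        have h5 := dvd_sub (dvd_add hw2q hqx.2) hqx.1
        have h6 : w2 - (((d x1).val : ℕ) : ℤ) + (w1 - (((d x2).val : ℕ) : ℤ)) -
            (w1 - (((d x1).val : ℕ) : ℤ)) = w2 - (((d x2).val : ℕ) : ℤ) := by ring
        rwa [h6] at h5
      · exact ⟨2, h2mem, hw22⟩
    have hm2 := hVmem w2 hblocked2
    have hV01' : V w2 0 ≠ V w2 1 := hVnes w2 0 1 (by omega) (by omega) (by omega)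
    obtain ⟨j0, hj0⟩ := (hdmem (V w2 0)).mp (hm2 0)
    obtain ⟨j1, hj1⟩ := (hdmem (V w2 1)).mp (hm2 1)
    have hres0' := hVres 2 h2n h2R w2 0 _ hj0.symm
    have hres1' := hVres 2 h2n h2R w2 1 _ hj1.symm
    have hnotx : ∀ i : Fin 3, (2:ℤ) ∣ (w2 - (((d i).val : ℕ) : ℤ)) → i = y := by
      intro i h2i
      rcases htri i with hi | hi | hi
      · exfalso
        rw [hi] at h2i
        apply hBy2
        have h5 := dvd_sub h2i hw22
        have h6 : w2 - (((d x1).val : ℕ) : ℤ) - (w2 - (((d y).val : ℕ) : ℤ))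
            = (((d y).val : ℕ) : ℤ) - (((d x1).val : ℕ) : ℤ) := by ring
        rw [h6] at h5
        exact dvd_sub_comm.mp h5
      · exfalso
        rw [hi] at h2i
        apply hBy2
        have h7 := dvd_sub (dvd_add h2i (hpar x2 x1 hψeq.symm)) hw22
        have h8 : w2 - (((d x2).val : ℕ) : ℤ) + ((((d x2).val : ℕ) : ℤ) - (((d x1).val : ℕ) : ℤ))
            - (w2 - (((d y).val : ℕ) : ℤ))
            = (((d y).val : ℕ) : ℤ) - (((d x1).val : ℕ) : ℤ) := by ring
        rw [h8] at h7
        exact dvd_sub_comm.mp h7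
      · exact hi
    have hj0y := hnotx j0 hres0'
    have hj1y := hnotx j1 hres1'
    apply hV01'
    rw [← hj0, ← hj1, hj0y, hj1y]
lemma fibers2x3 {n R F : ℕ} (hn : 1 < n) (hRdef : R = ∏ p ∈ n.primeFactors, p)
    (hRF : R * F = n) (hR0 : 0 < R) (hF3 : 3 ≤ F) {D : Set (ZMod n)}
    (hD : IsDomSet (unitaryCayley n) D) {p' : ℕ} (hp'n : p' ∣ n) (hp'R : p' ∣ R)
    {w0 w1 : ℤ}
    (hb0 : ∀ x ∈ D, ∃ p'' ∈ n.primeFactors, (p'':ℤ) ∣ (w0 - ((x.val : ℕ) : ℤ)))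
    (hb1 : ∀ x ∈ D, ∃ p'' ∈ n.primeFactors, (p'':ℤ) ∣ (w1 - ((x.val : ℕ) : ℤ)))
    (hcross : ¬ (p':ℤ) ∣ (w0 - w1)) : 6 ≤ D.ncard := by
  haveI : NeZero n := ⟨by omega⟩
  obtain ⟨V, hVdef⟩ : ∃ V' : ℤ → ℕ → ZMod n,
      V' = fun (w : ℤ) (j : ℕ) => ((w + (R:ℤ) * (j:ℕ) : ℤ) : ZMod n) := ⟨_, rfl⟩
  have hVmem : ∀ w : ℤ, (∀ x ∈ D, ∃ p'' ∈ n.primeFactors, (p'':ℤ) ∣ (w - ((x.val : ℕ) : ℤ))) →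
      ∀ j : ℕ, V w j ∈ D := by
    intro w hw j; rw [hVdef]; exact mem_of_blocked hn hRdef hD w hw j
  have hVnes : ∀ (w : ℤ) (j j' : ℕ), j < F → j' < F → j ≠ j' → V w j ≠ V w j' := by
    intro w j j' hj hj' hjj h
    rw [hVdef] at h
    exact hjj (cast_inj_fiber hRF hR0 w hj hj' h)
  have hVnec : ∀ (w w' : ℤ), ¬ (p':ℤ) ∣ (w - w') → ∀ j j', V w j ≠ V w' j' := by
    intro w w' hnd j j'
    rw [hVdef]
    exact ne_fiber hp'n hp'R hnd j j'
  have hm0 := hVmem w0 hb0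
  have hm1 := hVmem w1 hb1
  have hlen := length_le_ncard (Set.toFinite D)
    (l := [V w0 0, V w0 1, V w0 2, V w1 0, V w1 1, V w1 2])
    (nodup6 (hVnes w0 0 1 (by omega) (by omega) (by omega))
      (hVnes w0 0 2 (by omega) (by omega) (by omega))
      (hVnec w0 w1 hcross 0 0) (hVnec w0 w1 hcross 0 1) (hVnec w0 w1 hcross 0 2)
      (hVnes w0 1 2 (by omega) (by omega) (by omega))
      (hVnec w0 w1 hcross 1 0) (hVnec w0 w1 hcross 1 1) (hVnec w0 w1 hcross 1 2)
      (hVnec w0 w1 hcross 2 0) (hVnec w0 w1 hcross 2 1) (hVnec w0 w1 hcross 2 2)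
      (hVnes w1 0 1 (by omega) (by omega) (by omega))
      (hVnes w1 0 2 (by omega) (by omega) (by omega))
      (hVnes w1 1 2 (by omega) (by omega) (by omega)))
    (by intro x hx; simp at hx
        rcases hx with rfl | rfl | rfl | rfl | rfl | rfl <;>
          [exact hm0 0; exact hm0 1; exact hm0 2; exact hm1 0; exact hm1 1; exact hm1 2])
  simpa using hlen

lemma fibers3x2 {n R F : ℕ} (hn : 1 < n) (hRdef : R = ∏ p ∈ n.primeFactors, p)
    (hRF : R * F = n) (hR0 : 0 < R) (hF2 : 2 ≤ F) {D : Set (ZMod n)}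
    (hD : IsDomSet (unitaryCayley n) D) {p' : ℕ} (hp'n : p' ∣ n) (hp'R : p' ∣ R)
    {w0 w1 w2 : ℤ}
    (hb0 : ∀ x ∈ D, ∃ p'' ∈ n.primeFactors, (p'':ℤ) ∣ (w0 - ((x.val : ℕ) : ℤ)))
    (hb1 : ∀ x ∈ D, ∃ p'' ∈ n.primeFactors, (p'':ℤ) ∣ (w1 - ((x.val : ℕ) : ℤ)))
    (hb2 : ∀ x ∈ D, ∃ p'' ∈ n.primeFactors, (p'':ℤ) ∣ (w2 - ((x.val : ℕ) : ℤ)))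
    (hc01 : ¬ (p':ℤ) ∣ (w0 - w1)) (hc02 : ¬ (p':ℤ) ∣ (w0 - w2))
    (hc12 : ¬ (p':ℤ) ∣ (w1 - w2)) : 6 ≤ D.ncard := by
  haveI : NeZero n := ⟨by omega⟩
  obtain ⟨V, hVdef⟩ : ∃ V' : ℤ → ℕ → ZMod n,
      V' = fun (w : ℤ) (j : ℕ) => ((w + (R:ℤ) * (j:ℕ) : ℤ) : ZMod n) := ⟨_, rfl⟩
  have hVmem : ∀ w : ℤ, (∀ x ∈ D, ∃ p'' ∈ n.primeFactors, (p'':ℤ) ∣ (w - ((x.val : ℕ) : ℤ))) →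
      ∀ j : ℕ, V w j ∈ D := by
    intro w hw j; rw [hVdef]; exact mem_of_blocked hn hRdef hD w hw j
  have hVnes : ∀ (w : ℤ) (j j' : ℕ), j < F → j' < F → j ≠ j' → V w j ≠ V w j' := by
    intro w j j' hj hj' hjj h
    rw [hVdef] at h
    exact hjj (cast_inj_fiber hRF hR0 w hj hj' h)
  have hVnec : ∀ (w w' : ℤ), ¬ (p':ℤ) ∣ (w - w') → ∀ j j', V w j ≠ V w' j' := by
    intro w w' hnd j j'
    rw [hVdef]
    exact ne_fiber hp'n hp'R hnd j j'
  have hm0 := hVmem w0 hb0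
  have hm1 := hVmem w1 hb1
  have hm2 := hVmem w2 hb2
  have hlen := length_le_ncard (Set.toFinite D)
    (l := [V w0 0, V w0 1, V w1 0, V w1 1, V w2 0, V w2 1])
    (nodup6 (hVnes w0 0 1 (by omega) (by omega) (by omega))
      (hVnec w0 w1 hc01 0 0) (hVnec w0 w1 hc01 0 1)
      (hVnec w0 w2 hc02 0 0) (hVnec w0 w2 hc02 0 1)
      (hVnec w0 w1 hc01 1 0) (hVnec w0 w1 hc01 1 1)
      (hVnec w0 w2 hc02 1 0) (hVnec w0 w2 hc02 1 1)
      (hVnes w1 0 1 (by omega) (by omega) (by omega))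
      (hVnec w1 w2 hc12 0 0) (hVnec w1 w2 hc12 0 1)
      (hVnec w1 w2 hc12 1 0) (hVnec w1 w2 hc12 1 1)
      (hVnes w2 0 1 (by omega) (by omega) (by omega)))
    (by intro x hx; simp at hx
        rcases hx with rfl | rfl | rfl | rfl | rfl | rfl <;>
          [exact hm0 0; exact hm0 1; exact hm1 0; exact hm1 1; exact hm2 0; exact hm2 1])
  simpa using hlen
lemma core3odd3 {n q r : ℕ} (hn : 1 < n) (hPF : n.primeFactors = {3, q, r})
    (hq : q.Prime) (hr : r.Prime) (hq5 : 5 ≤ q) (hr5 : 5 ≤ r) (hqr : q ≠ r)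
    (hf2 : 2 ≤ n / (∏ p ∈ n.primeFactors, p))
    {D : Set (ZMod n)} (hD : IsDomSet (unitaryCayley n) D) (hcard : D.ncard = 4) : False := by
  classical
  haveI : NeZero n := ⟨by omega⟩
  obtain ⟨R, hRdef⟩ : ∃ R', R' = ∏ p ∈ n.primeFactors, p := ⟨_, rfl⟩
  obtain ⟨F, hFdef⟩ : ∃ F', F' = n / R := ⟨_, rfl⟩
  have hRdvd : R ∣ n := hRdef ▸ Nat.prod_primeFactors_dvd n
  have hR0 : 0 < R := hRdef ▸ Finset.prod_pos (fun s hs => (Nat.prime_of_mem_primeFactors hs).pos)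
  have hRF : R * F = n := by rw [hFdef]; exact Nat.mul_div_cancel' hRdvd
  have h3mem : 3 ∈ n.primeFactors := by rw [hPF]; simp
  have hqmem : q ∈ n.primeFactors := by rw [hPF]; simp
  have hrmem : r ∈ n.primeFactors := by rw [hPF]; simp
  have h3n : 3 ∣ n := Nat.dvd_of_mem_primeFactors h3mem
  have hqn : q ∣ n := Nat.dvd_of_mem_primeFactors hqmem
  have hrn : r ∣ n := Nat.dvd_of_mem_primeFactors hrmem
  have h3R : 3 ∣ R := hRdef ▸ Finset.dvd_prod_of_mem _ h3mem
  have hqR : q ∣ R := hRdef ▸ Finset.dvd_prod_of_mem _ hqmem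
  have hrR : r ∣ R := hRdef ▸ Finset.dvd_prod_of_mem _ hrmem
  have hF3 : 3 ≤ F := by
    rw [hFdef, hRdef]
    refine f_ge (by omega) hf2 ?_
    intro s hs
    rw [hPF] at hs
    simp [Finset.mem_insert] at hs
    rcases hs with rfl | rfl | rfl <;> omega
  have h3p : Nat.Prime 3 := by norm_num
  have hc3q : IsCoprime ((3:ℕ):ℤ) ((q:ℕ):ℤ) := coprime_of_primes h3p hq (by omega)
  have hc3r : IsCoprime ((3:ℕ):ℤ) ((r:ℕ):ℤ) := coprime_of_primes h3p hr (by omega)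
  have hcqr : IsCoprime ((q:ℕ):ℤ) ((r:ℕ):ℤ) := coprime_of_primes hq hr hqr
  obtain ⟨d, hdinj, hdmem⟩ := exists_enum (Set.toFinite D) hcard
  obtain ⟨ψ, hψdef⟩ : ∃ ψ' : Fin 4 → ZMod 3, ψ' = fun i => (((d i).val : ℕ) : ZMod 3) := ⟨_, rfl⟩
  have hpar : ∀ i j, ψ i = ψ j → (3:ℤ) ∣ (((d i).val : ℕ) : ℤ) - (((d j).val : ℕ) : ℤ) := by
    intro i j h
    rw [hψdef] at h
    exact dvd_sub_comm.mp (dvd_of_res_eq h)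
  have hpar' : ∀ i j, (3:ℤ) ∣ (((d i).val : ℕ) : ℤ) - (((d j).val : ℕ) : ℤ) → ψ i = ψ j := by
    intro i j h
    have h' : (((d i).val : ℕ) : ZMod 3) = (((d j).val : ℕ) : ZMod 3) :=
      res_eq_of_dvd (dvd_sub_comm.mp h)
    rw [hψdef]
    exact h'
  have hcard2 : (Finset.univ : Finset (ZMod 3)).card < (Finset.univ : Finset (Fin 4)).card := by
    simp [ZMod.card]
  obtain ⟨x1, -, x2, -, hx12, hψeq⟩ := Finset.exists_ne_map_eq_of_card_lt_of_maps_to hcard2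
    (fun i _ => Finset.mem_univ (ψ i))
  have hYcard : ((Finset.univ : Finset (Fin 4)) \ {x1, x2}).card = 2 := by
    rw [Finset.card_sdiff_of_subset (Finset.subset_univ _), Finset.card_pair hx12]
    simp
  obtain ⟨y, z, hyz, hY⟩ := Finset.card_eq_two.mp hYcard
  have hymem : y ∈ (Finset.univ : Finset (Fin 4)) \ {x1, x2} := by rw [hY]; simp
  have hzmem : z ∈ (Finset.univ : Finset (Fin 4)) \ {x1, x2} := by rw [hY]; simp
  simp at hymem hzmem
  have htri : ∀ i : Fin 4, i = x1 ∨ i = x2 ∨ i = y ∨ i = z := by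
    intro i
    by_cases h1 : i = x1
    · exact Or.inl h1
    by_cases h2 : i = x2
    · exact Or.inr (Or.inl h2)
    have : i ∈ (Finset.univ : Finset (Fin 4)) \ {x1, x2} := by simp [h1, h2]
    rw [hY] at this
    simp at this
    rcases this with h | h
    · exact Or.inr (Or.inr (Or.inl h))
    · exact Or.inr (Or.inr (Or.inr h))
  -- convenient abbreviation for blockedness
  have hdvd3 : ∀ (w : ℤ) (i j : Fin 4), (3:ℤ) ∣ (w - (((d i).val : ℕ) : ℤ)) → ψ j = ψ i →
      (3:ℤ) ∣ (w - (((d j).val : ℕ) : ℤ)) := by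
    intro w i j hwi hji
    have h5 := dvd_add hwi (hpar i j hji.symm)
    have h6 : w - (((d i).val : ℕ) : ℤ) + ((((d i).val : ℕ) : ℤ) - (((d j).val : ℕ) : ℤ))
        = w - (((d j).val : ℕ) : ℤ) := by ring
    rwa [h6] at h5
  by_cases hAy : ψ y = ψ x1 <;> by_cases hAz : ψ z = ψ x1
  · -- all same class mod 3
    have hall : ∀ i, ψ i = ψ x1 := by
      intro i
      rcases htri i with rfl | rfl | rfl | rfl
      · rfl
      · exact hψeq.symm
      · exact hAy
      · exact hAz
    obtain ⟨w0, hw03, hw0q, hw0r⟩ := crt3 hc3q hc3r hcqr (((d x1).val : ℕ) : ℤ) 0 0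
    obtain ⟨w1, hw13, hw1q, hw1r⟩ := crt3 hc3q hc3r hcqr (((d x1).val : ℕ) : ℤ) 0 1
    have hb : ∀ w : ℤ, (3:ℤ) ∣ (w - (((d x1).val : ℕ) : ℤ)) →
        ∀ x ∈ D, ∃ p'' ∈ n.primeFactors, (p'':ℤ) ∣ (w - ((x.val : ℕ) : ℤ)) := by
      intro w hw x hx
      obtain ⟨i, rfl⟩ := (hdmem x).mp hx
      exact ⟨3, h3mem, hdvd3 w x1 i hw (hall i)⟩
    have hcross : ¬ (r:ℤ) ∣ (w0 - w1) := by
      apply cross_ne hw0r hw1r (by norm_num)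
      rw [show (0:ℤ) - 1 = -1 by ring, abs_neg, abs_one]
      exact_mod_cast (by omega : 1 < r)
    have := fibers2x3 hn hRdef hRF hR0 hF3 hD hrn hrR (hb w0 hw03) (hb w1 hw13) hcross
    omega
  · -- only z in a different class
    obtain ⟨w0, hw03, hw0q, hw0r⟩ := crt3 hc3q hc3r hcqr (((d x1).val : ℕ) : ℤ)
      (((d z).val : ℕ) : ℤ) 0
    obtain ⟨w1, hw13, hw1q, hw1r⟩ := crt3 hc3q hc3r hcqr (((d x1).val : ℕ) : ℤ)
      (((d z).val : ℕ) : ℤ) 1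
    have hb : ∀ w : ℤ, (3:ℤ) ∣ (w - (((d x1).val : ℕ) : ℤ)) →
        (q:ℤ) ∣ (w - (((d z).val : ℕ) : ℤ)) →
        ∀ x ∈ D, ∃ p'' ∈ n.primeFactors, (p'':ℤ) ∣ (w - ((x.val : ℕ) : ℤ)) := by
      intro w hw3 hwq x hx
      obtain ⟨i, rfl⟩ := (hdmem x).mp hx
      rcases htri i with hi | hi | hi | hi <;> rw [hi]
      · exact ⟨3, h3mem, hw3⟩
      · exact ⟨3, h3mem, hdvd3 w x1 x2 hw3 hψeq.symm⟩
      · exact ⟨3, h3mem, hdvd3 w x1 y hw3 hAy⟩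
      · exact ⟨q, hqmem, hwq⟩
    have hcross : ¬ (r:ℤ) ∣ (w0 - w1) := by
      apply cross_ne hw0r hw1r (by norm_num)
      rw [show (0:ℤ) - 1 = -1 by ring, abs_neg, abs_one]
      exact_mod_cast (by omega : 1 < r)
    have := fibers2x3 hn hRdef hRF hR0 hF3 hD hrn hrR (hb w0 hw03 hw0q) (hb w1 hw13 hw1q) hcross
    omega
  · -- only y in a different class
    obtain ⟨w0, hw03, hw0q, hw0r⟩ := crt3 hc3q hc3r hcqr (((d x1).val : ℕ) : ℤ)
      (((d y).val : ℕ) : ℤ) 0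
    obtain ⟨w1, hw13, hw1q, hw1r⟩ := crt3 hc3q hc3r hcqr (((d x1).val : ℕ) : ℤ)
      (((d y).val : ℕ) : ℤ) 1
    have hb : ∀ w : ℤ, (3:ℤ) ∣ (w - (((d x1).val : ℕ) : ℤ)) →
        (q:ℤ) ∣ (w - (((d y).val : ℕ) : ℤ)) →
        ∀ x ∈ D, ∃ p'' ∈ n.primeFactors, (p'':ℤ) ∣ (w - ((x.val : ℕ) : ℤ)) := by
      intro w hw3 hwq x hx
      obtain ⟨i, rfl⟩ := (hdmem x).mp hx
      rcases htri i with hi | hi | hi | hi <;> rw [hi]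
      · exact ⟨3, h3mem, hw3⟩
      · exact ⟨3, h3mem, hdvd3 w x1 x2 hw3 hψeq.symm⟩
      · exact ⟨q, hqmem, hwq⟩
      · exact ⟨3, h3mem, hdvd3 w x1 z hw3 hAz⟩
    have hcross : ¬ (r:ℤ) ∣ (w0 - w1) := by
      apply cross_ne hw0r hw1r (by norm_num)
      rw [show (0:ℤ) - 1 = -1 by ring, abs_neg, abs_one]
      exact_mod_cast (by omega : 1 < r)
    have := fibers2x3 hn hRdef hRF hR0 hF3 hD hrn hrR (hb w0 hw03 hw0q) (hb w1 hw13 hw1q) hcross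
    omega
  · -- y and z both in different classes
    obtain ⟨w, hw3, hwq, hwr⟩ := crt3 hc3q hc3r hcqr (((d x1).val : ℕ) : ℤ)
      (((d y).val : ℕ) : ℤ) (((d z).val : ℕ) : ℤ)
    have hb : ∀ x ∈ D, ∃ p'' ∈ n.primeFactors, (p'':ℤ) ∣ (w - ((x.val : ℕ) : ℤ)) := by
      intro x hx
      obtain ⟨i, rfl⟩ := (hdmem x).mp hx
      rcases htri i with hi | hi | hi | hi <;> rw [hi]
      · exact ⟨3, h3mem, hw3⟩
      · exact ⟨3, h3mem, hdvd3 w x1 x2 hw3 hψeq.symm⟩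
      · exact ⟨q, hqmem, hwq⟩
      · exact ⟨r, hrmem, hwr⟩
    obtain ⟨V, hVdef⟩ : ∃ V' : ℤ → ℕ → ZMod n,
        V' = fun (w : ℤ) (j : ℕ) => ((w + (R:ℤ) * (j:ℕ) : ℤ) : ZMod n) := ⟨_, rfl⟩
    have hVmem : ∀ j : ℕ, V w j ∈ D := by
      intro j; rw [hVdef]; exact mem_of_blocked hn hRdef hD w hb j
    have hVnes : ∀ (j j' : ℕ), j < F → j' < F → j ≠ j' → V w j ≠ V w j' := by
      intro j j' hj hj' hjj h
      rw [hVdef] at h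
      exact hjj (cast_inj_fiber hRF hR0 w hj hj' h)
    have hVres : ∀ (j : ℕ) (x : ZMod n), V w j = x → (3:ℤ) ∣ (w - ((x.val : ℕ) : ℤ)) := by
      intro j x h
      rw [hVdef] at h
      exact res_of_eq hn h3n h3R h
    obtain ⟨i0, hi0⟩ := (hdmem (V w 0)).mp (hVmem 0)
    obtain ⟨i1, hi1⟩ := (hdmem (V w 1)).mp (hVmem 1)
    obtain ⟨i2, hi2⟩ := (hdmem (V w 2)).mp (hVmem 2)
    have hres0 := hVres 0 _ hi0.symm
    have hres1 := hVres 1 _ hi1.symm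
    have hres2 := hVres 2 _ hi2.symm
    have hnotyz : ∀ i : Fin 4, (3:ℤ) ∣ (w - (((d i).val : ℕ) : ℤ)) → i = x1 ∨ i = x2 := by
      intro i h3i
      rcases htri i with hi | hi | hi | hi
      · exact Or.inl hi
      · exact Or.inr hi
      · exfalso
        apply hAy
        apply hpar'
        rw [← hi]
        have h5 := dvd_sub h3i hw3
        have h6 : w - (((d i).val : ℕ) : ℤ) - (w - (((d x1).val : ℕ) : ℤ))
            = (((d x1).val : ℕ) : ℤ) - (((d i).val : ℕ) : ℤ) := by ring
        rw [h6] at h5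
        exact dvd_sub_comm.mp h5
      · exfalso
        apply hAz
        apply hpar'
        rw [← hi]
        have h5 := dvd_sub h3i hw3
        have h6 : w - (((d i).val : ℕ) : ℤ) - (w - (((d x1).val : ℕ) : ℤ))
            = (((d x1).val : ℕ) : ℤ) - (((d i).val : ℕ) : ℤ) := by ring
        rw [h6] at h5
        exact dvd_sub_comm.mp h5
    have hm0 := hnotyz i0 hres0
    have hm1 := hnotyz i1 hres1
    have hm2 := hnotyz i2 hres2
    have hdup : i0 = i1 ∨ i0 = i2 ∨ i1 = i2 := by
      rcases hm0 with h0 | h0 <;> rcases hm1 with h1 | h1 <;> rcases hm2 with h2 | h2 <;>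
        rw [h0, h1, h2] <;> tauto
    rcases hdup with h | h | h
    · exact hVnes 0 1 (by omega) (by omega) (by omega) (by rw [← hi0, ← hi1, h])
    · exact hVnes 0 2 (by omega) (by omega) (by omega) (by rw [← hi0, ← hi2, h])
    · exact hVnes 1 2 (by omega) (by omega) (by omega) (by rw [← hi1, ← hi2, h])
lemma cross_ne_lit {s : ℕ} (hs3 : 3 ≤ s) {w w' : ℤ} {c c' : ℤ} (h1 : (s:ℤ) ∣ w - c)
    (h2 : (s:ℤ) ∣ w' - c') (h3 : c ≠ c') (h4 : |c - c'| ≤ 2) : ¬ (s:ℤ) ∣ (w - w') :=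
  cross_ne h1 h2 h3 (lt_of_le_of_lt h4 (by exact_mod_cast (by omega : 2 < s)))

lemma core3even {n q r : ℕ} (hn : 1 < n) (hPF : n.primeFactors = {2, q, r})
    (hq : q.Prime) (hr : r.Prime) (hq2 : q ≠ 2) (hr2 : r ≠ 2) (hqr : q ≠ r)
    (hf2 : 2 ≤ n / (∏ p ∈ n.primeFactors, p))
    {D : Set (ZMod n)} (hD : IsDomSet (unitaryCayley n) D) (hcard : D.ncard = 5) : False := by
  classical
  haveI : NeZero n := ⟨by omega⟩
  obtain ⟨R, hRdef⟩ : ∃ R', R' = ∏ p ∈ n.primeFactors, p := ⟨_, rfl⟩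
  obtain ⟨F, hFdef⟩ : ∃ F', F' = n / R := ⟨_, rfl⟩
  have hRdvd : R ∣ n := hRdef ▸ Nat.prod_primeFactors_dvd n
  have hR0 : 0 < R := hRdef ▸ Finset.prod_pos (fun s hs => (Nat.prime_of_mem_primeFactors hs).pos)
  have hRF : R * F = n := by rw [hFdef]; exact Nat.mul_div_cancel' hRdvd
  have hF2 : 2 ≤ F := by rw [hFdef, hRdef]; exact hf2
  have h2mem : 2 ∈ n.primeFactors := by rw [hPF]; simp
  have hqmem : q ∈ n.primeFactors := by rw [hPF]; simp
  have hrmem : r ∈ n.primeFactors := by rw [hPF]; simp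
  have h2n : 2 ∣ n := Nat.dvd_of_mem_primeFactors h2mem
  have hqn : q ∣ n := Nat.dvd_of_mem_primeFactors hqmem
  have hrn : r ∣ n := Nat.dvd_of_mem_primeFactors hrmem
  have h2R : 2 ∣ R := hRdef ▸ Finset.dvd_prod_of_mem _ h2mem
  have hqR : q ∣ R := hRdef ▸ Finset.dvd_prod_of_mem _ hqmem
  have hrR : r ∣ R := hRdef ▸ Finset.dvd_prod_of_mem _ hrmem
  have hq3 : 3 ≤ q := by have := hq.two_le; omega
  have hr3 : 3 ≤ r := by have := hr.two_le; omega
  have hc2q : IsCoprime ((2:ℕ):ℤ) ((q:ℕ):ℤ) := coprime_of_primes Nat.prime_two hq (Ne.symm hq2)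
  have hc2r : IsCoprime ((2:ℕ):ℤ) ((r:ℕ):ℤ) := coprime_of_primes Nat.prime_two hr (Ne.symm hr2)
  have hcqr : IsCoprime ((q:ℕ):ℤ) ((r:ℕ):ℤ) := coprime_of_primes hq hr hqr
  obtain ⟨d, hdinj, hdmem⟩ := exists_enum (Set.toFinite D) hcard
  obtain ⟨ψ, hψdef⟩ : ∃ ψ' : Fin 5 → ZMod 2, ψ' = fun i => (((d i).val : ℕ) : ZMod 2) := ⟨_, rfl⟩
  have hpar : ∀ i j, ψ i = ψ j → (2:ℤ) ∣ (((d i).val : ℕ) : ℤ) - (((d j).val : ℕ) : ℤ) := by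
    intro i j h
    rw [hψdef] at h
    exact dvd_sub_comm.mp (dvd_of_res_eq h)
  have hpar' : ∀ i j, (2:ℤ) ∣ (((d i).val : ℕ) : ℤ) - (((d j).val : ℕ) : ℤ) → ψ i = ψ j := by
    intro i j h
    have h' : (((d i).val : ℕ) : ZMod 2) = (((d j).val : ℕ) : ZMod 2) :=
      res_eq_of_dvd (dvd_sub_comm.mp h)
    rw [hψdef]
    exact h'
  -- majority parity class
  have hsplit := Finset.card_filter_add_card_filter_not
    (s := (Finset.univ : Finset (Fin 5))) (p := fun i => ψ i = (0 : ZMod 2))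
  have huniv5 : (Finset.univ : Finset (Fin 5)).card = 5 := by simp
  have hfc : (Finset.univ.filter (fun i => ¬ ψ i = (0:ZMod 2))).card
      = (Finset.univ.filter (fun i => ψ i = (1:ZMod 2))).card := by
    congr 1
    apply Finset.filter_congr
    intro i _
    constructor
    · intro h
      rcases (show ∀ x : ZMod 2, x = 0 ∨ x = 1 by decide) (ψ i) with h' | h'
      · exact absurd h' h
      · simpa using h'
    · intro h h0
      rw [h0] at h
      exact absurd h (by decide)
  obtain ⟨ε, hS⟩ : ∃ ε : ZMod 2, 3 ≤ (Finset.univ.filter (fun i => ψ i = ε)).card := by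
    by_cases h : 3 ≤ (Finset.univ.filter (fun i => ψ i = (0:ZMod 2))).card
    · exact ⟨0, h⟩
    · refine ⟨1, ?_⟩
      rw [← hfc]
      omega
  have hTsplit := Finset.card_filter_add_card_filter_not
    (s := (Finset.univ : Finset (Fin 5))) (p := fun i => ψ i = ε)
  have hT2 : (Finset.univ.filter (fun i => ¬ ψ i = ε)).card ≤ 2 := by omega
  obtain ⟨i0, hi0S⟩ := Finset.card_pos.mp (show 0 < (Finset.univ.filter (fun i => ψ i = ε)).card by omega)
  have hi0 : ψ i0 = ε := (Finset.mem_filter.mp hi0S).2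
  have hTor : ∀ i : Fin 5, ψ i = ε ∨ i ∈ Finset.univ.filter (fun i => ¬ ψ i = ε) := by
    intro i
    by_cases h : ψ i = ε
    · exact Or.inl h
    · exact Or.inr (by simp [h])
  have hdvd2 : ∀ (w : ℤ) (i : Fin 5), (2:ℤ) ∣ (w - (((d i0).val : ℕ) : ℤ)) → ψ i = ε →
      (2:ℤ) ∣ (w - (((d i).val : ℕ) : ℤ)) := by
    intro w i hwi hie
    have h5 := dvd_add hwi (hpar i0 i (by rw [hi0, hie]))
    have h6 : w - (((d i0).val : ℕ) : ℤ) + ((((d i0).val : ℕ) : ℤ) - (((d i).val : ℕ) : ℤ))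
        = w - (((d i).val : ℕ) : ℤ) := by ring
    rwa [h6] at h5
  have hTcases : (Finset.univ.filter (fun i => ¬ ψ i = ε)).card = 0 ∨
      (Finset.univ.filter (fun i => ¬ ψ i = ε)).card = 1 ∨
      (Finset.univ.filter (fun i => ¬ ψ i = ε)).card = 2 := by omega
  rcases hTcases with hTc | hTc | hTc
  · -- no exceptional indices
    have hall : ∀ i, ψ i = ε := by
      intro i
      rcases hTor i with h | h
      · exact h
      · rw [Finset.card_eq_zero.mp hTc] at h
        simp at h
    obtain ⟨w0, hw02, hw0q, hw0r⟩ := crt3 hc2q hc2r hcqr (((d i0).val : ℕ) : ℤ) 0 0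
    obtain ⟨w1, hw12, hw1q, hw1r⟩ := crt3 hc2q hc2r hcqr (((d i0).val : ℕ) : ℤ) 0 1
    obtain ⟨w2, hw22, hw2q, hw2r⟩ := crt3 hc2q hc2r hcqr (((d i0).val : ℕ) : ℤ) 0 2
    have hb : ∀ w : ℤ, (2:ℤ) ∣ (w - (((d i0).val : ℕ) : ℤ)) →
        ∀ x ∈ D, ∃ p'' ∈ n.primeFactors, (p'':ℤ) ∣ (w - ((x.val : ℕ) : ℤ)) := by
      intro w hw x hx
      obtain ⟨i, rfl⟩ := (hdmem x).mp hx
      exact ⟨2, h2mem, hdvd2 w i hw (hall i)⟩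
    have hc01 := cross_ne_lit hr3 hw0r hw1r (by norm_num) (by norm_num)
    have hc02 := cross_ne_lit hr3 hw0r hw2r (by norm_num) (by norm_num)
    have hc12 := cross_ne_lit hr3 hw1r hw2r (by norm_num) (by norm_num)
    have := fibers3x2 hn hRdef hRF hR0 hF2 hD hrn hrR (hb w0 hw02) (hb w1 hw12) (hb w2 hw22)
      hc01 hc02 hc12
    omega
  · -- one exceptional index y
    obtain ⟨y, hy⟩ := Finset.card_eq_one.mp hTc
    have hyT : ∀ i : Fin 5, ¬ ψ i = ε → i = y := by
      intro i h
      have : i ∈ Finset.univ.filter (fun i => ¬ ψ i = ε) := by simp [h]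
      rw [hy] at this
      simpa using this
    obtain ⟨w0, hw02, hw0q, hw0r⟩ := crt3 hc2q hc2r hcqr (((d i0).val : ℕ) : ℤ)
      (((d y).val : ℕ) : ℤ) 0
    obtain ⟨w1, hw12, hw1q, hw1r⟩ := crt3 hc2q hc2r hcqr (((d i0).val : ℕ) : ℤ)
      (((d y).val : ℕ) : ℤ) 1
    obtain ⟨w2, hw22, hw2q, hw2r⟩ := crt3 hc2q hc2r hcqr (((d i0).val : ℕ) : ℤ)
      (((d y).val : ℕ) : ℤ) 2
    have hb : ∀ w : ℤ, (2:ℤ) ∣ (w - (((d i0).val : ℕ) : ℤ)) →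
        (q:ℤ) ∣ (w - (((d y).val : ℕ) : ℤ)) →
        ∀ x ∈ D, ∃ p'' ∈ n.primeFactors, (p'':ℤ) ∣ (w - ((x.val : ℕ) : ℤ)) := by
      intro w hw2' hwq x hx
      obtain ⟨i, rfl⟩ := (hdmem x).mp hx
      by_cases hie : ψ i = ε
      · exact ⟨2, h2mem, hdvd2 w i hw2' hie⟩
      · rw [hyT i hie]
        exact ⟨q, hqmem, hwq⟩
    have hc01 := cross_ne_lit hr3 hw0r hw1r (by norm_num) (by norm_num)
    have hc02 := cross_ne_lit hr3 hw0r hw2r (by norm_num) (by norm_num)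
    have hc12 := cross_ne_lit hr3 hw1r hw2r (by norm_num) (by norm_num)
    have := fibers3x2 hn hRdef hRF hR0 hF2 hD hrn hrR (hb w0 hw02 hw0q) (hb w1 hw12 hw1q)
      (hb w2 hw22 hw2q) hc01 hc02 hc12
    omega
  · -- two exceptional indices y, z
    obtain ⟨y, z, hyz, hYZ⟩ := Finset.card_eq_two.mp hTc
    have hymem : ¬ ψ y = ε := by
      have : y ∈ Finset.univ.filter (fun i => ¬ ψ i = ε) := by rw [hYZ]; simp
      simpa using this
    have hzmem : ¬ ψ z = ε := by
      have : z ∈ Finset.univ.filter (fun i => ¬ ψ i = ε) := by rw [hYZ]; simp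
      simpa using this
    have hyzT : ∀ i : Fin 5, ¬ ψ i = ε → i = y ∨ i = z := by
      intro i h
      have : i ∈ Finset.univ.filter (fun i => ¬ ψ i = ε) := by simp [h]
      rw [hYZ] at this
      simpa using this
    by_cases hqyz : (q:ℤ) ∣ (((d y).val : ℕ) : ℤ) - (((d z).val : ℕ) : ℤ)
    · obtain ⟨w0, hw02, hw0q, hw0r⟩ := crt3 hc2q hc2r hcqr (((d i0).val : ℕ) : ℤ)
        (((d y).val : ℕ) : ℤ) 0
      obtain ⟨w1, hw12, hw1q, hw1r⟩ := crt3 hc2q hc2r hcqr (((d i0).val : ℕ) : ℤ)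
        (((d y).val : ℕ) : ℤ) 1
      obtain ⟨w2, hw22, hw2q, hw2r⟩ := crt3 hc2q hc2r hcqr (((d i0).val : ℕ) : ℤ)
        (((d y).val : ℕ) : ℤ) 2
      have hb : ∀ w : ℤ, (2:ℤ) ∣ (w - (((d i0).val : ℕ) : ℤ)) →
          (q:ℤ) ∣ (w - (((d y).val : ℕ) : ℤ)) →
          ∀ x ∈ D, ∃ p'' ∈ n.primeFactors, (p'':ℤ) ∣ (w - ((x.val : ℕ) : ℤ)) := by
        intro w hw2' hwq x hx
        obtain ⟨i, rfl⟩ := (hdmem x).mp hx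
        by_cases hie : ψ i = ε
        · exact ⟨2, h2mem, hdvd2 w i hw2' hie⟩
        · rcases hyzT i hie with hi | hi <;> rw [hi]
          · exact ⟨q, hqmem, hwq⟩
          · refine ⟨q, hqmem, ?_⟩
            have h5 := dvd_add hwq hqyz
            have h6 : w - (((d y).val : ℕ) : ℤ) +
                ((((d y).val : ℕ) : ℤ) - (((d z).val : ℕ) : ℤ))
                = w - (((d z).val : ℕ) : ℤ) := by ring
            rwa [h6] at h5
      have hc01 := cross_ne_lit hr3 hw0r hw1r (by norm_num) (by norm_num)
      have hc02 := cross_ne_lit hr3 hw0r hw2r (by norm_num) (by norm_num)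
      have hc12 := cross_ne_lit hr3 hw1r hw2r (by norm_num) (by norm_num)
      have := fibers3x2 hn hRdef hRF hR0 hF2 hD hrn hrR (hb w0 hw02 hw0q) (hb w1 hw12 hw1q)
        (hb w2 hw22 hw2q) hc01 hc02 hc12
      omega
    · by_cases hryz : (r:ℤ) ∣ (((d y).val : ℕ) : ℤ) - (((d z).val : ℕ) : ℤ)
      · obtain ⟨w0, hw02, hw0q, hw0r⟩ := crt3 hc2q hc2r hcqr (((d i0).val : ℕ) : ℤ) 0
          (((d y).val : ℕ) : ℤ)
        obtain ⟨w1, hw12, hw1q, hw1r⟩ := crt3 hc2q hc2r hcqr (((d i0).val : ℕ) : ℤ) 1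
          (((d y).val : ℕ) : ℤ)
        obtain ⟨w2, hw22, hw2q, hw2r⟩ := crt3 hc2q hc2r hcqr (((d i0).val : ℕ) : ℤ) 2
          (((d y).val : ℕ) : ℤ)
        have hb : ∀ w : ℤ, (2:ℤ) ∣ (w - (((d i0).val : ℕ) : ℤ)) →
            (r:ℤ) ∣ (w - (((d y).val : ℕ) : ℤ)) →
            ∀ x ∈ D, ∃ p'' ∈ n.primeFactors, (p'':ℤ) ∣ (w - ((x.val : ℕ) : ℤ)) := by
          intro w hw2' hwr x hx
          obtain ⟨i, rfl⟩ := (hdmem x).mp hx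
          by_cases hie : ψ i = ε
          · exact ⟨2, h2mem, hdvd2 w i hw2' hie⟩
          · rcases hyzT i hie with hi | hi <;> rw [hi]
            · exact ⟨r, hrmem, hwr⟩
            · refine ⟨r, hrmem, ?_⟩
              have h5 := dvd_add hwr hryz
              have h6 : w - (((d y).val : ℕ) : ℤ) +
                  ((((d y).val : ℕ) : ℤ) - (((d z).val : ℕ) : ℤ))
                  = w - (((d z).val : ℕ) : ℤ) := by ring
              rwa [h6] at h5
        have hc01 := cross_ne_lit hq3 hw0q hw1q (by norm_num) (by norm_num)
        have hc02 := cross_ne_lit hq3 hw0q hw2q (by norm_num) (by norm_num)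
        have hc12 := cross_ne_lit hq3 hw1q hw2q (by norm_num) (by norm_num)
        have := fibers3x2 hn hRdef hRF hR0 hF2 hD hqn hqR (hb w0 hw02 hw0r) (hb w1 hw12 hw1r)
          (hb w2 hw22 hw2r) hc01 hc02 hc12
        omega
      · -- y and z differ mod q and mod r
        obtain ⟨w1, hw12, hw1q, hw1r⟩ := crt3 hc2q hc2r hcqr (((d i0).val : ℕ) : ℤ)
          (((d y).val : ℕ) : ℤ) (((d z).val : ℕ) : ℤ)
        obtain ⟨w2, hw22, hw2q, hw2r⟩ := crt3 hc2q hc2r hcqr (((d i0).val : ℕ) : ℤ)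
          (((d z).val : ℕ) : ℤ) (((d y).val : ℕ) : ℤ)
        have hb : ∀ (w : ℤ), (2:ℤ) ∣ (w - (((d i0).val : ℕ) : ℤ)) →
            (q:ℤ) ∣ (w - (((d y).val : ℕ) : ℤ)) ∨ (r:ℤ) ∣ (w - (((d y).val : ℕ) : ℤ)) →
            (q:ℤ) ∣ (w - (((d z).val : ℕ) : ℤ)) ∨ (r:ℤ) ∣ (w - (((d z).val : ℕ) : ℤ)) →
            ∀ x ∈ D, ∃ p'' ∈ n.primeFactors, (p'':ℤ) ∣ (w - ((x.val : ℕ) : ℤ)) := by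
          intro w hw2' hwy hwz x hx
          obtain ⟨i, rfl⟩ := (hdmem x).mp hx
          by_cases hie : ψ i = ε
          · exact ⟨2, h2mem, hdvd2 w i hw2' hie⟩
          · rcases hyzT i hie with hi | hi <;> rw [hi]
            · rcases hwy with h | h
              · exact ⟨q, hqmem, h⟩
              · exact ⟨r, hrmem, h⟩
            · rcases hwz with h | h
              · exact ⟨q, hqmem, h⟩
              · exact ⟨r, hrmem, h⟩
        have hb1 := hb w1 hw12 (Or.inl hw1q) (Or.inr hw1r)
        have hb2 := hb w2 hw22 (Or.inr hw2r) (Or.inl hw2q)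
        have hcross : ¬ (q:ℤ) ∣ (w1 - w2) := by
          intro h
          apply hqyz
          have h5 := dvd_sub (dvd_sub hw1q hw2q) h
          have h6 : w1 - (((d y).val : ℕ) : ℤ) - (w2 - (((d z).val : ℕ) : ℤ)) - (w1 - w2)
              = (((d z).val : ℕ) : ℤ) - (((d y).val : ℕ) : ℤ) := by ring
          rw [h6] at h5
          exact dvd_sub_comm.mp h5
        -- the four fiber elements all lie in the image of the majority class
        obtain ⟨V, hVdef⟩ : ∃ V' : ℤ → ℕ → ZMod n,
            V' = fun (w : ℤ) (j : ℕ) => ((w + (R:ℤ) * (j:ℕ) : ℤ) : ZMod n) := ⟨_, rfl⟩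
        have hVmem : ∀ w : ℤ,
            (∀ x ∈ D, ∃ p'' ∈ n.primeFactors, (p'':ℤ) ∣ (w - ((x.val : ℕ) : ℤ))) →
            ∀ j : ℕ, V w j ∈ D := by
          intro w hw j; rw [hVdef]; exact mem_of_blocked hn hRdef hD w hw j
        have hVnes : ∀ (w : ℤ) (j j' : ℕ), j < F → j' < F → j ≠ j' → V w j ≠ V w j' := by
          intro w j j' hj hj' hjj h
          rw [hVdef] at h
          exact hjj (cast_inj_fiber hRF hR0 w hj hj' h)
        have hVnec : ∀ (w w' : ℤ), ¬ (q:ℤ) ∣ (w - w') → ∀ j j', V w j ≠ V w' j' := by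
          intro w w' hnd j j'
          rw [hVdef]
          exact ne_fiber hqn hqR hnd j j'
        have hVres : ∀ (w : ℤ) (j : ℕ) (x : ZMod n), V w j = x →
            (2:ℤ) ∣ (w - ((x.val : ℕ) : ℤ)) := by
          intro w j x h
          rw [hVdef] at h
          exact res_of_eq hn h2n h2R h
        have hmemE : ∀ (w : ℤ) (j : ℕ), (2:ℤ) ∣ (w - (((d i0).val : ℕ) : ℤ)) → V w j ∈ D →
            V w j ∈ d '' (↑(Finset.univ.filter (fun i => ψ i = ε)) : Set (Fin 5)) := by
          intro w j hw2' hmem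
          obtain ⟨i, hi⟩ := (hdmem (V w j)).mp hmem
          have hres := hVres w j _ hi.symm
          have hie : ψ i = ε := by
            have h5 := dvd_sub hw2' hres
            have h6 : w - (((d i0).val : ℕ) : ℤ) - (w - (((d i).val : ℕ) : ℤ))
                = (((d i).val : ℕ) : ℤ) - (((d i0).val : ℕ) : ℤ) := by ring
            rw [h6] at h5
            rw [hpar' i i0 h5]
            exact hi0
          rw [← hi]
          exact Set.mem_image_of_mem d (by simp [hie])
        have hm1 := hVmem w1 hb1
        have hm2 := hVmem w2 hb2
        have hlen := length_le_ncard
          (D := d '' (↑(Finset.univ.filter (fun i => ψ i = ε)) : Set (Fin 5)))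
          (Set.toFinite _)
          (l := [V w1 0, V w1 1, V w2 0, V w2 1])
          (nodup4 (hVnes w1 0 1 (by omega) (by omega) (by omega))
            (hVnec w1 w2 hcross 0 0) (hVnec w1 w2 hcross 0 1)
            (hVnec w1 w2 hcross 1 0) (hVnec w1 w2 hcross 1 1)
            (hVnes w2 0 1 (by omega) (by omega) (by omega)))
          (by intro x hx; simp only [List.mem_cons, List.not_mem_nil, or_false] at hx
              rcases hx with rfl | rfl | rfl | rfl
              · exact hmemE w1 0 hw12 (hm1 0)
              · exact hmemE w1 1 hw12 (hm1 1)
              · exact hmemE w2 0 hw22 (hm2 0)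
              · exact hmemE w2 1 hw22 (hm2 1))
        have himg := Set.ncard_image_le
          (s := (↑(Finset.univ.filter (fun i => ψ i = ε)) : Set (Fin 5))) (f := d)
          (Set.toFinite _)
        rw [Set.ncard_coe_finset] at himg
        have hScard : (Finset.univ.filter (fun i => ψ i = ε)).card = 3 := by omega
        rw [hScard] at himg
        simp at hlen himg
        omega
lemma window_full {n : ℕ} (hn1 : 1 < n) :
    ∀ x : ℤ, ∃ i : ℕ, i < n ∧ Int.gcd (x + i) n = 1 := by
  intro x
  have hn0 : (0:ℤ) < n := by exact_mod_cast (by omega : 0 < n)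
  refine ⟨((1 - x) % n).toNat, ?_, ?_⟩
  · have h1 := Int.emod_lt_of_pos (1 - x) hn0
    have h2 := Int.emod_nonneg (1 - x) (show (n:ℤ) ≠ 0 by omega)
    have h3 : (((1 - x) % n).toNat : ℤ) = (1 - x) % n := Int.toNat_of_nonneg h2
    omega
  · have h2 := Int.emod_nonneg (1 - x) (show (n:ℤ) ≠ 0 by omega)
    have htn : (((1 - x) % n).toNat : ℤ) = (1 - x) % n := Int.toNat_of_nonneg h2
    have hx : (n:ℤ) ∣ (x + (((1 - x) % n).toNat : ℤ) - 1) := by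
      rw [htn, Int.emod_def]
      exact ⟨-((1 - x) / n), by ring⟩
    apply gcd_eq_one_of (by omega)
    intro p hp hdvd
    have hpn : (p:ℤ) ∣ (n:ℤ) := Int.natCast_dvd_natCast.mpr (Nat.dvd_of_mem_primeFactors hp)
    have h3 : (p:ℤ) ∣ 1 := by
      have h4 := dvd_sub hdvd (dvd_trans hpn hx)
      have h5 : x + (((1 - x) % n).toNat : ℤ) - (x + (((1 - x) % n).toNat : ℤ) - 1) = 1 := by
        ring
      rwa [h5] at h4
    have h6 := Int.le_of_dvd one_pos h3
    have h7 := (Nat.prime_of_mem_primeFactors hp).two_le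
    have : ((2:ℕ):ℤ) ≤ (p:ℤ) := by exact_mod_cast h7
    omega

lemma isUnit_intCast {n : ℕ} {y : ℤ} (h : Int.gcd y n = 1) : IsUnit ((y : ℤ) : ZMod n) := by
  obtain ⟨u, v, huv⟩ := Int.isCoprime_iff_gcd_eq_one.mpr h
  apply IsUnit.of_mul_eq_one ((u : ℤ) : ZMod n)
  have h2 := congrArg (fun z : ℤ => ((z : ℤ) : ZMod n)) huv
  push_cast at h2
  rw [ZMod.natCast_self, mul_zero, add_zero] at h2
  rw [← h2]
  ring

lemma domNum_le_jac {n : ℕ} (hn1 : 1 < n) :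
    domNum (unitaryCayley n) ≤ jacobsthal n := by
  classical
  haveI : NeZero n := ⟨by omega⟩
  haveI : Fact (1 < n) := ⟨hn1⟩
  have hmemn : n ∈ {m | 0 < m ∧ ∀ x : ℤ, ∃ i : ℕ, i < m ∧ Int.gcd (x + i) n = 1} :=
    ⟨by omega, window_full hn1⟩
  have hgmem := Nat.sInf_mem (⟨n, hmemn⟩ :
    {m | 0 < m ∧ ∀ x : ℤ, ∃ i : ℕ, i < m ∧ Int.gcd (x + i) n = 1}.Nonempty)
  have hgn : jacobsthal n ≤ n := Nat.sInf_le hmemn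
  obtain ⟨hg0', hgwin'⟩ := hgmem
  have hg0 : 0 < jacobsthal n := hg0'
  have hgwin : ∀ x : ℤ, ∃ i : ℕ, i < jacobsthal n ∧ Int.gcd (x + i) n = 1 := hgwin'
  have hgn2 : jacobsthal n ≤ n := hgn
  obtain ⟨g, hgdef⟩ : ∃ g', g' = jacobsthal n := ⟨_, rfl⟩
  rw [← hgdef] at hg0 hgwin hgn2 ⊢
  apply Nat.sInf_le
  refine ⟨↑((Finset.range g).image (fun i : ℕ => (i : ZMod n))), ?_, ?_⟩
  · -- dominating
    intro v
    obtain ⟨m, hm⟩ : ∃ m' : ℕ, m' = v.val := ⟨_, rfl⟩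
    have hvm : v = ((m : ℕ) : ZMod n) := by
      rw [hm, ZMod.natCast_val, ZMod.cast_id]
    obtain ⟨i, hig, hgcd⟩ := hgwin ((m : ℤ) - ((g:ℤ) - 1))
    have hik : i ≤ g - 1 := by omega
    set k : ℕ := g - 1 - i with hkdef
    have hkg : k < g := by omega
    have hd : ((k:ℕ) : ZMod n) ∈
        (↑((Finset.range g).image (fun i : ℕ => (i : ZMod n))) : Set (ZMod n)) := by
      simp only [Finset.coe_image, Set.mem_image, Finset.mem_coe, Finset.mem_range]
      exact ⟨k, by simpa using hkg, rfl⟩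
    have hvd : v - ((k:ℕ) : ZMod n) = (((m : ℤ) - ((g:ℤ) - 1) + i : ℤ) : ZMod n) := by
      have hkz : ((k:ℕ) : ℤ) = (g:ℤ) - 1 - i := by
        rw [hkdef]
        push_cast [Nat.cast_sub (by omega : i ≤ g - 1), Nat.cast_sub (by omega : 1 ≤ g)]
        ring
      rw [hvm, show ((m:ℕ) : ZMod n) = (((m:ℕ) : ℤ) : ZMod n) by push_cast; ring,
        show ((k:ℕ) : ZMod n) = (((k:ℕ) : ℤ) : ZMod n) by push_cast; ring, ← Int.cast_sub]
      congr 1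
      rw [hkz]
      ring
    have hu : IsUnit (v - ((k:ℕ) : ZMod n)) := by
      rw [hvd]
      exact isUnit_intCast hgcd
    by_cases hveq : v = ((k:ℕ) : ZMod n)
    · exact Or.inl (by rw [hveq]; exact hd)
    · exact Or.inr ⟨((k:ℕ) : ZMod n), hd, hveq, hu⟩
  · rw [Set.ncard_coe_finset]
    rw [Finset.card_image_of_injOn, Finset.card_range]
    intro i hi j hj hij
    simp only [Finset.coe_range, Set.mem_Iio] at hi hj
    have hin : i < n := by omega
    have hjn : j < n := by omega
    have hij' : ((i : ℕ) : ZMod n) = ((j : ℕ) : ZMod n) := hij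
    have hv : ((i : ZMod n)).val = ((j : ZMod n)).val := by rw [hij']
    rwa [ZMod.val_cast_of_lt hin, ZMod.val_cast_of_lt hjn] at hv
    
lemma lower_bound {n : ℕ} (hn1 : 1 < n) {V : ℕ} (hV : 1 ≤ V) (hVn : V - 1 ≤ n)
    (hcore : ∀ D : Set (ZMod n), IsDomSet (unitaryCayley n) D → D.ncard = V - 1 → False) :
    V ≤ domNum (unitaryCayley n) := by
  classical
  haveI : NeZero n := ⟨by omega⟩
  rw [domNum]
  apply le_csInf
  · exact ⟨n, Set.univ, fun v => Or.inl (Set.mem_univ v),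
      by rw [Set.ncard_univ, Nat.card_zmod]⟩
  · rintro k ⟨D, hdom, hcard⟩
    by_contra hk
    push_neg at hk
    have hsub : D.toFinset.card = k := by
      rw [← Set.ncard_eq_toFinset_card']; exact hcard
    obtain ⟨t, hsubt, htcard⟩ := Finset.exists_superset_card_eq
      (show D.toFinset.card ≤ V - 1 by omega)
      (by rw [ZMod.card]; exact hVn)
    apply hcore ↑t ?_ (by rw [Set.ncard_coe_finset]; exact htcard)
    intro v
    rcases hdom v with h | ⟨d, hd, hadj⟩
    · exact Or.inl (hsubt (Set.mem_toFinset.mpr h))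
    · exact Or.inr ⟨d, hsubt (Set.mem_toFinset.mpr hd), hadj⟩

end UCG

theorem stmt9 (n : ℕ) (hn : 0 < n) (hω : n.primeFactors.card ≤ 3)
    (hsq : ¬ Squarefree n) :
    domNum (unitaryCayley n) = jacobsthal n := by
  have hn1 : 1 < n := by
    have h1 : n ≠ 1 := fun h => hsq (h ▸ squarefree_one)
    omega
  have hf2 := UCG.f_two_le hn hsq
  have hub := UCG.domNum_le_jac hn1
  have hpos : 0 < n.primeFactors.card :=
    Finset.card_pos.mpr (Nat.nonempty_primeFactors.mpr hn1)
  have hradle : (∏ p ∈ n.primeFactors, p) ≤ n :=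
    Nat.le_of_dvd hn (Nat.prod_primeFactors_dvd n)
  have hcases : n.primeFactors.card = 1 ∨ n.primeFactors.card = 2 ∨
      n.primeFactors.card = 3 := by omega
  rcases hcases with hc | hc | hc
  · -- one prime
    obtain ⟨p, hP⟩ := Finset.card_eq_one.mp hc
    have hp : p.Prime := Nat.prime_of_mem_primeFactors (by rw [hP]; simp)
    have hjac : jacobsthal n ≤ 2 := Nat.sInf_le ⟨by norm_num, UCG.window1 hn hP hp⟩
    have hdom : 2 ≤ domNum (unitaryCayley n) :=
      UCG.lower_bound hn1 (by norm_num) (by omega)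
        (fun D hD hcd => UCG.core1 hn1 hP hf2 hD (by omega))
    omega
  · -- two primes
    obtain ⟨p, q, hpq, hP⟩ := Finset.card_eq_two.mp hc
    have hp : p.Prime := Nat.prime_of_mem_primeFactors (by rw [hP]; simp)
    have hq : q.Prime := Nat.prime_of_mem_primeFactors (by rw [hP]; simp)
    by_cases hp2 : p = 2
    · subst hp2
      have hq2 : q ≠ 2 := Ne.symm hpq
      have hq3 : 3 ≤ q := by have := hq.two_le; omega
      have hprodeq : (∏ p ∈ n.primeFactors, p) = 2 * q := by
        rw [hP]; exact Finset.prod_pair hpq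
      have hjac : jacobsthal n ≤ 4 :=
        Nat.sInf_le ⟨by norm_num, UCG.window2even hn hP hq hq2⟩
      have hdom : 4 ≤ domNum (unitaryCayley n) :=
        UCG.lower_bound hn1 (by norm_num) (by omega)
          (fun D hD hcd => UCG.core2even hn1 hP hq hq2 hf2 hD (by omega))
      omega
    · by_cases hq2 : q = 2
      · subst hq2
        have hP2 : n.primeFactors = {2, p} := by rw [hP]; exact Finset.pair_comm p 2
        have hp3 : 3 ≤ p := by have := hp.two_le; omega
        have hprodeq : (∏ p ∈ n.primeFactors, p) = 2 * p := by
          rw [hP2]; exact Finset.prod_pair (Ne.symm hp2)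
        have hjac : jacobsthal n ≤ 4 :=
          Nat.sInf_le ⟨by norm_num, UCG.window2even hn hP2 hp hp2⟩
        have hdom : 4 ≤ domNum (unitaryCayley n) :=
          UCG.lower_bound hn1 (by norm_num) (by omega)
            (fun D hD hcd => UCG.core2even hn1 hP2 hp hp2 hf2 hD (by omega))
        omega
      · have hp3 : 3 ≤ p := by have := hp.two_le; omega
        have hq3 : 3 ≤ q := by have := hq.two_le; omega
        have hjac : jacobsthal n ≤ 3 :=
          Nat.sInf_le ⟨by norm_num, UCG.window2odd hn hP hp hq hp3 hq3⟩
        have hdom : 3 ≤ domNum (unitaryCayley n) :=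
          UCG.lower_bound hn1 (by norm_num) (by omega)
            (fun D hD hcd => UCG.core2odd hn1 hP hp hq hpq hp3 hq3 hf2 hD (by omega))
        omega
  · -- three primes
    obtain ⟨p, q, r, hpq, hpr, hqr, hP⟩ := Finset.card_eq_three.mp hc
    have hp : p.Prime := Nat.prime_of_mem_primeFactors (by rw [hP]; simp)
    have hq : q.Prime := Nat.prime_of_mem_primeFactors (by rw [hP]; simp)
    have hr : r.Prime := Nat.prime_of_mem_primeFactors (by rw [hP]; simp)
    -- generic inner finisher for the "2 ∈ PF" situation
    have finE : ∀ q' r' : ℕ, q'.Prime → r'.Prime → q' ≠ 2 → r' ≠ 2 → q' ≠ r' →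
        n.primeFactors = {2, q', r'} → domNum (unitaryCayley n) = jacobsthal n := by
      intro q' r' hq' hr' hq'2 hr'2 hq'r' hP2
      have hq'3 : 3 ≤ q' := by have := hq'.two_le; omega
      have hr'3 : 3 ≤ r' := by have := hr'.two_le; omega
      have hprodeq : (∏ p ∈ n.primeFactors, p) = 2 * (q' * r') := by
        rw [hP2, Finset.prod_insert (by simp; omega)]
        rw [Finset.prod_pair hq'r']
      have hqr9 : 9 ≤ q' * r' := Nat.mul_le_mul hq'3 hr'3
      have hjac : jacobsthal n ≤ 6 :=
        Nat.sInf_le ⟨by norm_num, UCG.window3even hn hP2 hq' hr' hq'2 hr'2⟩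
      have hdom : 6 ≤ domNum (unitaryCayley n) :=
        UCG.lower_bound hn1 (by norm_num) (by omega)
          (fun D hD hcd => UCG.core3even hn1 hP2 hq' hr' hq'2 hr'2 hq'r' hf2 hD (by omega))
      omega
    have fin3 : ∀ q' r' : ℕ, q'.Prime → r'.Prime → 5 ≤ q' → 5 ≤ r' → q' ≠ r' →
        n.primeFactors = {3, q', r'} → domNum (unitaryCayley n) = jacobsthal n := by
      intro q' r' hq' hr' hq'5 hr'5 hq'r' hP2
      have hprodeq : (∏ p ∈ n.primeFactors, p) = 3 * (q' * r') := by
        rw [hP2, Finset.prod_insert (by simp; omega)]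
        rw [Finset.prod_pair hq'r']
      have hqr25 : 25 ≤ q' * r' := Nat.mul_le_mul hq'5 hr'5
      have hjac : jacobsthal n ≤ 5 :=
        Nat.sInf_le ⟨by norm_num, UCG.window3mid hn hP2 hq'5 hr'5⟩
      have hdom : 5 ≤ domNum (unitaryCayley n) :=
        UCG.lower_bound hn1 (by norm_num) (by omega)
          (fun D hD hcd => UCG.core3odd3 hn1 hP2 hq' hr' hq'5 hr'5 hq'r' hf2 hD (by omega))
      omega
    by_cases hp2 : p = 2
    · subst hp2
      exact finE q r hq hr (Ne.symm hpq) (Ne.symm hpr) hqr hP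
    · by_cases hq2 : q = 2
      · subst hq2
        have hP2 : n.primeFactors = {2, p, r} := by rw [hP]; exact Finset.insert_comm p 2 {r}
        exact finE p r hp hr hp2 (Ne.symm hqr) hpr hP2
      · by_cases hr2 : r = 2
        · subst hr2
          have hP2 : n.primeFactors = {2, p, q} := by
            rw [hP, Finset.pair_comm q 2]
            exact Finset.insert_comm p 2 {q}
          exact finE p q hp hq hp2 hq2 hpq hP2
        · by_cases hp3 : p = 3
          · subst hp3
            exact fin3 q r hq hr (UCG.prime_ge_five hq hq2 (Ne.symm hpq))
              (UCG.prime_ge_five hr hr2 (Ne.symm hpr)) hqr hP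
          · by_cases hq3 : q = 3
            · subst hq3
              have hP2 : n.primeFactors = {3, p, r} := by
                rw [hP]; exact Finset.insert_comm p 3 {r}
              exact fin3 p r hp hr (UCG.prime_ge_five hp hp2 hpq)
                (UCG.prime_ge_five hr hr2 (Ne.symm hqr)) hpr hP2
            · by_cases hr3 : r = 3
              · subst hr3
                have hP2 : n.primeFactors = {3, p, q} := by
                  rw [hP, Finset.pair_comm q 3]
                  exact Finset.insert_comm p 3 {q}
                exact fin3 p q hp hq (UCG.prime_ge_five hp hp2 hp3)
                  (UCG.prime_ge_five hq hq2 hq3) hpq hP2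
              · have hp5 := UCG.prime_ge_five hp hp2 hp3
                have hq5 := UCG.prime_ge_five hq hq2 hq3
                have hr5 := UCG.prime_ge_five hr hr2 hr3
                have hpn : p ≤ n := Nat.le_of_dvd hn
                  (Nat.dvd_of_mem_primeFactors (by rw [hP]; simp))
                have hjac : jacobsthal n ≤ 4 :=
                  Nat.sInf_le ⟨by norm_num, UCG.window3big hn hP hp5 hq5 hr5⟩
                have hdom : 4 ≤ domNum (unitaryCayley n) :=
                  UCG.lower_bound hn1 (by norm_num) (by omega)
                    (fun D hD hcd => UCG.core3big hn1 hP hp hq hr hpq hpr hqr hp5 hq5 hr5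
                      hf2 hD (by omega))
                omega
end

section
/- For every integer n = 2·p₁·p₂ where p₁ < p₂ are odd primes with 3 ≤ p₁, the domination number of the unitary Cayley graph X_n is strictly less than g(n), where g is Jacobsthal's function. -/
lemma aux_prod_isUnit {M N : Type*} [Monoid M] [Monoid N] (p : M × N) :
    IsUnit p ↔ IsUnit p.1 ∧ IsUnit p.2 := by
  constructor
  · intro h
    exact ⟨h.map (MonoidHom.fst M N), h.map (MonoidHom.snd M N)⟩
  · rintro ⟨⟨u, hu⟩, ⟨v, hv⟩⟩
    refine isUnit_iff_exists.2 ⟨(↑u⁻¹, ↑v⁻¹), ?_, ?_⟩ <;>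
      simp [Prod.ext_iff, ← hu, ← hv, ← Units.val_mul]

lemma aux_equiv_isUnit {R S : Type*} [Ring R] [Ring S] (e : R ≃+* S) (x : R) :
    IsUnit x ↔ IsUnit (e x) := by
  constructor
  · exact fun h => h.map e.toRingHom
  · intro h; simpa using h.map e.symm.toRingHom

theorem stmt10 (p₁ p₂ n : ℕ) (hp₁ : p₁.Prime) (hp₂ : p₂.Prime)
    (h1 : 3 ≤ p₁) (h12 : p₁ < p₂) (hn : n = 2 * p₁ * p₂) :
    domNum (unitaryCayley n) < jacobsthal n := by
  subst hn
  haveI f1 : Fact p₁.Prime := ⟨hp₁⟩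
  haveI f2 : Fact p₂.Prime := ⟨hp₂⟩
  have hn0 : 0 < 2 * p₁ * p₂ := Nat.mul_pos (Nat.mul_pos two_pos hp₁.pos) hp₂.pos
  haveI : NeZero (2 * p₁ * p₂) := ⟨hn0.ne'⟩
  have cop1 : Nat.Coprime 2 p₁ := (Nat.coprime_primes Nat.prime_two hp₁).2 (by omega)
  have cop2 : Nat.Coprime (2 * p₁) p₂ :=
    Nat.Coprime.mul ((Nat.coprime_primes Nat.prime_two hp₂).2 (by omega))
      ((Nat.coprime_primes hp₁ hp₂).2 (by omega))
  set e : ZMod (2 * p₁ * p₂) ≃+* (ZMod 2 × ZMod p₁) × ZMod p₂ :=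
    (ZMod.chineseRemainder cop2).trans
      (RingEquiv.prodCongr (ZMod.chineseRemainder cop1) (RingEquiv.refl (ZMod p₂))) with he
  -- unit criterion
  have hU : ∀ u : ZMod (2 * p₁ * p₂),
      IsUnit u ↔ (e u).1.1 ≠ 0 ∧ (e u).1.2 ≠ 0 ∧ (e u).2 ≠ 0 := by
    intro u
    rw [aux_equiv_isUnit e, aux_prod_isUnit, aux_prod_isUnit]
    simp only [isUnit_iff_ne_zero, and_assoc]
  -- adjacency criterion
  have hAdj : ∀ x y : ZMod (2 * p₁ * p₂), (unitaryCayley (2 * p₁ * p₂)).Adj x y ↔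
      (e x).1.1 ≠ (e y).1.1 ∧ (e x).1.2 ≠ (e y).1.2 ∧ (e x).2 ≠ (e y).2 := by
    intro x y
    have : (unitaryCayley (2 * p₁ * p₂)).Adj x y ↔ x ≠ y ∧ IsUnit (x - y) := Iff.rfl
    rw [this, hU]
    simp only [map_sub, Prod.fst_sub, Prod.snd_sub, sub_ne_zero]
    constructor
    · rintro ⟨-, h⟩; exact h
    · rintro ⟨h1, h2, h3⟩
      refine ⟨fun hxy => h1 (by rw [hxy]), h1, h2, h3⟩

  -- distinctness facts
  have z01 : (0 : ZMod 2) ≠ 1 := by decide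
  have z10 : (1 : ZMod 2) ≠ 0 := by decide
  have b01 : (0 : ZMod p₁) ≠ 1 := zero_ne_one
  have b10 : (1 : ZMod p₁) ≠ 0 := one_ne_zero
  have c01 : (0 : ZMod p₂) ≠ 1 := zero_ne_one
  have c10 : (1 : ZMod p₂) ≠ 0 := one_ne_zero
  -- the dominating set
  set S : Set ((ZMod 2 × ZMod p₁) × ZMod p₂) :=
    {((0,0),0), ((0,1),1), ((1,0),1), ((1,1),0)} with hS
  set D : Set (ZMod (2 * p₁ * p₂)) := ⇑e ⁻¹' S with hD
  have hmemD : ∀ P ∈ S, e.symm P ∈ D := by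
    intro P hP
    simp only [hD, Set.mem_preimage, RingEquiv.apply_symm_apply]
    exact hP
  have hadj' : ∀ v : ZMod (2 * p₁ * p₂), ∀ P : (ZMod 2 × ZMod p₁) × ZMod p₂,
      (e v).1.1 ≠ P.1.1 → (e v).1.2 ≠ P.1.2 → (e v).2 ≠ P.2 →
      (unitaryCayley (2 * p₁ * p₂)).Adj v (e.symm P) := by
    intro v P h1 h2 h3
    rw [hAdj, RingEquiv.apply_symm_apply]
    exact ⟨h1, h2, h3⟩
  have hdom : IsDomSet (unitaryCayley (2 * p₁ * p₂)) D := by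
    intro v
    have hevd : e v = (((e v).1.1, (e v).1.2), (e v).2) := rfl
    have hinD : ∀ P ∈ S, e v = P → v ∈ D := by
      intro P hP hvP
      simp only [hD, Set.mem_preimage, hvP]
      exact hP
    rcases (by decide : ∀ t : ZMod 2, t = 0 ∨ t = 1) (e v).1.1 with ha | ha
    · by_cases hb : (e v).1.2 = 0
      · by_cases hc : (e v).2 = 0
        · exact Or.inl (hinD ((0,0),0) (by simp [hS]) (by rw [hevd, ha, hb, hc]))
        · exact Or.inr ⟨_, hmemD ((1,1),0) (by simp [hS]),
            hadj' v ((1,1),0) (by rw [ha]; exact z01) (by rw [hb]; exact b01) hc⟩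
      · by_cases hc : (e v).2 = 1
        · by_cases hb1 : (e v).1.2 = 1
          · exact Or.inl (hinD ((0,1),1) (by simp [hS]) (by rw [hevd, ha, hb1, hc]))
          · exact Or.inr ⟨_, hmemD ((1,1),0) (by simp [hS]),
              hadj' v ((1,1),0) (by rw [ha]; exact z01) hb1 (by rw [hc]; exact c10)⟩
        · exact Or.inr ⟨_, hmemD ((1,0),1) (by simp [hS]),
            hadj' v ((1,0),1) (by rw [ha]; exact z01) hb hc⟩
    · by_cases hb : (e v).1.2 = 0
      · by_cases hc : (e v).2 = 1
        · exact Or.inl (hinD ((1,0),1) (by simp [hS]) (by rw [hevd, ha, hb, hc]))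
        · exact Or.inr ⟨_, hmemD ((0,1),1) (by simp [hS]),
            hadj' v ((0,1),1) (by rw [ha]; exact z10) (by rw [hb]; exact b01) hc⟩
      · by_cases hc : (e v).2 = 0
        · by_cases hb1 : (e v).1.2 = 1
          · exact Or.inl (hinD ((1,1),0) (by simp [hS]) (by rw [hevd, ha, hb1, hc]))
          · exact Or.inr ⟨_, hmemD ((0,1),1) (by simp [hS]),
              hadj' v ((0,1),1) (by rw [ha]; exact z10) hb1 (by rw [hc]; exact c01)⟩
        · exact Or.inr ⟨_, hmemD ((0,0),0) (by simp [hS]),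
            hadj' v ((0,0),0) (by rw [ha]; exact z10) hb hc⟩
  -- cardinality of D
  have hScard : S.ncard = 4 := by
    rw [hS]
    rw [Set.ncard_insert_of_notMem (by simp [Prod.ext_iff, z01, b01, c01]),
        Set.ncard_insert_of_notMem (by simp [Prod.ext_iff, z01, b01, c01, b10, c10]),
        Set.ncard_insert_of_notMem (by simp [Prod.ext_iff, z01, b01, c01, b10, c10]),
        Set.ncard_singleton]
  have hDcard : D.ncard = 4 := by
    have hDS : D = ⇑e.symm '' S := by
      ext t
      constructor
      · intro ht
        exact ⟨e t, ht, by simp⟩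
      · rintro ⟨P, hP, rfl⟩
        simpa [hD] using hP
    rw [hDS, Set.ncard_image_of_injective _ e.symm.injective, hScard]
  have hle : domNum (unitaryCayley (2 * p₁ * p₂)) ≤ 4 :=
    Nat.sInf_le ⟨D, hdom, hDcard⟩
  -- jacobsthal side
  set z : ZMod (2 * p₁ * p₂) := e.symm ((0, -1), -3) with hz
  set x : ℤ := (z.val : ℤ) with hx
  have hbad : ∀ i : ℕ, i < 4 → Int.gcd (x + i) ((2 * p₁ * p₂ : ℕ) : ℤ) ≠ 1 := by
    intro i hi hg
    have h1 : x + (i : ℤ) = ((z.val + i : ℕ) : ℤ) := by push_cast; ring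
    rw [h1, Int.gcd_natCast_natCast] at hg
    have hu : IsUnit ((z.val + i : ℕ) : ZMod (2 * p₁ * p₂)) :=
      (ZMod.isUnit_iff_coprime _ _).mpr hg
    have h2 : ((z.val + i : ℕ) : ZMod (2 * p₁ * p₂)) = z + (i : ℕ) := by
      push_cast
      rw [ZMod.natCast_val, ZMod.cast_id]
    rw [h2, hU] at hu
    rw [map_add, hz, RingEquiv.apply_symm_apply, map_natCast] at hu
    obtain ⟨hu1, hu2, hu3⟩ := hu
    interval_cases i
    · exact hu1 (by norm_num)
    · exact hu2 (by norm_num)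
    · exact hu1 (by norm_num; decide)
    · exact hu3 (by norm_num)
  have hN : (0 : ℤ) < ((2 * p₁ * p₂ : ℕ) : ℤ) := by exact_mod_cast hn0
  have hSne : {m | 0 < m ∧ ∀ x : ℤ, ∃ i : ℕ, i < m ∧
      Int.gcd (x + i) ((2 * p₁ * p₂ : ℕ) : ℤ) = 1}.Nonempty := by
    refine ⟨2 * p₁ * p₂, hn0, fun y => ?_⟩
    have hr0 : 0 ≤ (1 - y) % ((2 * p₁ * p₂ : ℕ) : ℤ) := Int.emod_nonneg _ hN.ne'
    have hrlt : (1 - y) % ((2 * p₁ * p₂ : ℕ) : ℤ) < ((2 * p₁ * p₂ : ℕ) : ℤ) :=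
      Int.emod_lt_of_pos _ hN
    refine ⟨((1 - y) % ((2 * p₁ * p₂ : ℕ) : ℤ)).toNat, ?_, ?_⟩
    · have h2 : ((((1 - y) % ((2 * p₁ * p₂ : ℕ) : ℤ)).toNat : ℤ)) < ((2 * p₁ * p₂ : ℕ) : ℤ) := by
        rwa [Int.toNat_of_nonneg hr0]
      exact_mod_cast h2
    · rw [Int.toNat_of_nonneg hr0]
      obtain ⟨q, hq⟩ : ∃ q : ℤ, 1 - y =
          ((2 * p₁ * p₂ : ℕ) : ℤ) * q + (1 - y) % ((2 * p₁ * p₂ : ℕ) : ℤ) :=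
        ⟨_, (Int.mul_ediv_add_emod _ _).symm⟩
      refine Int.isCoprime_iff_gcd_eq_one.mp ⟨1, q, ?_⟩
      linear_combination -hq
  have hj : 4 < jacobsthal (2 * p₁ * p₂) := by
    have hmem := Nat.sInf_mem hSne
    obtain ⟨hpos, hall⟩ := hmem
    obtain ⟨i, hi, hg⟩ := hall x
    by_contra h
    push_neg at h
    exact hbad i (lt_of_lt_of_le hi h) hg
  exact lt_of_le_of_lt hle hj
end

section
/- Let q be a prime with q ≡ 1 (mod 3), let k = 2(q-1)/3, and let p₁, ..., p_k be distinct primes each at least q + 3 (and distinct from 3 and q). Let n = 3·q·p₁⋯p_k. Then g(n) ≥ q + 4, where g is Jacobsthal's function. -/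
lemma crt2 (a b u v : ℤ) (h : IsCoprime a b) :
    ∃ x : ℤ, a ∣ x - u ∧ b ∣ x - v := by
  obtain ⟨c, d, hcd⟩ := h
  refine ⟨u * (d * b) + v * (c * a), ⟨c * (v - u), by linear_combination u * hcd⟩,
    ⟨d * (u - v), by linear_combination v * hcd⟩⟩

lemma crtF (s : Finset ℕ) (r : ℕ → ℤ)
    (h : ∀ a ∈ s, ∀ b ∈ s, a ≠ b → Nat.Coprime a b) :
    ∃ x : ℤ, ∀ m ∈ s, (m : ℤ) ∣ x - r m := by
  classical
  induction s using Finset.induction with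
  | empty => exact ⟨0, by simp⟩
  | @insert a s ha ih =>
    obtain ⟨x₀, hx₀⟩ := ih (fun a ha' b hb' =>
      h a (Finset.mem_insert_of_mem ha') b (Finset.mem_insert_of_mem hb'))
    have hcop : Nat.Coprime a (∏ m ∈ s, m) :=
      Nat.Coprime.prod_right fun m hm =>
        h a (Finset.mem_insert_self a s) m (Finset.mem_insert_of_mem hm)
          (by rintro rfl; exact ha hm)
    have hic : IsCoprime (a : ℤ) ((∏ m ∈ s, m : ℕ) : ℤ) :=
      Nat.isCoprime_iff_coprime.mpr hcop
    obtain ⟨x, hxa, hxs⟩ := crt2 _ _ (r a) x₀ hic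
    refine ⟨x, fun m hm => ?_⟩
    rcases Finset.mem_insert.mp hm with rfl | hm
    · exact hxa
    · have h1 : (m : ℤ) ∣ x - x₀ := by
        refine dvd_trans ?_ hxs
        exact_mod_cast Int.natCast_dvd_natCast.mpr (Finset.dvd_prod_of_mem id hm)
      have h2 := hx₀ m hm
      have : x - r m = (x - x₀) + (x₀ - r m) := by ring
      rw [this]; exact dvd_add h1 h2

theorem stmt12 (q k : ℕ) (hq : q.Prime) (hq3 : q % 3 = 1) (hk : k = 2 * (q - 1) / 3)
    (p : Fin k → ℕ) (hp : ∀ i, (p i).Prime) (hinj : Function.Injective p)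
    (hge : ∀ i, q + 3 ≤ p i) (hne3 : ∀ i, p i ≠ 3) (hneq : ∀ i, p i ≠ q)
    (n : ℕ) (hn : n = 3 * q * ∏ i, p i) :
    q + 4 ≤ jacobsthal n := by
  classical
  have hq2 : 2 ≤ q := hq.two_le
  have hqne3 : q ≠ 3 := by omega
  set t : ℕ := q / 3 with ht
  have hqt : q = 3 * t + 1 := by omega
  have hkt : k = 2 * t := by omega
  have hn0 : 0 < n := by
    rw [hn]
    have : 0 < ∏ i, p i := Finset.prod_pos fun i _ => (hp i).pos
    positivity
  -- the residues needing the primes p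
  set R : Finset ℕ :=
    (Finset.range (q + 3)).filter (fun i => ¬ (3 ∣ i) ∧ i ≠ 1 ∧ i ≠ q + 1) with hR
  have hcard : R.card ≤ k := by
    have hsub : {((0 : ℕ), (1 : ℕ)), (t, 2)} ⊆
        Finset.range (t + 1) ×ˢ ({1, 2} : Finset ℕ) := by
      intro z hz
      simp only [Finset.mem_insert, Finset.mem_singleton] at hz
      rcases hz with rfl | rfl <;> simp [Finset.mem_product]
    have hinjOn : Set.InjOn (fun i : ℕ => (i / 3, i % 3)) R := by
      intro i hi j hj hij
      simp only [Prod.mk.injEq] at hij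
      omega
    have hmaps : ∀ i ∈ R, (i / 3, i % 3) ∈
        (Finset.range (t + 1) ×ˢ ({1, 2} : Finset ℕ)) \ {((0:ℕ), (1:ℕ)), (t, 2)} := by
      intro i hi
      simp only [hR, Finset.mem_filter, Finset.mem_range] at hi
      simp only [Finset.mem_sdiff, Finset.mem_product, Finset.mem_range,
        Finset.mem_insert, Finset.mem_singleton, Prod.mk.injEq]
      refine ⟨⟨by omega, by omega⟩, by omega⟩
    have hle := Finset.card_le_card_of_injOn _ hmaps hinjOn
    have hc2 : ({((0 : ℕ), (1 : ℕ)), (t, 2)} : Finset (ℕ × ℕ)).card = 2 := by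
      rw [Finset.card_insert_of_notMem (by simp), Finset.card_singleton]
    have h12 : ({1, 2} : Finset ℕ).card = 2 := by
      rw [Finset.card_insert_of_notMem (by simp), Finset.card_singleton]
    rw [Finset.card_sdiff_of_subset hsub, Finset.card_product, Finset.card_range, h12, hc2] at hle
    omega
  -- the assignment of residues to indices
  set g : Fin k → ℕ := fun j => R.toList.getD j 0 with hg
  have hsurj : ∀ i ∈ R, ∃ j : Fin k, g j = i := by
    intro i hi
    have : i ∈ R.toList := Finset.mem_toList.mpr hi
    obtain ⟨m, hm, hmeq⟩ := List.mem_iff_getElem.mp this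
    have hlen : R.toList.length = R.card := Finset.length_toList R
    have hmk : m < k := by omega
    refine ⟨⟨m, hmk⟩, ?_⟩
    show R.toList.getD m 0 = i
    rw [List.getD_eq_getElem R.toList 0 hm]
    exact hmeq
  -- the residue function
  set r : ℕ → ℤ := fun m =>
    if m = 3 then 0 else if m = q then -1 else
      if h : ∃ j, p j = m then -(g h.choose : ℤ) else 0 with hr
  set s : Finset ℕ := insert 3 (insert q (Finset.image p Finset.univ)) with hs
  have hmem_prime : ∀ a ∈ s, a.Prime := by
    intro a ha
    simp only [hs, Finset.mem_insert, Finset.mem_image, Finset.mem_univ, true_and] at ha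
    rcases ha with rfl | rfl | ⟨j, rfl⟩
    · exact Nat.prime_three
    · exact hq
    · exact hp j
  obtain ⟨x, hx⟩ := crtF s r (fun a ha b hb hab =>
    (Nat.coprime_primes (hmem_prime a ha) (hmem_prime b hb)).mpr hab)
  have hx3 : (3 : ℤ) ∣ x := by
    have := hx 3 (Finset.mem_insert_self _ _)
    simpa [hr] using this
  have hxq : (q : ℤ) ∣ x + 1 := by
    have := hx q (by simp [hs])
    simpa [hr, hqne3] using this
  have hxp : ∀ j : Fin k, (p j : ℤ) ∣ x + (g j : ℤ) := by
    intro j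
    have hmem : p j ∈ s := by simp [hs]
    have := hx (p j) hmem
    have hex : ∃ j', p j' = p j := ⟨j, rfl⟩
    have hch : hex.choose = j := hinj hex.choose_spec
    rw [hr] at this
    simp only [hne3 j, hneq j, if_false, dif_pos hex, hch] at this
    simpa [sub_neg_eq_add] using this
  -- divisibility of n
  have h3n : 3 ∣ n := by rw [hn]; exact Dvd.dvd.mul_right (dvd_mul_right 3 q) _
  have hqn : q ∣ n := by rw [hn]; exact Dvd.dvd.mul_right (dvd_mul_left q 3) _
  have hpn : ∀ j : Fin k, p j ∣ n := fun j => by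
    rw [hn]; exact Dvd.dvd.mul_left (Finset.dvd_prod_of_mem p (Finset.mem_univ j)) _
  -- the key: q+3 consecutive non-coprime integers
  have hbad : ∀ i : ℕ, i < q + 3 → Int.gcd (x + i) n ≠ 1 := by
    intro i hi hgcd
    have contra : ∀ m : ℕ, m.Prime → (m : ℤ) ∣ x + i → m ∣ n → False := by
      intro m hm hd1 hd2
      have : (m : ℤ) ∣ (Int.gcd (x + i) n : ℤ) :=
        Int.dvd_coe_gcd hd1 (Int.natCast_dvd_natCast.mpr hd2)
      rw [hgcd] at this
      have : m ∣ 1 := by exact_mod_cast this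
      have h1 := Nat.le_of_dvd one_pos this
      have h2 := hm.two_le
      omega
    by_cases h3 : 3 ∣ i
    · exact contra 3 Nat.prime_three
        (dvd_add hx3 (Int.natCast_dvd_natCast.mpr h3)) h3n
    by_cases hq1 : i = 1 ∨ i = q + 1
    · refine contra q hq ?_ hqn
      rcases hq1 with rfl | rfl
      · exact_mod_cast hxq
      · have : (x + ((q : ℕ) + 1 : ℕ) : ℤ) = (x + 1) + q := by push_cast; ring
        rw [this]
        exact dvd_add hxq (dvd_refl _)
    · have hiR : i ∈ R := by
        simp only [hR, Finset.mem_filter, Finset.mem_range]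
        exact ⟨hi, h3, fun h => hq1 (Or.inl h), fun h => hq1 (Or.inr h)⟩
      obtain ⟨j, hj⟩ := hsurj i hiR
      refine contra (p j) (hp j) ?_ (hpn j)
      have := hxp j
      rwa [hj] at this
  -- nonemptiness of the defining set
  have hne : {m | 0 < m ∧ ∀ x : ℤ, ∃ i : ℕ, i < m ∧ Int.gcd (x + i) n = 1}.Nonempty := by
    refine ⟨n, hn0, fun y => ?_⟩
    have hn0' : (0 : ℤ) < n := by exact_mod_cast hn0
    have h0 : 0 ≤ (1 - y) % n := Int.emod_nonneg _ (by omega)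
    have h1 : (1 - y) % n < n := Int.emod_lt_of_pos _ hn0'
    refine ⟨((1 - y) % n).toNat, by omega, ?_⟩
    have hcast : (((1 - y) % n).toNat : ℤ) = (1 - y) % n := Int.toNat_of_nonneg h0
    have hdef : (1 - y) % n = 1 - y - n * ((1 - y) / n) := by
      rw [Int.emod_def]
    have hyi : y + (((1 - y) % n).toNat : ℤ) = 1 - n * ((1 - y) / n) := by
      rw [hcast, hdef]; ring
    rw [hyi]
    refine Int.isCoprime_iff_gcd_eq_one.mp ⟨1, (1 - y) / n, by ring⟩
  -- conclude
  rw [jacobsthal]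
  refine le_csInf hne fun m hm => ?_
  by_contra hlt
  push_neg at hlt
  obtain ⟨i, hi, hgcd⟩ := hm.2 x
  exact hbad i (by omega) hgcd
end

section
/- Let G = K[a₁,b₁] × ⋯ × K[a_t,b_t] with 2 ≤ b₁ ≤ ⋯ ≤ b_t. The vertex set of G can be partitioned into (1/b₁)·∏_{i=1}^t a_i b_i cliques each of size b₁. -/
section Stmt17Aux

variable {t : ℕ} (a b : Fin t → ℕ) (i0 : Fin t)

def shiftv (j : ℕ) : ∀ i, ZMod (a i * b i) := fun i => (j : ZMod (a i * b i))

def kv (x : ∀ i, ZMod (a i * b i)) : ℕ := (x i0).val % b i0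

def basev (x : ∀ i, ZMod (a i * b i)) : ∀ i, ZMod (a i * b i) :=
  fun i => x i - ((kv a b i0 x : ℕ) : ZMod (a i * b i))

lemma val_add_mod (i : Fin t) (hpos : 0 < a i * b i) (z : ZMod (a i * b i)) (j : ℕ) :
    (z + (j : ZMod (a i * b i))).val % b i = (z.val + j) % b i := by
  haveI : NeZero (a i * b i) := ⟨hpos.ne'⟩
  have hd : b i ∣ a i * b i := dvd_mul_left _ _
  rw [ZMod.val_add, ZMod.val_natCast, Nat.mod_mod_of_dvd _ hd, Nat.add_mod,
    Nat.mod_mod_of_dvd j hd, ← Nat.add_mod]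

lemma basev_add_kv (x : ∀ i, ZMod (a i * b i)) :
    basev a b i0 x + shiftv a b (kv a b i0 x) = x := by
  funext i
  simp [basev, shiftv]

lemma kv_basev (hpos : 0 < a i0 * b i0) (x : ∀ i, ZMod (a i * b i)) :
    kv a b i0 (basev a b i0 x) = 0 := by
  haveI : NeZero (a i0 * b i0) := ⟨hpos.ne'⟩
  have hd : b i0 ∣ a i0 * b i0 := dvd_mul_left _ _
  have hle : (x i0).val % b i0 ≤ (x i0).val := Nat.mod_le _ _
  have h1 : basev a b i0 x i0
      = (((x i0).val - (x i0).val % b i0 : ℕ) : ZMod (a i0 * b i0)) := by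
    rw [Nat.cast_sub hle]
    show x i0 - _ = _ - _
    rw [ZMod.natCast_val, ZMod.cast_id]
    rfl
  show (basev a b i0 x i0).val % b i0 = 0
  rw [h1, ZMod.val_natCast, Nat.mod_mod_of_dvd _ hd]
  have := Nat.div_add_mod (x i0).val (b i0)
  have h2 : (x i0).val - (x i0).val % b i0 = b i0 * ((x i0).val / b i0) := by omega
  rw [h2, Nat.mul_mod_right]

lemma basev_of_kv0 (c : ∀ i, ZMod (a i * b i)) (hc : kv a b i0 c = 0) :
    basev a b i0 c = c := by
  funext i
  unfold basev
  rw [hc]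
  simp

lemma kv_add (hpos : 0 < a i0 * b i0) (c : ∀ i, ZMod (a i * b i)) (hc : kv a b i0 c = 0)
    {j : ℕ} (hj : j < b i0) : kv a b i0 (c + shiftv a b j) = j := by
  show (c i0 + (j : ZMod (a i0 * b i0))).val % b i0 = j
  rw [val_add_mod a b i0 hpos, Nat.add_mod]
  have hc' : (c i0).val % b i0 = 0 := hc
  rw [hc', Nat.zero_add, Nat.mod_mod_of_dvd j dvd_rfl, Nat.mod_eq_of_lt hj]

lemma basev_add (hpos : 0 < a i0 * b i0) (c : ∀ i, ZMod (a i * b i)) (hc : kv a b i0 c = 0)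
    {j : ℕ} (hj : j < b i0) : basev a b i0 (c + shiftv a b j) = c := by
  funext i
  unfold basev
  rw [kv_add a b i0 hpos c hc hj]
  show c i + (j : ZMod (a i * b i)) - (j : ZMod (a i * b i)) = c i
  exact add_sub_cancel_right _ _

lemma adj_shift (hpos : ∀ i, 0 < a i * b i) (hble : ∀ i, b i0 ≤ b i)
    (c : ∀ i, ZMod (a i * b i)) {j j' : ℕ} (hj : j < b i0) (hj' : j' < b i0) (hne : j ≠ j') :
    (multipartiteProd t a b).Adj (c + shiftv a b j) (c + shiftv a b j') := by
  have key : ∀ i, ((c + shiftv a b j) i).val % b i ≠ ((c + shiftv a b j') i).val % b i := by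
    intro i
    show (c i + (j : ZMod (a i * b i))).val % b i ≠ (c i + (j' : ZMod (a i * b i))).val % b i
    rw [val_add_mod a b i (hpos i), val_add_mod a b i (hpos i)]
    intro h
    have h2 : j ≡ j' [MOD b i] :=
      Nat.ModEq.add_left_cancel' (c i).val (h : (c i).val + j ≡ (c i).val + j' [MOD b i])
    rw [Nat.ModEq, Nat.mod_eq_of_lt (lt_of_lt_of_le hj (hble i)),
      Nat.mod_eq_of_lt (lt_of_lt_of_le hj' (hble i))] at h2
    exact hne h2
  exact ⟨fun heq => key i0 (by rw [heq]), key⟩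

end Stmt17Aux

theorem stmt17 (t : ℕ) (ht : 0 < t) (a b : Fin t → ℕ) (ha : ∀ i, 0 < a i)
    (hb : 2 ≤ b ⟨0, ht⟩) (hmono : Monotone b) :
    ∃ 𝒞 : Set (Set (∀ i, ZMod (a i * b i))),
      Setoid.IsPartition 𝒞 ∧ 𝒞.ncard = (∏ i, a i * b i) / b ⟨0, ht⟩ ∧
      ∀ C ∈ 𝒞, (multipartiteProd t a b).IsClique C ∧ C.ncard = b ⟨0, ht⟩ := by
  classical
  set i0 : Fin t := ⟨0, ht⟩ with hi0
  have hb0 : 0 < b i0 := lt_of_lt_of_le (by norm_num) hb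
  have hble : ∀ i, b i0 ≤ b i := fun i => hmono (by simp [hi0, Fin.le_def])
  have hpos : ∀ i, 0 < a i * b i := fun i => Nat.mul_pos (ha i) (lt_of_lt_of_le hb0 (hble i))
  have hkv_lt : ∀ x, kv a b i0 x < b i0 := fun x => Nat.mod_lt _ hb0
  have hrange0 : ∀ c ∈ Set.range (basev a b i0), kv a b i0 c = 0 := by
    rintro c ⟨y, rfl⟩
    exact kv_basev a b i0 (hpos i0) y
  have hfix : ∀ c ∈ Set.range (basev a b i0), basev a b i0 c = c := fun c hc =>
    basev_of_kv0 a b i0 c (hrange0 c hc)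
  refine ⟨(fun c => {x | basev a b i0 x = c}) '' Set.range (basev a b i0), ⟨?_, ?_⟩, ?_, ?_⟩
  · rintro ⟨c, hc, heq⟩
    have hmem : c ∈ {x | basev a b i0 x = c} := hfix c hc
    exact Set.eq_empty_iff_forall_notMem.mp heq c hmem
  · intro x
    refine ⟨{y | basev a b i0 y = basev a b i0 x},
      ⟨⟨basev a b i0 x, ⟨x, rfl⟩, rfl⟩, rfl⟩, ?_⟩
    rintro C ⟨⟨c, hc, rfl⟩, hxC⟩
    have : basev a b i0 x = c := hxC
    rw [← this]
  · have hinj : Set.InjOn (fun c => {x | basev a b i0 x = c})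
        (Set.range (basev a b i0)) := by
      intro c hc c' hc' h
      have h' : {x | basev a b i0 x = c} = {x | basev a b i0 x = c'} := h
      have h1 : c ∈ {x | basev a b i0 x = c} := hfix c hc
      rw [h'] at h1
      have h2 : basev a b i0 c = c' := h1
      rw [hfix c hc] at h2
      exact h2
    rw [Set.ncard_image_of_injOn hinj]
    have hbij : Function.Bijective
        (fun p : (Set.range (basev a b i0)) × Fin (b i0) =>
          (p.1 : ∀ i, ZMod (a i * b i)) + shiftv a b p.2) := by
      constructor
      · rintro ⟨⟨c, hc⟩, j⟩ ⟨⟨c', hc'⟩, j'⟩ h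
        simp only at h
        have hc0 := hrange0 c hc
        have hc0' := hrange0 c' hc'
        have hcc : c = c' := by
          have h3 := congrArg (basev a b i0) h
          rwa [basev_add a b i0 (hpos i0) c hc0 j.isLt,
            basev_add a b i0 (hpos i0) c' hc0' j'.isLt] at h3
        have hjj : (j : ℕ) = (j' : ℕ) := by
          have h3 := congrArg (kv a b i0) h
          rwa [kv_add a b i0 (hpos i0) c hc0 j.isLt,
            kv_add a b i0 (hpos i0) c' hc0' j'.isLt] at h3
        exact Prod.ext (Subtype.ext hcc) (Fin.ext hjj)
      · intro x
        exact ⟨⟨⟨basev a b i0 x, ⟨x, rfl⟩⟩, ⟨kv a b i0 x, hkv_lt x⟩⟩, basev_add_kv a b i0 x⟩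
    have hcard := Nat.card_eq_of_bijective _ hbij
    have hV : Nat.card (∀ i, ZMod (a i * b i)) = ∏ i, (a i * b i) := by
      rw [Nat.card_pi]
      exact Finset.prod_congr rfl fun i _ => Nat.card_zmod _
    have hFin : Nat.card (Fin (b i0)) = b i0 :=
      Nat.card_eq_fintype_card.trans (Fintype.card_fin _)
    rw [Nat.card_prod, hFin, Nat.card_coe_set_eq, hV] at hcard
    rw [← hcard, Nat.mul_div_cancel _ hb0]
  · rintro C ⟨c, hc, rfl⟩
    have hc0 := hrange0 c hc
    have hCeq : {x | basev a b i0 x = c}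
        = (fun j => c + shiftv a b j) '' ↑(Finset.range (b i0)) := by
      ext x
      constructor
      · intro hx
        refine ⟨kv a b i0 x, by simpa using hkv_lt x, ?_⟩
        show c + shiftv a b (kv a b i0 x) = x
        rw [← hx]
        exact basev_add_kv a b i0 x
      · rintro ⟨j, hj, rfl⟩
        have hj' : j < b i0 := by simpa using hj
        exact basev_add a b i0 (hpos i0) c hc0 hj'
    constructor
    · show (multipartiteProd t a b).IsClique {x | basev a b i0 x = c}
      rw [hCeq]
      rintro x ⟨j, hj, rfl⟩ y ⟨j', hj', rfl⟩ hne
      have hjj : j ≠ j' := fun h => hne (by rw [h])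
      exact adj_shift a b i0 hpos hble c (by simpa using hj) (by simpa using hj') hjj
    · have hinj2 : Set.InjOn (fun j => c + shiftv a b j) ↑(Finset.range (b i0)) := by
        intro j hj j' hj' h
        have h3 := congrArg (kv a b i0) h
        rwa [kv_add a b i0 (hpos i0) c hc0 (by simpa using hj),
          kv_add a b i0 (hpos i0) c hc0 (by simpa using hj')] at h3
      show ({x | basev a b i0 x = c}).ncard = b i0
      rw [hCeq, Set.ncard_image_of_injOn hinj2, Set.ncard_coe_finset, Finset.card_range]
end

section
/- Let G = K[a₁,b₁] × ⋯ × K[a_t,b_t] with 2 ≤ b₁ ≤ ⋯ ≤ b_t, and let n = ∏_{i=1}^t a_i b_i. If D is a minimal dominating set of G with ℓ lonely vertices (vertices of D not adjacent to any vertex of D) and s social vertices (vertices of D adjacent to some vertex of D), then b₁·ℓ + 2·s ≤ n. In particular, if b₁ = 2, then Γ(G) = n/2. -/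
namespace Stmt18Aux


open Finset

variable {t : ℕ} (a b : Fin t → ℕ)

abbrev Vtx := ∀ i, ZMod (a i * b i)

def sh (x : Vtx a b) (j : ℕ) : Vtx a b := fun i => x i + (j : ZMod (a i * b i))

def shn (x : Vtx a b) (j : ℕ) : Vtx a b := fun i => x i - (j : ZMod (a i * b i))

lemma sh_shn (x : Vtx a b) (j : ℕ) : sh a b (shn a b x j) j = x := by
  funext i; simp [sh, shn]

lemma shn_sh (x : Vtx a b) (j : ℕ) : shn a b (sh a b x j) j = x := by
  funext i; simp [sh, shn]

lemma val_sh [∀ i, NeZero (a i * b i)] (x : Vtx a b) (j : ℕ) (i : Fin t) :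
    ((sh a b x j) i).val % b i = ((x i).val + j) % b i := by
  have hdvd : b i ∣ a i * b i := dvd_mul_left _ _
  show ((x i + (j : ZMod (a i * b i)))).val % b i = _
  rw [ZMod.val_add, Nat.mod_mod_of_dvd _ hdvd, ZMod.val_natCast,
    Nat.add_mod, Nat.mod_mod_of_dvd j hdvd, ← Nat.add_mod]

lemma val_shn [∀ i, NeZero (a i * b i)] (x : Vtx a b) (j : ℕ) (i : Fin t) :
    (((shn a b x j) i).val + j) % b i = (x i).val % b i := by
  have := val_sh a b (shn a b x j) j i
  rw [sh_shn] at this; exact this.symm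

lemma shn_inj [∀ i, NeZero (a i * b i)] (ha : ∀ i, 0 < a i) (i₀ : Fin t) (x : Vtx a b)
    {j j' : ℕ} (hj : j < b i₀) (hj' : j' < b i₀) (h : shn a b x j = shn a b x j') : j = j' := by
  have hb : b i₀ ≤ a i₀ * b i₀ := Nat.le_mul_of_pos_left _ (ha i₀)
  have h0 : x i₀ - (j : ZMod (a i₀ * b i₀)) = x i₀ - (j' : ZMod (a i₀ * b i₀)) := congrFun h i₀
  have h1 : (j : ZMod (a i₀ * b i₀)) = (j' : ZMod (a i₀ * b i₀)) := by
    have := sub_right_injective h0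
    exact this
  have h2 := congrArg ZMod.val h1
  rw [ZMod.val_natCast, ZMod.val_natCast] at h2
  rwa [Nat.mod_eq_of_lt (lt_of_lt_of_le hj hb), Nat.mod_eq_of_lt (lt_of_lt_of_le hj' hb)] at h2


lemma fiber_sum [∀ i, NeZero (a i * b i)] (i₀ : Fin t)
    (hb : 0 < b i₀) (F : Finset (Vtx a b)) :
    ∑ c ∈ range (b i₀), (F.filter (fun x : Vtx a b => (x i₀).val % b i₀ = c)).card = F.card := by
  classical
  exact (Finset.card_eq_sum_card_fiberwise
    (f := fun x : Vtx a b => (x i₀).val % b i₀) (t := range (b i₀))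
    (fun x _ => mem_range.2 (Nat.mod_lt _ hb))).symm

lemma cardAc [∀ i, NeZero (a i * b i)] (ha : ∀ i, 0 < a i) (i₀ : Fin t)
    (hb : 2 ≤ b i₀) (c : ℕ) (hc : c < b i₀) :
    b i₀ * (Finset.univ.filter (fun x : Vtx a b => (x i₀).val % b i₀ = c)).card
      = Fintype.card (Vtx a b) := by
  classical
  have hbpos : 0 < b i₀ := by omega
  -- each class has the same size as class 0
  have hbij : ∀ c' < b i₀,
      (Finset.univ.filter (fun x : Vtx a b => (x i₀).val % b i₀ = c')).card
        = (Finset.univ.filter (fun x : Vtx a b => (x i₀).val % b i₀ = 0)).card := by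
    intro c' hc'
    apply Finset.card_bij' (fun x _ => shn a b x c') (fun x _ => sh a b x c')
    · intro x hx
      simp only [mem_filter, mem_univ, true_and] at hx ⊢
      -- residue of shn x c' is 0
      have h1 := val_shn a b x c' i₀
      rw [hx] at h1
      -- ((shn x c') i₀).val + c' ≡ c'  [MOD b i₀]
      have h2 : ((shn a b x c' i₀).val + c') % b i₀ = (0 + c') % b i₀ := by
        rw [h1, Nat.zero_add, Nat.mod_eq_of_lt hc']
      have h3 : (shn a b x c' i₀).val % b i₀ = 0 % b i₀ :=
        Nat.ModEq.add_right_cancel' c' h2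
      simpa using h3
    · intro x hx
      simp only [mem_filter, mem_univ, true_and] at hx ⊢
      rw [val_sh, Nat.add_mod, hx, Nat.zero_add, Nat.mod_mod_of_dvd _ dvd_rfl, Nat.mod_eq_of_lt hc']
    · intro x hx; exact sh_shn a b x c'
    · intro x hx; exact shn_sh a b x c'
  have hsum := fiber_sum a b i₀ hbpos (Finset.univ : Finset (Vtx a b))
  rw [Finset.sum_congr rfl (fun c' hc' => (hbij c' (mem_range.1 hc')).trans
    ((hbij c hc).symm))] at hsum
  rw [Finset.sum_const, Finset.card_range, smul_eq_mul] at hsum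
  rw [hsum, Finset.card_univ]


lemma adj_iff (x y : Vtx a b) :
    (multipartiteProd t a b).Adj x y ↔
      x ≠ y ∧ ∀ i, (x i).val % b i ≠ (y i).val % b i := Iff.rfl

lemma key (ht : 0 < t) [∀ i, NeZero (a i * b i)] (ha : ∀ i, 0 < a i)
    (hb : 2 ≤ b ⟨0, ht⟩) (hble : ∀ i, b ⟨0, ht⟩ ≤ b i)
    (D : Set (Vtx a b)) (hD : IsMinimalDomSet (multipartiteProd t a b) D) :
    b ⟨0, ht⟩ * {d ∈ D | ∀ d' ∈ D, ¬ (multipartiteProd t a b).Adj d d'}.ncard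
      + 2 * {d ∈ D | ∃ d' ∈ D, (multipartiteProd t a b).Adj d d'}.ncard
      ≤ Fintype.card (Vtx a b) := by
  classical
  obtain ⟨hdom, hmin⟩ := hD
  set G := multipartiteProd t a b with hGdef
  set i₀ : Fin t := ⟨0, ht⟩ with hi₀
  set B1 := b i₀ with hB1
  have hB1pos : 0 < B1 := by omega
  -- lonely / social predicates and finsets
  set Lon : Vtx a b → Prop := fun d => d ∈ D ∧ ∀ d' ∈ D, ¬ G.Adj d d' with hLon
  set Soc : Vtx a b → Prop := fun d => d ∈ D ∧ ∃ d' ∈ D, G.Adj d d' with hSoc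
  set W : Vtx a b → Prop := fun x => Lon x ∨ ∃ d, Lon d ∧ G.Adj x d with hW
  set LoF : Finset (Vtx a b) := Finset.univ.filter Lon with hLoF
  set SoF : Finset (Vtx a b) := Finset.univ.filter Soc with hSoF
  set WF : Finset (Vtx a b) := Finset.univ.filter W with hWF
  set Ac : ℕ → Finset (Vtx a b) :=
    fun c => Finset.univ.filter (fun x : Vtx a b => (x i₀).val % b i₀ = c) with hAc
  -- translate ncards
  have hLset : {d ∈ D | ∀ d' ∈ D, ¬ G.Adj d d'}.ncard = LoF.card := by
    rw [show {d ∈ D | ∀ d' ∈ D, ¬ G.Adj d d'} = ↑LoF by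
      ext x; simp [hLoF, hLon]]
    exact Set.ncard_coe_finset _
  have hSset : {d ∈ D | ∃ d' ∈ D, G.Adj d d'}.ncard = SoF.card := by
    rw [show {d ∈ D | ∃ d' ∈ D, G.Adj d d'} = ↑SoF by
      ext x; simp [hSoF, hSoc]]
    exact Set.ncard_coe_finset _
  rw [hLset, hSset]
  -- cliques
  set Cv : Vtx a b → Finset (Vtx a b) := fun v => (range B1).image (sh a b v) with hCv
  have hclique : ∀ v, ∀ x ∈ Cv v, ∀ y ∈ Cv v, x ≠ y → G.Adj x y := by
    intro v x hx y hy hne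
    obtain ⟨j, hj, rfl⟩ := mem_image.1 hx
    obtain ⟨j', hj', rfl⟩ := mem_image.1 hy
    rw [mem_range] at hj hj'
    refine ⟨hne, fun i => ?_⟩
    rw [val_sh, val_sh]
    intro h
    have hmod : j % b i = j' % b i := Nat.ModEq.add_left_cancel' ((v i).val) h
    rw [Nat.mod_eq_of_lt (lt_of_lt_of_le hj (hble i)),
      Nat.mod_eq_of_lt (lt_of_lt_of_le hj' (hble i))] at hmod
    exact hne (by rw [hmod])
  have hm : ∀ u : Vtx a b, (Finset.univ.filter (fun v => u ∈ Cv v)).card = B1 := by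
    intro u
    have himg : Finset.univ.filter (fun v => u ∈ Cv v) = (range B1).image (shn a b u) := by
      ext v
      simp only [mem_filter, mem_univ, true_and, hCv, mem_image, mem_range]
      constructor
      · rintro ⟨j, hj, hvj⟩
        exact ⟨j, hj, by rw [← hvj, shn_sh]⟩
      · rintro ⟨j, hj, rfl⟩
        exact ⟨j, hj, sh_shn a b u j⟩
    rw [himg, Finset.card_image_of_injOn, Finset.card_range]
    intro j hj j' hj' h
    exact shn_inj a b ha i₀ u (mem_range.1 (mem_coe.1 hj)) (mem_range.1 (mem_coe.1 hj')) h
  -- independence bound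
  have hindep : ∀ U : Finset (Vtx a b),
      (∀ x ∈ U, ∀ y ∈ U, x ≠ y → ¬ G.Adj x y) →
      B1 * U.card ≤ Fintype.card (Vtx a b) := by
    intro U hU
    have h1 : ∀ v, (U.filter (· ∈ Cv v)).card ≤ 1 := by
      intro v
      refine Finset.card_le_one.2 fun x hx y hy => ?_
      by_contra hne
      exact hU x (mem_filter.1 hx).1 y (mem_filter.1 hy).1 hne
        (hclique v x (mem_filter.1 hx).2 y (mem_filter.1 hy).2 hne)
    calc B1 * U.card = ∑ _u ∈ U, B1 := by rw [sum_const, smul_eq_mul, mul_comm]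
      _ = ∑ u ∈ U, (Finset.univ.filter (fun v => u ∈ Cv v)).card :=
          sum_congr rfl fun u _ => (hm u).symm
      _ = ∑ u ∈ U, ∑ v ∈ Finset.univ, if u ∈ Cv v then 1 else 0 :=
          sum_congr rfl fun u _ => Finset.card_filter _ _
      _ = ∑ v ∈ Finset.univ, ∑ u ∈ U, if u ∈ Cv v then 1 else 0 := Finset.sum_comm
      _ = ∑ v ∈ Finset.univ, (U.filter (fun u => u ∈ Cv v)).card :=
          sum_congr rfl fun v _ => (Finset.card_filter _ _).symm
      _ ≤ ∑ _v ∈ (Finset.univ : Finset (Vtx a b)), 1 := sum_le_sum fun v _ => h1 v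
      _ = Fintype.card (Vtx a b) := by rw [sum_const, smul_eq_mul, mul_one, Finset.card_univ]
  -- private neighbors for social vertices
  have hpriv : ∀ d, Soc d →
      ∃ p, p ∉ D ∧ G.Adj p d ∧ ∀ d' ∈ D, G.Adj p d' → d' = d := by
    rintro d ⟨hdD, d', hd'D, hadj'⟩
    have hss : D \ {d} ⊂ D := Set.sdiff_singleton_ssubset.2 hdD
    have hnd := hmin _ hss
    rw [IsDomSet] at hnd; push_neg at hnd
    obtain ⟨p, hp1, hp2⟩ := hnd
    have hpd : p ≠ d := by
      rintro rfl
      exact hp2 d' ⟨hd'D, hadj'.ne'⟩ hadj'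
    have hpD : p ∉ D := fun hpD => hp1 ⟨hpD, hpd⟩
    rcases hdom p with hpD' | ⟨e, heD, headj⟩
    · exact absurd hpD' hpD
    · have hed : e = d := by
        by_contra hne
        exact hp2 e ⟨heD, hne⟩ headj
      subst hed
      refine ⟨p, hpD, headj, fun d'' hd'' hadj'' => ?_⟩
      by_contra hne
      exact hp2 d'' ⟨hd'', hne⟩ hadj''
  set pfun : Vtx a b → Vtx a b := fun d =>
    if h : Soc d then Classical.choose (hpriv d h) else d with hpfun
  have hpspec : ∀ d, Soc d → (pfun d ∉ D ∧ G.Adj (pfun d) d ∧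
      ∀ d' ∈ D, G.Adj (pfun d) d' → d' = d) := by
    intro d h
    simp only [hpfun]; rw [dif_pos h]
    exact Classical.choose_spec (hpriv d h)
  set PF : Finset (Vtx a b) := SoF.image pfun with hPF
  have hSocF : ∀ d, d ∈ SoF ↔ Soc d := by intro d; simp [hSoF]
  have hLonF : ∀ d, d ∈ LoF ↔ Lon d := by intro d; simp [hLoF]
  have hWFm : ∀ x, x ∈ WF ↔ W x := by intro x; simp [hWF]
  have hPFcard : PF.card = SoF.card := by
    rw [hPF]
    apply Finset.card_image_of_injOn
    intro d₁ hd₁ d₂ hd₂ heq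
    have h1 := hpspec d₁ ((hSocF d₁).1 hd₁)
    have h2 := hpspec d₂ ((hSocF d₂).1 hd₂)
    have hd₁D : d₁ ∈ D := ((hSocF d₁).1 hd₁).1
    exact h2.2.2 d₁ hd₁D (heq ▸ h1.2.1)
  -- W facts
  have hSo_not_W : ∀ d, Soc d → ¬ W d := by
    rintro d ⟨hdD, d', hd'D, hadj'⟩ hWd
    rcases hWd with hLond | ⟨d₀, hLond₀, hadj₀⟩
    · exact hLond.2 d' hd'D hadj'
    · exact hLond₀.2 d hdD hadj₀.symm
  have hP_not_W : ∀ d, Soc d → ¬ W (pfun d) := by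
    intro d hSocd hWp
    obtain ⟨hpD, hpadj, huniq⟩ := hpspec d hSocd
    rcases hWp with hLonp | ⟨d₀, hLond₀, hadj₀⟩
    · exact hpD hLonp.1
    · have := huniq d₀ hLond₀.1 hadj₀
      subst this
      obtain ⟨_, d', hd'D, hadj'⟩ := hSocd
      exact hLond₀.2 d' hd'D hadj'
  -- independent sets LoF ∪ (Ac c \ WF)
  have hUc : ∀ c, ∀ x ∈ LoF ∪ (Ac c \ WF), ∀ y ∈ LoF ∪ (Ac c \ WF),
      x ≠ y → ¬ G.Adj x y := by
    intro c x hx y hy hne hadjxy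
    rw [mem_union] at hx hy
    rcases hx with hx | hx <;> rcases hy with hy | hy
    · exact ((hLonF x).1 hx).2 y ((hLonF y).1 hy).1 hadjxy
    · rw [mem_sdiff] at hy
      exact hy.2 ((hWFm y).2 (Or.inr ⟨x, (hLonF x).1 hx, hadjxy.symm⟩))
    · rw [mem_sdiff] at hx
      exact hx.2 ((hWFm x).2 (Or.inr ⟨y, (hLonF y).1 hy, hadjxy⟩))
    · rw [mem_sdiff] at hx hy
      have hx1 : (x i₀).val % b i₀ = c := by
        have := hx.1; simp only [hAc, mem_filter, mem_univ, true_and] at this; exact this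
      have hy1 : (y i₀).val % b i₀ = c := by
        have := hy.1; simp only [hAc, mem_filter, mem_univ, true_and] at this; exact this
      exact hadjxy.2 i₀ (hx1.trans hy1.symm)
  have hLo_sub_W : LoF ⊆ WF := by
    intro d hd; exact (hWFm d).2 (Or.inl ((hLonF d).1 hd))
  -- per-class bound
  have hstep : ∀ c, c < B1 →
      LoF.card ≤ (WF.filter (fun x : Vtx a b => (x i₀).val % b i₀ = c)).card := by
    intro c hc
    have h1 := hindep (LoF ∪ (Ac c \ WF)) (hUc c)
    have hdisj : Disjoint LoF (Ac c \ WF) :=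
      Finset.disjoint_left.2 fun x hx hx' => (mem_sdiff.1 hx').2 (hLo_sub_W hx)
    rw [Finset.card_union_of_disjoint hdisj] at h1
    have hAcB : B1 * (Ac c).card = Fintype.card (Vtx a b) := cardAc a b ha i₀ hb c hc
    rw [← hAcB] at h1
    have h2 : LoF.card + (Ac c \ WF).card ≤ (Ac c).card :=
      Nat.le_of_mul_le_mul_left h1 hB1pos
    have h3 : (Ac c ∩ WF).card + (Ac c \ WF).card = (Ac c).card :=
      Finset.card_inter_add_card_sdiff _ _
    have h4 : Ac c ∩ WF = WF.filter (fun x : Vtx a b => (x i₀).val % b i₀ = c) := by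
      ext x
      simp only [hAc, mem_inter, mem_filter, mem_univ, true_and]
      tauto
    have h5 := congrArg Finset.card h4
    have h6 : LoF.card + (Ac c \ WF).card ≤ (Ac c ∩ WF).card + (Ac c \ WF).card := by
      rw [h3]; exact h2
    have h7 : LoF.card ≤ (Ac c ∩ WF).card := by
      exact le_of_add_le_add_right h6
    exact h5 ▸ h7
  have hWbound : B1 * LoF.card ≤ WF.card := by
    calc B1 * LoF.card = ∑ _c ∈ range B1, LoF.card := by
          rw [sum_const, card_range, smul_eq_mul]
      _ ≤ ∑ c ∈ range B1, (WF.filter (fun x : Vtx a b => (x i₀).val % b i₀ = c)).card :=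
          sum_le_sum fun c hc => hstep c (mem_range.1 hc)
      _ = WF.card := fiber_sum a b i₀ hB1pos WF
  -- social + private vertices avoid WF
  have hSoP : SoF ∪ PF ⊆ Finset.univ \ WF := by
    intro x hx
    rw [mem_union] at hx
    rw [mem_sdiff]
    refine ⟨mem_univ x, ?_⟩
    rcases hx with hx | hx
    · exact fun hW' => hSo_not_W x ((hSocF x).1 hx) ((hWFm x).1 hW')
    · obtain ⟨d, hd, rfl⟩ := mem_image.1 hx
      exact fun hW' => hP_not_W d ((hSocF d).1 hd) ((hWFm _).1 hW')
  have hSoPdisj : Disjoint SoF PF := by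
    rw [Finset.disjoint_left]
    intro x hx hx'
    obtain ⟨d, hd, rfl⟩ := mem_image.1 hx'
    exact (hpspec d ((hSocF d).1 hd)).1 ((hSocF _).1 hx).1
  have h2s : 2 * SoF.card ≤ Fintype.card (Vtx a b) - WF.card := by
    have h5 : (SoF ∪ PF).card = 2 * SoF.card := by
      rw [Finset.card_union_of_disjoint hSoPdisj, hPFcard]; omega
    rw [← h5]
    calc (SoF ∪ PF).card ≤ (Finset.univ \ WF).card := Finset.card_le_card hSoP
      _ = Fintype.card (Vtx a b) - WF.card := by
          rw [Finset.card_sdiff_of_subset (subset_univ _), Finset.card_univ]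
  have hWle : WF.card ≤ Fintype.card (Vtx a b) := by
    rw [← Finset.card_univ]; exact Finset.card_le_card (subset_univ _)
  calc B1 * LoF.card + 2 * SoF.card
      ≤ WF.card + (Fintype.card (Vtx a b) - WF.card) := Nat.add_le_add hWbound h2s
    _ = Fintype.card (Vtx a b) := Nat.add_sub_cancel' hWle
lemma construct (ht : 0 < t) [∀ i, NeZero (a i * b i)] (ha : ∀ i, 0 < a i)
    (hb : 2 ≤ b ⟨0, ht⟩) (hble : ∀ i, b ⟨0, ht⟩ ≤ b i) :
    ∃ D : Set (Vtx a b), IsMinimalDomSet (multipartiteProd t a b) D ∧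
      b ⟨0, ht⟩ * D.ncard = Fintype.card (Vtx a b) := by
  classical
  set i₀ : Fin t := ⟨0, ht⟩ with hi₀
  have hbpos : ∀ i, 0 < b i := fun i => lt_of_lt_of_le (by omega) (hble i)
  refine ⟨{x : Vtx a b | (x i₀).val % b i₀ = 0}, ⟨?_, ?_⟩, ?_⟩
  · -- dominating
    intro v
    by_cases hv : (v i₀).val % b i₀ = 0
    · exact Or.inl hv
    · right
      set d : Vtx a b := fun i =>
        if i = i₀ then (0 : ZMod (a i * b i))
        else ((((v i).val % b i) + 1) % b i : ℕ) with hd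
      have hres : ∀ i, (d i).val % b i =
          if i = i₀ then 0 else (((v i).val % b i) + 1) % b i := by
        intro i
        by_cases h : i = i₀
        · simp only [hd, h, if_true, ZMod.val_zero, Nat.zero_mod]
        · simp only [hd, h, if_false]
          have h1 : ((v i).val % b i + 1) % b i < b i := Nat.mod_lt _ (hbpos i)
          have h2 : ((v i).val % b i + 1) % b i < a i * b i :=
            lt_of_lt_of_le h1 (Nat.le_mul_of_pos_left _ (ha i))
          rw [ZMod.val_natCast, Nat.mod_eq_of_lt h2, Nat.mod_eq_of_lt h1]
      have hresne : ∀ i, (v i).val % b i ≠ (d i).val % b i := by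
        intro i
        rw [hres i]
        by_cases h : i = i₀
        · subst h; simp only [if_true]; exact hv
        · simp only [h, if_false]
          have hr : (v i).val % b i < b i := Nat.mod_lt _ (hbpos i)
          intro hcon
          rcases Nat.lt_or_ge ((v i).val % b i + 1) (b i) with hlt | hge
          · rw [Nat.mod_eq_of_lt hlt] at hcon; omega
          · have hEq : (v i).val % b i + 1 = b i := by omega
            rw [hEq, Nat.mod_self] at hcon
            have : 2 ≤ b i := le_trans hb (hble i)
            omega
      refine ⟨d, ?_, ?_, hresne⟩
      · show (d i₀).val % b i₀ = 0
        rw [hres i₀]; simp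
      · intro hvd
        exact hresne i₀ (by rw [hvd])
  · -- minimal
    intro D' hss hdom'
    obtain ⟨x, hxD, hxD'⟩ := Set.exists_of_ssubset hss
    rcases hdom' x with h | ⟨d', hd', hadj⟩
    · exact hxD' h
    · have h1 : (d' i₀).val % b i₀ = 0 := hss.subset hd'
      exact hadj.2 i₀ (by rw [hxD, h1])
  · -- cardinality
    have hEq : {x : Vtx a b | (x i₀).val % b i₀ = 0}
        = ↑(Finset.univ.filter (fun x : Vtx a b => (x i₀).val % b i₀ = 0)) := by
      ext x; simp
    rw [hEq, Set.ncard_coe_finset]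
    exact cardAc a b ha i₀ hb 0 (by omega)

end Stmt18Aux

theorem stmt18 (t : ℕ) (ht : 0 < t) (a b : Fin t → ℕ) (ha : ∀ i, 0 < a i)
    (hb : 2 ≤ b ⟨0, ht⟩) (hmono : Monotone b)
    (D : Set (∀ i, ZMod (a i * b i)))
    (hD : IsMinimalDomSet (multipartiteProd t a b) D)
    (ℓ s : ℕ)
    (hℓ : ℓ = {d ∈ D | ∀ d' ∈ D, ¬ (multipartiteProd t a b).Adj d d'}.ncard)
    (hs : s = {d ∈ D | ∃ d' ∈ D, (multipartiteProd t a b).Adj d d'}.ncard) :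
    b ⟨0, ht⟩ * ℓ + 2 * s ≤ ∏ i, a i * b i ∧
    (b ⟨0, ht⟩ = 2 →
      upperDomNum (multipartiteProd t a b) = (∏ i, a i * b i) / 2) := by
  classical
  have hble : ∀ i, b ⟨0, ht⟩ ≤ b i := fun i => hmono (by simp [Fin.le_def])
  have hb2 : ∀ i, 2 ≤ b i := fun i => le_trans hb (hble i)
  haveI : ∀ i, NeZero (a i * b i) :=
    fun i => ⟨(Nat.mul_pos (ha i) (by have := hb2 i; omega)).ne'⟩
  have hcard : Fintype.card (Stmt18Aux.Vtx a b) = ∏ i, a i * b i := by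
    rw [Fintype.card_pi]
    exact Finset.prod_congr rfl fun i _ => ZMod.card _
  constructor
  · rw [hℓ, hs]
    exact hcard ▸ Stmt18Aux.key a b ht ha hb hble D hD
  · intro hb2'
    obtain ⟨D₀, hD₀min, hD₀card⟩ := Stmt18Aux.construct a b ht ha hb hble
    rw [hb2', hcard] at hD₀card
    set n := ∏ i, a i * b i with hn
    have hub : ∀ k ∈ {k | ∃ D' : Set (∀ i, ZMod (a i * b i)),
        IsMinimalDomSet (multipartiteProd t a b) D' ∧ D'.ncard = k}, k ≤ n / 2 := by
      rintro k ⟨D', hD'min, hD'card⟩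
      have hk := Stmt18Aux.key a b ht ha hb hble D' hD'min
      rw [hb2', hcard] at hk
      have hDeq : D' = {d ∈ D' | ∀ d' ∈ D', ¬ (multipartiteProd t a b).Adj d d'}
          ∪ {d ∈ D' | ∃ d' ∈ D', (multipartiteProd t a b).Adj d d'} := by
        ext x
        simp only [Set.mem_union, Set.mem_setOf_eq]
        constructor
        · intro hx
          by_cases h : ∃ d' ∈ D', (multipartiteProd t a b).Adj x d'
          · exact Or.inr ⟨hx, h⟩
          · push_neg at h; exact Or.inl ⟨hx, h⟩
        · rintro (h | h) <;> exact h.1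
      have hdisj : Disjoint {d ∈ D' | ∀ d' ∈ D', ¬ (multipartiteProd t a b).Adj d d'}
          {d ∈ D' | ∃ d' ∈ D', (multipartiteProd t a b).Adj d d'} := by
        rw [Set.disjoint_left]
        rintro x ⟨hxD, h1⟩ ⟨_, d', hd', hadj⟩
        exact h1 d' hd' hadj
      have hsplit : D'.ncard
          = {d ∈ D' | ∀ d' ∈ D', ¬ (multipartiteProd t a b).Adj d d'}.ncard
            + {d ∈ D' | ∃ d' ∈ D', (multipartiteProd t a b).Adj d d'}.ncard := by
        conv_lhs => rw [hDeq]
        exact Set.ncard_union_eq hdisj (Set.toFinite _) (Set.toFinite _)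
      have hk' : 2 * {d ∈ D' | ∀ d' ∈ D', ¬ (multipartiteProd t a b).Adj d d'}.ncard
          + 2 * {d ∈ D' | ∃ d' ∈ D', (multipartiteProd t a b).Adj d d'}.ncard ≤ n := hk
      rw [← hD'card]
      omega
    have hmem : n / 2 ∈ {k | ∃ D' : Set (∀ i, ZMod (a i * b i)),
        IsMinimalDomSet (multipartiteProd t a b) D' ∧ D'.ncard = k} :=
      ⟨D₀, hD₀min, by omega⟩
    rw [upperDomNum]
    exact le_antisymm (csSup_le ⟨n / 2, hmem⟩ hub) (le_csSup ⟨n / 2, hub⟩ hmem)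
end
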